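/- arXiv:1205.1595 — 4 statements merged into one kernel-verified Lean document; each statement's English description precedes it below -/
import Mathlib

section
/- Tensorization (thermal subadditivity) of entropy: for every β ∈ ℝ, S_f(β) ≤ E_{βf}[ Σ_{k=1}^n S_{k,f}(β) ], i.e. the total canonical entropy is at most the thermal average of the sum of the conditional entropies. -/
open MeasureTheory Real

section ProductSpace

variable {n : ℕ} {Ω : Fin n → Type*} [∀ k, MeasurableSpace (Ω k)]

/-- Thermal expectation `E_{βf}[g] = E[g e^{βf}] / E[e^{βf}]`. -/
noncomputable def thermalExp {α : Type*} [MeasurableSpace α] (ν : Measure α)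
    (β : ℝ) (f g : α → ℝ) : ℝ :=
  (∫ x, g x * Real.exp (β * f x) ∂ν) / ∫ x, Real.exp (β * f x) ∂ν

/-- Canonical entropy `S_f(β) = β E_{βf}[f] − ln Z_{βf}`. -/
noncomputable def canEntropy {α : Type*} [MeasurableSpace α] (ν : Measure α)
    (f : α → ℝ) (β : ℝ) : ℝ :=
  β * thermalExp ν β f f - Real.log (∫ x, Real.exp (β * f x) ∂ν)

/-- Conditional expectation `E_k[g](x) = ∫ g(x_{y,k}) dμ_k(y)`. -/
noncomputable def condExpK (μ : ∀ k, Measure (Ω k)) (k : Fin n)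
    (g : (∀ i, Ω i) → ℝ) (x : ∀ i, Ω i) : ℝ :=
  ∫ y, g (Function.update x k y) ∂(μ k)

/-- Conditional thermal expectation `E_{k,βf}[g](x) = E_k[g e^{βf}](x) / E_k[e^{βf}](x)`. -/
noncomputable def condThermalExpK (μ : ∀ k, Measure (Ω k)) (k : Fin n) (β : ℝ)
    (f g : (∀ i, Ω i) → ℝ) (x : ∀ i, Ω i) : ℝ :=
  (∫ y, g (Function.update x k y) * Real.exp (β * f (Function.update x k y)) ∂(μ k)) /
    ∫ y, Real.exp (β * f (Function.update x k y)) ∂(μ k)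

/-- Conditional entropy `S_{k,f}(β)(x) = β E_{k,βf}[f](x) − ln Z_{k,βf}(x)`. -/
noncomputable def condEntropyK (μ : ∀ k, Measure (Ω k)) (k : Fin n)
    (f : (∀ i, Ω i) → ℝ) (β : ℝ) (x : ∀ i, Ω i) : ℝ :=
  β * condThermalExpK μ k β f f x -
    Real.log (∫ y, Real.exp (β * f (Function.update x k y)) ∂(μ k))

/-- Conditional variance `σ²_k[g](x) = E_k[(g − E_k[g])²](x)`. -/
noncomputable def condVarK (μ : ∀ k, Measure (Ω k)) (k : Fin n)
    (g : (∀ i, Ω i) → ℝ) (x : ∀ i, Ω i) : ℝ :=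
  ∫ y, (g (Function.update x k y) - condExpK μ k g x) ^ 2 ∂(μ k)

/-- Conditional supremum `(sup_k g)(x) = sup_{y} g(x_{y,k})`. -/
noncomputable def condSupK (k : Fin n) (g : (∀ i, Ω i) → ℝ) (x : ∀ i, Ω i) : ℝ :=
  ⨆ y : Ω k, g (Function.update x k y)

/-- Conditional infimum `(inf_k g)(x) = inf_{y} g(x_{y,k})`. -/
noncomputable def condInfK (k : Fin n) (g : (∀ i, Ω i) → ℝ) (x : ∀ i, Ω i) : ℝ :=
  ⨅ y : Ω k, g (Function.update x k y)

/-- Worst-case variance proxy `Dg = Σ_k (g − inf_k g)²`. -/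
noncomputable def Dproxy (g : (∀ i, Ω i) → ℝ) (x : ∀ i, Ω i) : ℝ :=
  ∑ k, (g x - condInfK k g x) ^ 2

end ProductSpace

open scoped ENNReal

section Aux

variable {n : ℕ} {Ω : Fin n → Type*} [∀ k, MeasurableSpace (Ω k)]

private lemma aux_int_bdd {α : Type*} [MeasurableSpace α] (ν : Measure α) [IsFiniteMeasure ν]
    {h : α → ℝ} (hm : AEStronglyMeasurable h ν) {B : ℝ} (hb : ∀ x, |h x| ≤ B) :
    Integrable h ν :=
  (integrable_const B).mono' hm (ae_of_all _ fun x => by simpa [Real.norm_eq_abs] using hb x)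

private lemma aux_integral_Icc {α : Type*} [MeasurableSpace α] (ν : Measure α)
    [IsProbabilityMeasure ν] {h : α → ℝ} (hm : AEStronglyMeasurable h ν) {a b : ℝ}
    (hl : ∀ x, a ≤ h x) (hu : ∀ x, h x ≤ b) :
    a ≤ ∫ x, h x ∂ν ∧ (∫ x, h x ∂ν) ≤ b := by
  have hb : ∀ x, |h x| ≤ max |a| |b| := by
    intro x
    rw [abs_le]
    constructor
    · have := neg_abs_le a
      have := le_max_left |a| |b|
      linarith [hl x]
    · have := le_abs_self b
      have := le_max_right |a| |b|
      linarith [hu x]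
  have hi : Integrable h ν := aux_int_bdd ν hm hb
  constructor
  · have := integral_mono (integrable_const a) hi hl
    simpa using this
  · have := integral_mono hi (integrable_const b) hu
    simpa using this

private lemma aux_abs_integral_le {α : Type*} [MeasurableSpace α] (ν : Measure α)
    [IsProbabilityMeasure ν] {h : α → ℝ} {B : ℝ} (hb : ∀ x, |h x| ≤ B) :
    |∫ x, h x ∂ν| ≤ B := by
  have := norm_integral_le_of_norm_le_const (μ := ν) (f := h) (C := B)
    (ae_of_all _ fun x => by simpa [Real.norm_eq_abs] using hb x)
  simpa [Real.norm_eq_abs] using this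

private lemma aux_abs_log_le {t a b : ℝ} (ha : 0 < a) (h1 : a ≤ t) (h2 : t ≤ b) :
    |Real.log t| ≤ |Real.log a| + |Real.log b| := by
  have h3 : Real.log a ≤ Real.log t := Real.log_le_log ha h1
  have h4 : Real.log t ≤ Real.log b := Real.log_le_log (lt_of_lt_of_le ha h1) h2
  rw [abs_le]
  constructor
  · linarith [neg_abs_le (Real.log a), abs_nonneg (Real.log b)]
  · linarith [le_abs_self (Real.log b), abs_nonneg (Real.log a)]

private lemma aux_measurePreserving_update (μ : ∀ k, Measure (Ω k))
    [∀ k, IsProbabilityMeasure (μ k)] (k : Fin n) :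
    MeasurePreserving (fun p : (∀ i, Ω i) × Ω k => Function.update p.1 k p.2)
      ((Measure.pi μ).prod (μ k)) (Measure.pi μ) := by
  refine ⟨measurable_update', ?_⟩
  refine (Measure.pi_eq (μ := μ) fun s hs => ?_).symm
  rw [Measure.map_apply measurable_update' (MeasurableSet.univ_pi hs)]
  have : (fun p : (∀ i, Ω i) × Ω k => Function.update p.1 k p.2) ⁻¹' (Set.pi Set.univ s)
      = (Set.pi Set.univ (fun i => if h : i = k then Set.univ else s i)) ×ˢ (s k) := by
    ext ⟨x, y⟩
    simp only [Set.mem_preimage, Set.mem_pi, Set.mem_univ, true_implies, Set.mem_prod]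
    constructor
    · intro h
      refine ⟨fun i => ?_, by simpa using h k⟩
      rcases eq_or_ne i k with rfl | hik
      · simp
      · simpa [hik, Function.update_of_ne hik] using h i
    · rintro ⟨h1, h2⟩ i
      rcases eq_or_ne i k with rfl | hik
      · simpa using h2
      · have := h1 i
        simpa [hik, Function.update_of_ne hik] using this
  rw [this, Measure.prod_prod, Measure.pi_pi]
  have : ∀ i : Fin n, μ i ((fun i => if h : i = k then Set.univ else s i) i)
      = if i = k then 1 else μ i (s i) := by
    intro i; by_cases h : i = k <;> simp [h]
  rw [Finset.prod_congr rfl (fun i _ => this i),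
    Finset.prod_eq_mul_prod_sdiff_singleton_of_mem (Finset.mem_univ k)
      (fun i => if i = k then 1 else μ i (s i)),
    Finset.prod_eq_mul_prod_sdiff_singleton_of_mem (Finset.mem_univ k) (fun i => μ i (s i))]
  have h2 : ∀ i ∈ Finset.univ \ {k}, (if i = k then (1:ℝ≥0∞) else μ i (s i)) = μ i (s i) := by
    intro i hi
    rw [if_neg]
    simpa using (Finset.mem_sdiff.1 hi).2
  rw [Finset.prod_congr rfl h2, if_pos rfl, one_mul, mul_comm]

private lemma aux_measurable_condInt (μ : ∀ k, Measure (Ω k)) [∀ k, IsProbabilityMeasure (μ k)]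
    (k : Fin n) {h : (∀ i, Ω i) → ℝ} (hm : Measurable h) :
    Measurable fun x => ∫ y, h (Function.update x k y) ∂(μ k) := by
  have : StronglyMeasurable (fun p : (∀ i, Ω i) × Ω k => h (Function.update p.1 k p.2)) :=
    (hm.comp measurable_update').stronglyMeasurable
  exact this.integral_prod_right'.measurable

private lemma aux_integral_condInt (μ : ∀ k, Measure (Ω k)) [∀ k, IsProbabilityMeasure (μ k)]
    (k : Fin n) {h : (∀ i, Ω i) → ℝ} (hm : Measurable h) {B : ℝ} (hb : ∀ x, |h x| ≤ B) :
    ∫ x, (∫ y, h (Function.update x k y) ∂(μ k)) ∂(Measure.pi μ)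
      = ∫ x, h x ∂(Measure.pi μ) := by
  have hmp := aux_measurePreserving_update μ k
  have hint : Integrable (fun p : (∀ i, Ω i) × Ω k => h (Function.update p.1 k p.2))
      ((Measure.pi μ).prod (μ k)) :=
    aux_int_bdd _ ((hm.comp measurable_update').aestronglyMeasurable) (fun p => hb _)
  have h1 : ∫ x, h x ∂(Measure.pi μ)
      = ∫ p : (∀ i, Ω i) × Ω k, h (Function.update p.1 k p.2) ∂((Measure.pi μ).prod (μ k)) := by
    conv_lhs => rw [← hmp.map_eq]
    exact integral_map hmp.measurable.aemeasurable hm.aestronglyMeasurable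
  rw [h1]
  exact (integral_prod _ hint).symm

end Aux

section Main

variable {n : ℕ} {Ω : Fin n → Type*} [∀ k, MeasurableSpace (Ω k)]

/-- Iterated conditional averaging. -/
private noncomputable def auxG (μ : ∀ k, Measure (Ω k)) (g : (∀ i, Ω i) → ℝ) :
    ℕ → (∀ i, Ω i) → ℝ
  | 0 => g
  | (k+1) => if h : k < n then condExpK μ ⟨k, h⟩ (auxG μ g k) else auxG μ g k

private lemma auxG_succ (μ : ∀ k, Measure (Ω k)) (g : (∀ i, Ω i) → ℝ) {k : ℕ} (hk : k < n) :
    auxG μ g (k+1) = condExpK μ ⟨k, hk⟩ (auxG μ g k) := by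
  simp [auxG, dif_pos hk]

private lemma auxG_props (μ : ∀ k, Measure (Ω k)) [∀ k, IsProbabilityMeasure (μ k)]
    {g : (∀ i, Ω i) → ℝ} (hg : Measurable g) {a b : ℝ}
    (hl : ∀ x, a ≤ g x) (hu : ∀ x, g x ≤ b) :
    ∀ k, Measurable (auxG μ g k) ∧ (∀ x, a ≤ auxG μ g k x) ∧ (∀ x, auxG μ g k x ≤ b) := by
  intro k
  induction k with
  | zero => exact ⟨hg, hl, hu⟩
  | succ k ih =>
    by_cases hk : k < n
    · rw [auxG_succ μ g hk]
      obtain ⟨hm, hlk, huk⟩ := ih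
      refine ⟨aux_measurable_condInt μ _ hm, fun x => ?_, fun x => ?_⟩
      · exact (aux_integral_Icc (μ ⟨k, hk⟩)
          ((hm.comp (measurable_update x)).aestronglyMeasurable)
          (fun y => hlk _) (fun y => huk _)).1
      · exact (aux_integral_Icc (μ ⟨k, hk⟩)
          ((hm.comp (measurable_update x)).aestronglyMeasurable)
          (fun y => hlk _) (fun y => huk _)).2
    · simpa [auxG, dif_neg hk] using ih

private lemma auxG_inv (μ : ∀ k, Measure (Ω k)) [∀ k, IsProbabilityMeasure (μ k)]
    (g : (∀ i, Ω i) → ℝ) :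
    ∀ k, ∀ j : Fin n, (j : ℕ) < k → ∀ x y, auxG μ g k (Function.update x j y) = auxG μ g k x := by
  intro k
  induction k with
  | zero => intro j hj; omega
  | succ k ih =>
    intro j hj x y
    by_cases hk : k < n
    · rw [auxG_succ μ g hk]
      unfold condExpK
      rcases eq_or_ne ((j : ℕ)) k with hjk | hjk
      · have hj' : j = ⟨k, hk⟩ := Fin.ext hjk
        subst hj'
        simp only [Function.update_idem]
      · have hne : j ≠ ⟨k, hk⟩ := fun h => hjk (by rw [h])
        refine integral_congr_ae (ae_of_all _ fun z => ?_)
        show auxG μ g k (Function.update (Function.update x j y) ⟨k, hk⟩ z)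
          = auxG μ g k (Function.update x ⟨k, hk⟩ z)
        rw [Function.update_comm hne]
        exact ih j (by omega) _ _
    · have hjk : (j : ℕ) < k := by have := j.isLt; omega
      simp only [auxG, dif_neg hk]
      exact ih j hjk x y

private lemma auxG_integral (μ : ∀ k, Measure (Ω k)) [∀ k, IsProbabilityMeasure (μ k)]
    {g : (∀ i, Ω i) → ℝ} (hg : Measurable g) {a b : ℝ}
    (hl : ∀ x, a ≤ g x) (hu : ∀ x, g x ≤ b) :
    ∀ k, ∫ x, auxG μ g k x ∂(Measure.pi μ) = ∫ x, g x ∂(Measure.pi μ) := by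
  intro k
  induction k with
  | zero => rfl
  | succ k ih =>
    by_cases hk : k < n
    · rw [auxG_succ μ g hk]
      obtain ⟨hm, hlk, huk⟩ := auxG_props μ hg hl hu k
      have hb : ∀ x, |auxG μ g k x| ≤ max |a| |b| := by
        intro x
        rw [abs_le]
        constructor
        · linarith [neg_abs_le a, le_max_left |a| |b|, hlk x]
        · linarith [le_abs_self b, le_max_right |a| |b|, huk x]
      unfold condExpK
      rw [aux_integral_condInt μ _ hm hb]
      exact ih
    · simpa [auxG, dif_neg hk] using ih

omit [∀ k, MeasurableSpace (Ω k)] in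
private lemma aux_const_of_inv {F : (∀ i, Ω i) → ℝ}
    (hF : ∀ x (j : Fin n) y, F (Function.update x j y) = F x) (x x' : ∀ i, Ω i) : F x = F x' := by
  have key : ∀ s : Finset (Fin n), F (fun i => if i ∈ s then x' i else x i) = F x := by
    intro s
    induction s using Finset.induction_on with
    | empty => simp
    | @insert j s hj ih =>
      have : (fun i => if i ∈ insert j s then x' i else x i)
          = Function.update (fun i => if i ∈ s then x' i else x i) j (x' j) := by
        funext i
        rcases eq_or_ne i j with rfl | hij
        · simp [hj]
        · simp [Function.update_of_ne hij, Finset.mem_insert, hij]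
      rw [this, hF, ih]
  have := key Finset.univ
  simpa using this.symm

private lemma auxG_top (μ : ∀ k, Measure (Ω k)) [∀ k, IsProbabilityMeasure (μ k)]
    {g : (∀ i, Ω i) → ℝ} (hg : Measurable g) {a b : ℝ}
    (hl : ∀ x, a ≤ g x) (hu : ∀ x, g x ≤ b) (x : ∀ i, Ω i) :
    auxG μ g n x = ∫ y, g y ∂(Measure.pi μ) := by
  have hinv : ∀ z (j : Fin n) y, auxG μ g n (Function.update z j y) = auxG μ g n z :=
    fun z j y => auxG_inv μ g n j j.isLt z y
  have hconst : ∀ z, auxG μ g n z = auxG μ g n x := fun z => aux_const_of_inv hinv z x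
  calc auxG μ g n x = ∫ y, auxG μ g n x ∂(Measure.pi μ) := by simp
    _ = ∫ y, auxG μ g n y ∂(Measure.pi μ) :=
        (integral_congr_ae (ae_of_all _ fun y => hconst y)).symm
    _ = ∫ y, g y ∂(Measure.pi μ) := auxG_integral μ hg hl hu n

end Main

section MainHelp

variable {n : ℕ} {Ω : Fin n → Type*} [∀ k, MeasurableSpace (Ω k)]

/-- One-coordinate entropy functional `Ent_k(g)(x) = E_k[g ln g](x) − Z_k(x) ln Z_k(x)`. -/
private noncomputable def auxEnt (μ : ∀ k, Measure (Ω k)) (g : (∀ i, Ω i) → ℝ) (k : Fin n)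
    (x : ∀ i, Ω i) : ℝ :=
  (∫ y, g (Function.update x k y) * Real.log (g (Function.update x k y)) ∂(μ k))
    - condExpK μ k g x * Real.log (condExpK μ k g x)

private lemma auxEnt_measurable (μ : ∀ k, Measure (Ω k)) [∀ k, IsProbabilityMeasure (μ k)]
    {g : (∀ i, Ω i) → ℝ} (hg : Measurable g) (k : Fin n) :
    Measurable (auxEnt μ g k) := by
  have h1 : Measurable fun x => ∫ y, (fun z => g z * Real.log (g z)) (Function.update x k y) ∂(μ k) :=
    aux_measurable_condInt μ k (hg.mul (Real.measurable_log.comp hg))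
  have h2 : Measurable (condExpK μ k g) := aux_measurable_condInt μ k hg
  exact h1.sub (h2.mul (Real.measurable_log.comp h2))

private lemma auxEnt_abs_le (μ : ∀ k, Measure (Ω k)) [∀ k, IsProbabilityMeasure (μ k)]
    {g : (∀ i, Ω i) → ℝ} (hg : Measurable g) {m0 M0 : ℝ} (hm0 : 0 < m0)
    (hl : ∀ x, m0 ≤ g x) (hu : ∀ x, g x ≤ M0) (k : Fin n) (x : ∀ i, Ω i) :
    |auxEnt μ g k x| ≤ 2 * (M0 * (|Real.log m0| + |Real.log M0|)) := by
  set L := |Real.log m0| + |Real.log M0| with hL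
  have hM0 : 0 < M0 := lt_of_lt_of_le hm0 (le_trans (hl x) (hu x))
  have habs : ∀ z, |g z * Real.log (g z)| ≤ M0 * L := by
    intro z
    rw [abs_mul]
    refine mul_le_mul ?_ (aux_abs_log_le hm0 (hl z) (hu z)) (abs_nonneg _) hM0.le
    rw [abs_of_pos (lt_of_lt_of_le hm0 (hl z))]
    exact hu z
  have h1 : |∫ y, g (Function.update x k y) * Real.log (g (Function.update x k y)) ∂(μ k)| ≤ M0 * L :=
    aux_abs_integral_le (μ k) (fun y => habs _)
  have hZ := aux_integral_Icc (μ k) (h := fun y => g (Function.update x k y))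
    ((hg.comp (measurable_update x)).aestronglyMeasurable) (fun y => hl _) (fun y => hu _)
  have hZc : condExpK μ k g x = ∫ y, g (Function.update x k y) ∂(μ k) := rfl
  have h2 : |condExpK μ k g x * Real.log (condExpK μ k g x)| ≤ M0 * L := by
    rw [hZc]
    rw [abs_mul]
    refine mul_le_mul ?_ (aux_abs_log_le hm0 hZ.1 hZ.2) (abs_nonneg _) hM0.le
    rw [abs_of_pos (lt_of_lt_of_le hm0 hZ.1)]
    exact hZ.2
  calc |auxEnt μ g k x| ≤ |∫ y, g (Function.update x k y) * Real.log (g (Function.update x k y)) ∂(μ k)|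
        + |condExpK μ k g x * Real.log (condExpK μ k g x)| := abs_sub _ _
    _ ≤ 2 * (M0 * L) := by linarith

private lemma aux_nonempty {α : Type*} [MeasurableSpace α] (ν : Measure α)
    [IsProbabilityMeasure ν] : Nonempty α := by
  by_contra hne
  rw [not_nonempty_iff] at hne
  have h1 : ν Set.univ = 1 := measure_univ
  rw [Set.univ_eq_empty_iff.2 hne, measure_empty] at h1
  exact zero_ne_one h1

private lemma aux_step (μ : ∀ k, Measure (Ω k)) [∀ k, IsProbabilityMeasure (μ k)]
    {g : (∀ i, Ω i) → ℝ} (hg : Measurable g) {m0 M0 : ℝ} (hm0 : 0 < m0)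
    (hl : ∀ x, m0 ≤ g x) (hu : ∀ x, g x ≤ M0) {k : ℕ} (hk : k < n) :
    ∫ x, g x * (Real.log (auxG μ g k x) - Real.log (auxG μ g (k+1) x)) ∂(Measure.pi μ)
      ≤ ∫ x, auxEnt μ g ⟨k, hk⟩ x ∂(Measure.pi μ) := by
  set kk : Fin n := ⟨k, hk⟩ with hkk
  obtain ⟨hGm, hGl, hGu⟩ := auxG_props μ hg hl hu k
  obtain ⟨hGm', hGl', hGu'⟩ := auxG_props μ hg hl hu (k+1)
  set L := |Real.log m0| + |Real.log M0| with hL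
  have hM0 : 0 < M0 := by
    have hne : Nonempty (∀ i, Ω i) := aux_nonempty (Measure.pi μ)
    obtain ⟨x0⟩ := hne
    exact lt_of_lt_of_le hm0 (le_trans (hl x0) (hu x0))
  have hhm : Measurable fun x => g x * (Real.log (auxG μ g k x) - Real.log (auxG μ g (k+1) x)) :=
    hg.mul ((Real.measurable_log.comp hGm).sub (Real.measurable_log.comp hGm'))
  have hhb : ∀ x, |g x * (Real.log (auxG μ g k x) - Real.log (auxG μ g (k+1) x))| ≤ M0 * (L + L) := by
    intro x
    have h1 := aux_abs_log_le hm0 (hGl x) (hGu x)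
    have h2 := aux_abs_log_le hm0 (hGl' x) (hGu' x)
    rw [abs_mul]
    refine mul_le_mul ?_ ?_ (abs_nonneg _) hM0.le
    · rw [abs_of_pos (lt_of_lt_of_le hm0 (hl x))]; exact hu x
    · exact le_trans (abs_sub _ _) (by rw [hL]; linarith)
  have key := aux_integral_condInt μ kk
    (h := fun x => g x * (Real.log (auxG μ g k x) - Real.log (auxG μ g (k+1) x))) hhm hhb
  beta_reduce at key
  rw [← key]
  refine integral_mono ?_ ?_ ?_
  · refine aux_int_bdd _ (aux_measurable_condInt μ kk hhm).aestronglyMeasurable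
      (B := M0 * (L + L)) ?_
    intro x
    exact aux_abs_integral_le (μ kk) (fun y => hhb _)
  · exact aux_int_bdd _ (auxEnt_measurable μ hg kk).aestronglyMeasurable
      (fun x => auxEnt_abs_le μ hg hm0 hl hu kk x)
  intro x
  -- pointwise in x
  set W := auxG μ g (k+1) x with hW
  have hWpos : 0 < W := lt_of_lt_of_le hm0 (hGl' x)
  set Zk := condExpK μ kk g x with hZk
  have hZ : m0 ≤ Zk ∧ Zk ≤ M0 := aux_integral_Icc (μ kk) (h := fun y => g (Function.update x kk y))
    ((hg.comp (measurable_update x)).aestronglyMeasurable) (fun y => hl _) (fun y => hu _)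
  have hZpos : 0 < Zk := lt_of_lt_of_le hm0 hZ.1
  have hWint : W = ∫ y, auxG μ g k (Function.update x kk y) ∂(μ kk) := by
    rw [hW, auxG_succ μ g hk]; rfl
  have key2 : ∀ y, g (Function.update x kk y)
        * (Real.log (auxG μ g k (Function.update x kk y))
           - Real.log (auxG μ g (k+1) (Function.update x kk y)))
      ≤ g (Function.update x kk y) * Real.log (g (Function.update x kk y))
        - Real.log Zk * g (Function.update x kk y) - g (Function.update x kk y)
        + (Zk / W) * auxG μ g k (Function.update x kk y) := by
    intro y
    set A := g (Function.update x kk y) with hA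
    set Bv := auxG μ g k (Function.update x kk y) with hB
    have hApos : 0 < A := lt_of_lt_of_le hm0 (hl _)
    have hBpos : 0 < Bv := lt_of_lt_of_le hm0 (hGl _)
    have hinv : auxG μ g (k+1) (Function.update x kk y) = W :=
      auxG_inv μ g (k+1) kk (Nat.lt_succ_self k) x y
    rw [hinv]
    have h1 := Real.add_one_le_exp
      (Real.log Bv - Real.log W - Real.log A + Real.log Zk)
    rw [Real.exp_add, Real.exp_sub, Real.exp_sub, Real.exp_log hBpos, Real.exp_log hWpos,
      Real.exp_log hApos, Real.exp_log hZpos] at h1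
    have h2 := mul_le_mul_of_nonneg_left h1 hApos.le
    have h3 : A * (Bv / W / A * Zk) = Zk / W * Bv := by field_simp
    rw [h3] at h2
    nlinarith [h2]
  have Ia : Integrable (fun y => g (Function.update x kk y)) (μ kk) := by
    refine aux_int_bdd _ ((hg.comp (measurable_update x)).aestronglyMeasurable) (B := M0) ?_
    intro y
    rw [abs_of_pos (lt_of_lt_of_le hm0 (hl _))]; exact hu _
  have Ib : Integrable (fun y => auxG μ g k (Function.update x kk y)) (μ kk) := by
    refine aux_int_bdd _ ((hGm.comp (measurable_update x)).aestronglyMeasurable) (B := M0) ?_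
    intro y
    rw [abs_of_pos (lt_of_lt_of_le hm0 (hGl _))]; exact hGu _
  have Ialog : Integrable (fun y => g (Function.update x kk y)
      * Real.log (g (Function.update x kk y))) (μ kk) := by
    refine aux_int_bdd _ (((hg.mul (Real.measurable_log.comp hg)).comp
      (measurable_update x)).aestronglyMeasurable) (B := M0 * L) ?_
    intro y
    rw [abs_mul]
    refine mul_le_mul ?_ (aux_abs_log_le hm0 (hl _) (hu _)) (abs_nonneg _) hM0.le
    rw [abs_of_pos (lt_of_lt_of_le hm0 (hl _))]; exact hu _
  have I1 : Integrable (fun y => g (Function.update x kk y)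
      * (Real.log (auxG μ g k (Function.update x kk y))
         - Real.log (auxG μ g (k+1) (Function.update x kk y)))) (μ kk) :=
    aux_int_bdd _ ((hhm.comp (measurable_update x)).aestronglyMeasurable) (fun y => hhb _)
  have I2 : Integrable (fun y => g (Function.update x kk y) * Real.log (g (Function.update x kk y))
      - Real.log Zk * g (Function.update x kk y)) (μ kk) := Ialog.sub (Ia.const_mul _)
  have I3 : Integrable (fun y => g (Function.update x kk y) * Real.log (g (Function.update x kk y))
      - Real.log Zk * g (Function.update x kk y) - g (Function.update x kk y)) (μ kk) := I2.sub Ia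
  have Irhs : Integrable (fun y => g (Function.update x kk y) * Real.log (g (Function.update x kk y))
      - Real.log Zk * g (Function.update x kk y) - g (Function.update x kk y)
      + (Zk / W) * auxG μ g k (Function.update x kk y)) (μ kk) := I3.add (Ib.const_mul _)
  calc ∫ y, g (Function.update x kk y)
        * (Real.log (auxG μ g k (Function.update x kk y))
           - Real.log (auxG μ g (k+1) (Function.update x kk y))) ∂(μ kk)
      ≤ ∫ y, (g (Function.update x kk y) * Real.log (g (Function.update x kk y))
          - Real.log Zk * g (Function.update x kk y) - g (Function.update x kk y)
          + (Zk / W) * auxG μ g k (Function.update x kk y)) ∂(μ kk) :=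
        integral_mono I1 Irhs key2
    _ = (∫ y, g (Function.update x kk y) * Real.log (g (Function.update x kk y)) ∂(μ kk))
          - Real.log Zk * Zk - Zk + (Zk / W) * W := by
        rw [integral_add I3 (Ib.const_mul _), integral_sub I2 Ia,
          integral_sub Ialog (Ia.const_mul _),
          integral_const_mul, integral_const_mul, ← hWint]
        have hZint : (∫ y, g (Function.update x kk y) ∂(μ kk)) = Zk := rfl
        rw [hZint]
    _ = auxEnt μ g kk x := by
        rw [div_mul_cancel₀ _ hWpos.ne']
        unfold auxEnt
        rw [← hZk]
        ring


private lemma aux_condEntropyK_int (μ : ∀ k, Measure (Ω k)) [∀ k, IsProbabilityMeasure (μ k)]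
    {f : (∀ i, Ω i) → ℝ} (hf : Measurable f) {C : ℝ} (hC : ∀ x, |f x| ≤ C) (β : ℝ) (k : Fin n) :
    ∫ x, condEntropyK μ k f β x * Real.exp (β * f x) ∂(Measure.pi μ)
      = ∫ x, auxEnt μ (fun z => Real.exp (β * f z)) k x ∂(Measure.pi μ) := by
  have hC0 : 0 ≤ C := by
    obtain ⟨x0⟩ := aux_nonempty (Measure.pi μ)
    exact le_trans (abs_nonneg _) (hC x0)
  set m0 : ℝ := Real.exp (-(|β| * C)) with hm0def
  set M0 : ℝ := Real.exp (|β| * C) with hM0def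
  have hm0 : 0 < m0 := Real.exp_pos _
  have hM0 : 0 < M0 := Real.exp_pos _
  have hgb : ∀ z, m0 ≤ Real.exp (β * f z) ∧ Real.exp (β * f z) ≤ M0 := by
    intro z
    have h1 : |β * f z| ≤ |β| * C := by
      rw [abs_mul]
      exact mul_le_mul_of_nonneg_left (hC z) (abs_nonneg β)
    rw [abs_le] at h1
    exact ⟨Real.exp_le_exp.2 h1.1, Real.exp_le_exp.2 h1.2⟩
  have hgm : Measurable fun z => Real.exp (β * f z) :=
    Real.measurable_exp.comp (hf.const_mul β)
  set L := |Real.log m0| + |Real.log M0| with hL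
  have hLnn : 0 ≤ L := add_nonneg (abs_nonneg _) (abs_nonneg _)
  have hNm : Measurable fun x => ∫ y, f (Function.update x k y)
      * Real.exp (β * f (Function.update x k y)) ∂(μ k) :=
    aux_measurable_condInt μ k (h := fun z => f z * Real.exp (β * f z)) (hf.mul hgm)
  have hZm : Measurable fun x => ∫ y, Real.exp (β * f (Function.update x k y)) ∂(μ k) :=
    aux_measurable_condInt μ k (h := fun z => Real.exp (β * f z)) hgm
  have hNb : ∀ x, |∫ y, f (Function.update x k y)
      * Real.exp (β * f (Function.update x k y)) ∂(μ k)| ≤ C * M0 := by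
    intro x
    refine aux_abs_integral_le (μ k) (fun y => ?_)
    rw [abs_mul]
    refine mul_le_mul (hC _) ?_ (abs_nonneg _) hC0
    rw [abs_of_pos (Real.exp_pos _)]
    exact (hgb _).2
  have hZb : ∀ x, m0 ≤ (∫ y, Real.exp (β * f (Function.update x k y)) ∂(μ k))
      ∧ (∫ y, Real.exp (β * f (Function.update x k y)) ∂(μ k)) ≤ M0 := by
    intro x
    exact aux_integral_Icc (μ k) (h := fun y => Real.exp (β * f (Function.update x k y)))
      ((hgm.comp (measurable_update x)).aestronglyMeasurable)
      (fun y => (hgb _).1) (fun y => (hgb _).2)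
  set Bs := |β| * ((C * M0) / m0) + L with hBs
  have hBsnn : 0 ≤ Bs :=
    add_nonneg (mul_nonneg (abs_nonneg β)
      (div_nonneg (mul_nonneg hC0 hM0.le) hm0.le)) hLnn
  have hSm : Measurable (condEntropyK μ k f β) := by
    unfold condEntropyK condThermalExpK
    exact ((hNm.div hZm).const_mul β).sub (Real.measurable_log.comp hZm)
  have hSb : ∀ x, |condEntropyK μ k f β x| ≤ Bs := by
    intro x
    unfold condEntropyK condThermalExpK
    have hZx := hZb x
    have hZpos : 0 < (∫ y, Real.exp (β * f (Function.update x k y)) ∂(μ k)) :=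
      lt_of_lt_of_le hm0 hZx.1
    refine le_trans (abs_sub _ _) ?_
    rw [hBs]
    gcongr
    · rw [abs_mul, abs_div, abs_of_pos hZpos]
      refine mul_le_mul_of_nonneg_left ?_ (abs_nonneg β)
      exact div_le_div₀ (mul_nonneg hC0 hM0.le) (hNb x) hm0 hZx.1
    · exact aux_abs_log_le hm0 hZx.1 hZx.2
  have hSgm : Measurable fun x => condEntropyK μ k f β x * Real.exp (β * f x) :=
    hSm.mul hgm
  have hSgb : ∀ x, |condEntropyK μ k f β x * Real.exp (β * f x)| ≤ Bs * M0 := by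
    intro x
    rw [abs_mul]
    refine mul_le_mul (hSb x) ?_ (abs_nonneg _) hBsnn
    rw [abs_of_pos (Real.exp_pos _)]
    exact (hgb x).2
  have key := aux_integral_condInt μ k
    (h := fun x => condEntropyK μ k f β x * Real.exp (β * f x)) hSgm hSgb
  beta_reduce at key
  rw [← key]
  refine integral_congr_ae (ae_of_all _ fun x => ?_)
  beta_reduce
  -- pointwise in x
  have hSinv : ∀ y : Ω k, condEntropyK μ k f β (Function.update x k y)
      = condEntropyK μ k f β x := by
    intro y
    unfold condEntropyK condThermalExpK
    simp only [Function.update_idem]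
  have h1 : ∫ y, condEntropyK μ k f β (Function.update x k y)
        * Real.exp (β * f (Function.update x k y)) ∂(μ k)
      = condEntropyK μ k f β x
        * ∫ y, Real.exp (β * f (Function.update x k y)) ∂(μ k) := by
    rw [← integral_const_mul]
    exact integral_congr_ae (ae_of_all _ fun y => by simp only [hSinv y])
  rw [h1]
  -- now algebra
  set N := ∫ y, f (Function.update x k y) * Real.exp (β * f (Function.update x k y)) ∂(μ k) with hN
  set Z := ∫ y, Real.exp (β * f (Function.update x k y)) ∂(μ k) with hZ
  have hZpos : 0 < Z := lt_of_lt_of_le hm0 (hZb x).1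
  have h2 : (∫ y, Real.exp (β * f (Function.update x k y))
        * Real.log (Real.exp (β * f (Function.update x k y))) ∂(μ k)) = β * N := by
    rw [hN, ← integral_const_mul]
    refine integral_congr_ae (ae_of_all _ fun y => ?_)
    beta_reduce
    rw [Real.log_exp]
    ring
  have h3 : auxEnt μ (fun z => Real.exp (β * f z)) k x
      = β * N - Z * Real.log Z := by
    unfold auxEnt condExpK
    rw [← h2]
  have h4 : condEntropyK μ k f β x = β * (N / Z) - Real.log Z := by
    unfold condEntropyK condThermalExpK
    rw [← hN, ← hZ]
  rw [h3, h4]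
  field_simp


private lemma aux_SKg_integrable (μ : ∀ k, Measure (Ω k)) [∀ k, IsProbabilityMeasure (μ k)]
    {f : (∀ i, Ω i) → ℝ} (hf : Measurable f) {C : ℝ} (hC : ∀ x, |f x| ≤ C) (β : ℝ) (k : Fin n) :
    Integrable (fun x => condEntropyK μ k f β x * Real.exp (β * f x)) (Measure.pi μ) := by
  have hC0 : 0 ≤ C := by
    obtain ⟨x0⟩ := aux_nonempty (Measure.pi μ)
    exact le_trans (abs_nonneg _) (hC x0)
  set m0 : ℝ := Real.exp (-(|β| * C)) with hm0def
  set M0 : ℝ := Real.exp (|β| * C) with hM0def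
  have hm0 : 0 < m0 := Real.exp_pos _
  have hM0 : 0 < M0 := Real.exp_pos _
  have hgb : ∀ z, m0 ≤ Real.exp (β * f z) ∧ Real.exp (β * f z) ≤ M0 := by
    intro z
    have h1 : |β * f z| ≤ |β| * C := by
      rw [abs_mul]
      exact mul_le_mul_of_nonneg_left (hC z) (abs_nonneg β)
    rw [abs_le] at h1
    exact ⟨Real.exp_le_exp.2 h1.1, Real.exp_le_exp.2 h1.2⟩
  have hgm : Measurable fun z => Real.exp (β * f z) :=
    Real.measurable_exp.comp (hf.const_mul β)
  set L := |Real.log m0| + |Real.log M0| with hL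
  have hLnn : 0 ≤ L := add_nonneg (abs_nonneg _) (abs_nonneg _)
  have hNm : Measurable fun x => ∫ y, f (Function.update x k y)
      * Real.exp (β * f (Function.update x k y)) ∂(μ k) :=
    aux_measurable_condInt μ k (h := fun z => f z * Real.exp (β * f z)) (hf.mul hgm)
  have hZm : Measurable fun x => ∫ y, Real.exp (β * f (Function.update x k y)) ∂(μ k) :=
    aux_measurable_condInt μ k (h := fun z => Real.exp (β * f z)) hgm
  have hNb : ∀ x, |∫ y, f (Function.update x k y)
      * Real.exp (β * f (Function.update x k y)) ∂(μ k)| ≤ C * M0 := by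
    intro x
    refine aux_abs_integral_le (μ k) (fun y => ?_)
    rw [abs_mul]
    refine mul_le_mul (hC _) ?_ (abs_nonneg _) hC0
    rw [abs_of_pos (Real.exp_pos _)]
    exact (hgb _).2
  have hZb : ∀ x, m0 ≤ (∫ y, Real.exp (β * f (Function.update x k y)) ∂(μ k))
      ∧ (∫ y, Real.exp (β * f (Function.update x k y)) ∂(μ k)) ≤ M0 := by
    intro x
    exact aux_integral_Icc (μ k) (h := fun y => Real.exp (β * f (Function.update x k y)))
      ((hgm.comp (measurable_update x)).aestronglyMeasurable)
      (fun y => (hgb _).1) (fun y => (hgb _).2)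
  set Bs := |β| * ((C * M0) / m0) + L with hBs
  have hBsnn : 0 ≤ Bs :=
    add_nonneg (mul_nonneg (abs_nonneg β)
      (div_nonneg (mul_nonneg hC0 hM0.le) hm0.le)) hLnn
  have hSm : Measurable (condEntropyK μ k f β) := by
    unfold condEntropyK condThermalExpK
    exact ((hNm.div hZm).const_mul β).sub (Real.measurable_log.comp hZm)
  have hSb : ∀ x, |condEntropyK μ k f β x| ≤ Bs := by
    intro x
    unfold condEntropyK condThermalExpK
    have hZx := hZb x
    have hZpos : 0 < (∫ y, Real.exp (β * f (Function.update x k y)) ∂(μ k)) :=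
      lt_of_lt_of_le hm0 hZx.1
    refine le_trans (abs_sub _ _) ?_
    rw [hBs]
    gcongr
    · rw [abs_mul, abs_div, abs_of_pos hZpos]
      refine mul_le_mul_of_nonneg_left ?_ (abs_nonneg β)
      exact div_le_div₀ (mul_nonneg hC0 hM0.le) (hNb x) hm0 hZx.1
    · exact aux_abs_log_le hm0 hZx.1 hZx.2
  refine aux_int_bdd _ ((hSm.mul hgm).aestronglyMeasurable) (B := Bs * M0) ?_
  intro x
  rw [abs_mul]
  refine mul_le_mul (hSb x) ?_ (abs_nonneg _) hBsnn
  rw [abs_of_pos (Real.exp_pos _)]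
  exact (hgb x).2

end MainHelp

section Statements

variable {n : ℕ} {Ω : Fin n → Type*} [∀ k, MeasurableSpace (Ω k)]

/-- Tensorization (thermal subadditivity) of entropy. -/
theorem stmt_6 (μ : ∀ k, Measure (Ω k)) [∀ k, IsProbabilityMeasure (μ k)]
    (f : (∀ i, Ω i) → ℝ) (hf : Measurable f) (C : ℝ) (hC : ∀ x, |f x| ≤ C) (β : ℝ) :
    canEntropy (Measure.pi μ) f β
      ≤ thermalExp (Measure.pi μ) β f (fun x => ∑ k, condEntropyK μ k f β x) := by

  classical
  have hC0 : 0 ≤ C := by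
    obtain ⟨x0⟩ := aux_nonempty (Measure.pi μ)
    exact le_trans (abs_nonneg _) (hC x0)
  set m0 : ℝ := Real.exp (-(|β| * C)) with hm0def
  set M0 : ℝ := Real.exp (|β| * C) with hM0def
  have hm0 : 0 < m0 := Real.exp_pos _
  have hM0 : 0 < M0 := Real.exp_pos _
  have hgb : ∀ z, m0 ≤ Real.exp (β * f z) ∧ Real.exp (β * f z) ≤ M0 := by
    intro z
    have h1 : |β * f z| ≤ |β| * C := by
      rw [abs_mul]
      exact mul_le_mul_of_nonneg_left (hC z) (abs_nonneg β)
    rw [abs_le] at h1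
    exact ⟨Real.exp_le_exp.2 h1.1, Real.exp_le_exp.2 h1.2⟩
  have hgm : Measurable fun z => Real.exp (β * f z) :=
    Real.measurable_exp.comp (hf.const_mul β)
  have hgl : ∀ z, m0 ≤ Real.exp (β * f z) := fun z => (hgb z).1
  have hgu : ∀ z, Real.exp (β * f z) ≤ M0 := fun z => (hgb z).2
  set L := |Real.log m0| + |Real.log M0| with hL
  have hLnn : 0 ≤ L := add_nonneg (abs_nonneg _) (abs_nonneg _)
  set Z := ∫ x, Real.exp (β * f x) ∂(Measure.pi μ) with hZdef
  have hZicc : m0 ≤ Z ∧ Z ≤ M0 := aux_integral_Icc (Measure.pi μ)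
    (h := fun z => Real.exp (β * f z)) hgm.aestronglyMeasurable hgl hgu
  have hZpos : 0 < Z := lt_of_lt_of_le hm0 hZicc.1
  -- integrability facts
  have Ig : Integrable (fun x => Real.exp (β * f x)) (Measure.pi μ) :=
    aux_int_bdd _ hgm.aestronglyMeasurable (B := M0)
      (fun x => by rw [abs_of_pos (Real.exp_pos _)]; exact hgu x)
  have Ifg : Integrable (fun x => f x * Real.exp (β * f x)) (Measure.pi μ) :=
    aux_int_bdd _ ((hf.mul hgm).aestronglyMeasurable) (B := C * M0)
      (fun x => by
        rw [abs_mul]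
        refine mul_le_mul (hC x) ?_ (abs_nonneg _) hC0
        rw [abs_of_pos (Real.exp_pos _)]
        exact hgu x)
  have Iglogg : Integrable (fun x => Real.exp (β * f x) * Real.log (Real.exp (β * f x)))
      (Measure.pi μ) :=
    aux_int_bdd _ ((hgm.mul (Real.measurable_log.comp hgm)).aestronglyMeasurable) (B := M0 * L)
      (fun x => by
        rw [abs_mul]
        refine mul_le_mul ?_ (aux_abs_log_le hm0 (hgl x) (hgu x)) (abs_nonneg _) hM0.le
        rw [abs_of_pos (Real.exp_pos _)]
        exact hgu x)
  -- per-step integrability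
  have hGp : ∀ k, Measurable (auxG μ (fun z => Real.exp (β * f z)) k)
      ∧ (∀ x, m0 ≤ auxG μ (fun z => Real.exp (β * f z)) k x)
      ∧ (∀ x, auxG μ (fun z => Real.exp (β * f z)) k x ≤ M0) :=
    auxG_props μ hgm hgl hgu
  have Iterm : ∀ k : ℕ, Integrable (fun x => Real.exp (β * f x)
      * (Real.log (auxG μ (fun z => Real.exp (β * f z)) k x)
         - Real.log (auxG μ (fun z => Real.exp (β * f z)) (k+1) x))) (Measure.pi μ) := by
    intro k
    refine aux_int_bdd _ ((hgm.mul ((Real.measurable_log.comp (hGp k).1).sub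
      (Real.measurable_log.comp (hGp (k+1)).1))).aestronglyMeasurable) (B := M0 * (L + L)) ?_
    intro x
    rw [abs_mul]
    refine mul_le_mul ?_ ?_ (abs_nonneg _) hM0.le
    · rw [abs_of_pos (Real.exp_pos _)]; exact hgu x
    · refine le_trans (abs_sub _ _) ?_
      have h1 := aux_abs_log_le hm0 ((hGp k).2.1 x) ((hGp k).2.2 x)
      have h2 := aux_abs_log_le hm0 ((hGp (k+1)).2.1 x) ((hGp (k+1)).2.2 x)
      linarith
  -- telescoping identity
  have htel : ∀ x, Real.exp (β * f x) * (Real.log (Real.exp (β * f x)) - Real.log Z)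
      = ∑ k ∈ Finset.range n, Real.exp (β * f x)
        * (Real.log (auxG μ (fun z => Real.exp (β * f z)) k x)
           - Real.log (auxG μ (fun z => Real.exp (β * f z)) (k+1) x)) := by
    intro x
    rw [← Finset.mul_sum,
      Finset.sum_range_sub' (fun k => Real.log (auxG μ (fun z => Real.exp (β * f z)) k x)) n]
    congr 2
    rw [auxG_top μ hgm hgl hgu x]
  -- core inequality
  have e1 : ∫ x, Real.exp (β * f x) * (Real.log (Real.exp (β * f x)) - Real.log Z)
        ∂(Measure.pi μ)
      = (∫ x, Real.exp (β * f x) * Real.log (Real.exp (β * f x)) ∂(Measure.pi μ))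
        - Z * Real.log Z := by
    calc ∫ x, Real.exp (β * f x) * (Real.log (Real.exp (β * f x)) - Real.log Z) ∂(Measure.pi μ)
        = ∫ x, (Real.exp (β * f x) * Real.log (Real.exp (β * f x))
            - Real.log Z * Real.exp (β * f x)) ∂(Measure.pi μ) :=
          integral_congr_ae (ae_of_all _ fun x => by ring)
      _ = (∫ x, Real.exp (β * f x) * Real.log (Real.exp (β * f x)) ∂(Measure.pi μ))
            - Real.log Z * ∫ x, Real.exp (β * f x) ∂(Measure.pi μ) := by
          rw [integral_sub Iglogg (Ig.const_mul _), integral_const_mul]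
      _ = (∫ x, Real.exp (β * f x) * Real.log (Real.exp (β * f x)) ∂(Measure.pi μ))
            - Z * Real.log Z := by rw [← hZdef]; ring
  have e2 : ∫ x, Real.exp (β * f x) * (Real.log (Real.exp (β * f x)) - Real.log Z)
        ∂(Measure.pi μ)
      = ∑ k ∈ Finset.range n, ∫ x, Real.exp (β * f x)
          * (Real.log (auxG μ (fun z => Real.exp (β * f z)) k x)
             - Real.log (auxG μ (fun z => Real.exp (β * f z)) (k+1) x)) ∂(Measure.pi μ) := by
    rw [integral_congr_ae (ae_of_all _ htel)]
    exact integral_finset_sum _ (fun k _ => Iterm k)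
  set Ent : ℕ → ℝ := fun k => if h : k < n
    then ∫ x, auxEnt μ (fun z => Real.exp (β * f z)) ⟨k, h⟩ x ∂(Measure.pi μ) else 0 with hEnt
  have e3 : ∑ k ∈ Finset.range n, ∫ x, Real.exp (β * f x)
        * (Real.log (auxG μ (fun z => Real.exp (β * f z)) k x)
           - Real.log (auxG μ (fun z => Real.exp (β * f z)) (k+1) x)) ∂(Measure.pi μ)
      ≤ ∑ k ∈ Finset.range n, Ent k := by
    refine Finset.sum_le_sum (fun k hk => ?_)
    have hk' : k < n := Finset.mem_range.1 hk
    rw [hEnt]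
    simp only [dif_pos hk']
    exact aux_step μ hgm hm0 hgl hgu hk'
  have e4 : ∑ k ∈ Finset.range n, Ent k
      = ∑ k : Fin n, ∫ x, auxEnt μ (fun z => Real.exp (β * f z)) k x ∂(Measure.pi μ) := by
    rw [← Fin.sum_univ_eq_sum_range Ent n]
    refine Finset.sum_congr rfl (fun k _ => ?_)
    rw [hEnt]
    simp only [dif_pos k.isLt]
  have core : (∫ x, Real.exp (β * f x) * Real.log (Real.exp (β * f x)) ∂(Measure.pi μ))
        - Z * Real.log Z
      ≤ ∑ k : Fin n, ∫ x, auxEnt μ (fun z => Real.exp (β * f z)) k x ∂(Measure.pi μ) := by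
    rw [← e1, e2, ← e4]
    exact e3
  -- rewrite both sides of the goal
  have hnum : ∫ x, Real.exp (β * f x) * Real.log (Real.exp (β * f x)) ∂(Measure.pi μ)
      = β * ∫ x, f x * Real.exp (β * f x) ∂(Measure.pi μ) := by
    rw [← integral_const_mul]
    refine integral_congr_ae (ae_of_all _ fun x => ?_)
    beta_reduce
    rw [Real.log_exp]
    ring
  have hRHS : ∫ x, (∑ k : Fin n, condEntropyK μ k f β x) * Real.exp (β * f x) ∂(Measure.pi μ)
      = ∑ k : Fin n, ∫ x, condEntropyK μ k f β x * Real.exp (β * f x) ∂(Measure.pi μ) := by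
    calc ∫ x, (∑ k : Fin n, condEntropyK μ k f β x) * Real.exp (β * f x) ∂(Measure.pi μ)
        = ∫ x, ∑ k : Fin n, condEntropyK μ k f β x * Real.exp (β * f x) ∂(Measure.pi μ) :=
          integral_congr_ae (ae_of_all _ fun x => by beta_reduce; rw [Finset.sum_mul])
      _ = ∑ k : Fin n, ∫ x, condEntropyK μ k f β x * Real.exp (β * f x) ∂(Measure.pi μ) :=
          integral_finset_sum _ (fun k _ => aux_SKg_integrable μ hf hC β k)
  have hRHS2 : ∑ k : Fin n, ∫ x, condEntropyK μ k f β x * Real.exp (β * f x) ∂(Measure.pi μ)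
      = ∑ k : Fin n, ∫ x, auxEnt μ (fun z => Real.exp (β * f z)) k x ∂(Measure.pi μ) :=
    Finset.sum_congr rfl (fun k _ => aux_condEntropyK_int μ hf hC β k)
  unfold canEntropy thermalExp
  rw [← hZdef, hRHS, hRHS2]
  have hle : β * ((∫ x, f x * Real.exp (β * f x) ∂(Measure.pi μ)) / Z) - Real.log Z
      = ((∫ x, Real.exp (β * f x) * Real.log (Real.exp (β * f x)) ∂(Measure.pi μ))
          - Z * Real.log Z) / Z := by
    rw [hnum]
    field_simp
  rw [hle]
  gcongr


end Statements
end

section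
/- Efron–Stein–Steele inequality: the variance of f satisfies σ²[f] ≤ E[ Σ_{k=1}^n σ²_k[f] ], where σ²_k[f] is the conditional variance in the k-th coordinate. -/
open MeasureTheory Real

universe v

lemma int_of_bdd {α : Type*} [MeasurableSpace α] (ν : Measure α) [IsFiniteMeasure ν]
    {g : α → ℝ} (hg : Measurable g) {C : ℝ} (h : ∀ x, |g x| ≤ C) : Integrable g ν :=
  (integrable_const C).mono' hg.aestronglyMeasurable (ae_of_all _ h)

lemma abs_integral_le {α : Type*} [MeasurableSpace α] (ν : Measure α) [IsProbabilityMeasure ν]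
    {g : α → ℝ} {C : ℝ} (h : ∀ x, |g x| ≤ C) : |∫ x, g x ∂ν| ≤ C := by
  have := norm_integral_le_of_norm_le_const (μ := ν) (f := g) (C := C) (ae_of_all _ h)
  simpa using this

section PiLemmas

variable {n : ℕ} {Ω : Fin n → Type v} [∀ k, MeasurableSpace (Ω k)]
  (μ : ∀ k, Measure (Ω k)) [∀ k, IsProbabilityMeasure (μ k)]

lemma meas_condExpK {f : (∀ i, Ω i) → ℝ} (hf : Measurable f) (k : Fin n) :
    Measurable (condExpK μ k f) := by
  have h1 : Measurable fun p : (∀ i, Ω i) × Ω k => f (Function.update p.1 k p.2) :=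
    hf.comp measurable_update'
  exact (h1.stronglyMeasurable.integral_prod_right').measurable

lemma abs_condExpK_le {f : (∀ i, Ω i) → ℝ} {C : ℝ} (hC : ∀ x, |f x| ≤ C) (k : Fin n)
    (x : ∀ i, Ω i) : |condExpK μ k f x| ≤ C :=
  abs_integral_le _ (fun y => hC _)

lemma meas_condVarK {f : (∀ i, Ω i) → ℝ} (hf : Measurable f) (k : Fin n) :
    Measurable (condVarK μ k f) := by
  have h1 : Measurable fun p : (∀ i, Ω i) × Ω k =>
      (f (Function.update p.1 k p.2) - condExpK μ k f p.1) ^ 2 :=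
    ((hf.comp measurable_update').sub ((meas_condExpK μ hf k).comp measurable_fst)).pow_const 2
  exact (h1.stronglyMeasurable.integral_prod_right').measurable

lemma condVarK_nonneg (f : (∀ i, Ω i) → ℝ) (k : Fin n) (x : ∀ i, Ω i) :
    0 ≤ condVarK μ k f x := integral_nonneg fun y => sq_nonneg _

lemma condVarK_le {f : (∀ i, Ω i) → ℝ} (hf : Measurable f) {C : ℝ} (hC : ∀ x, |f x| ≤ C)
    (k : Fin n) (x : ∀ i, Ω i) : condVarK μ k f x ≤ (2 * C) ^ 2 := by
  have h : ∀ y : Ω k, (f (Function.update x k y) - condExpK μ k f x) ^ 2 ≤ (2 * C) ^ 2 := by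
    intro y
    rw [← sq_abs]
    have : |f (Function.update x k y) - condExpK μ k f x| ≤ 2 * C := by
      calc _ ≤ |f (Function.update x k y)| + |condExpK μ k f x| := abs_sub _ _
        _ ≤ C + C := add_le_add (hC _) (abs_condExpK_le μ hC k x)
        _ = 2 * C := by ring
    exact pow_le_pow_left₀ (abs_nonneg _) this 2
  have hmeas : Measurable fun y : Ω k => (f (Function.update x k y) - condExpK μ k f x) ^ 2 :=
    ((hf.comp (measurable_update x)).sub measurable_const).pow_const 2
  calc condVarK μ k f x ≤ ∫ _, (2 * C) ^ 2 ∂(μ k) := by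
        refine integral_mono (int_of_bdd _ hmeas (C := (2*C)^2) fun y => ?_)
          (integrable_const _) h
        rw [abs_of_nonneg (sq_nonneg _)]; exact h y
    _ = (2 * C) ^ 2 := by simp
section Cons

variable {n : ℕ} {Ω : Fin (n + 1) → Type v} [∀ k, MeasurableSpace (Ω k)]
  (μ : ∀ k, Measure (Ω k)) [∀ k, IsProbabilityMeasure (μ k)]

lemma piFinSuccAbove_symm_zero (p : Ω 0 × ∀ j : Fin n, Ω j.succ) :
    (MeasurableEquiv.piFinSuccAbove Ω 0).symm p = Fin.cons p.1 p.2 := by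
  show Fin.insertNth 0 p.1 p.2 = Fin.cons p.1 p.2
  ext j
  induction j using Fin.cases with
  | zero => simp; exact Fin.insertNth_apply_same _ _ _
  | succ j =>
      have := Fin.insertNth_apply_succAbove (i := (0 : Fin (n+1))) (x := p.1) (p := p.2) j
      simpa using this

lemma measurable_cons : Measurable fun p : Ω 0 × ∀ j : Fin n, Ω j.succ =>
    (Fin.cons p.1 p.2 : ∀ i, Ω i) := by
  rw [measurable_pi_iff]
  intro j
  induction j using Fin.cases with
  | zero => simpa using measurable_fst
  | succ j => simpa [Function.comp_def] using (measurable_pi_apply j).comp measurable_snd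

lemma integral_pi_cons {h : (∀ i, Ω i) → ℝ} (hm : Measurable h) {C : ℝ}
    (hb : ∀ x, |h x| ≤ C) :
    ∫ x, h x ∂(Measure.pi μ)
      = ∫ x₀, ∫ x', h (Fin.cons x₀ x') ∂(Measure.pi fun j : Fin n => μ j.succ) ∂(μ 0) := by
  have P := (measurePreserving_piFinSuccAbove μ 0).symm
  have e1 : ∫ x, h x ∂(Measure.pi μ)
      = ∫ p, h ((MeasurableEquiv.piFinSuccAbove Ω 0).symm p)
          ∂((μ 0).prod (Measure.pi fun j : Fin n => μ j.succ)) := by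
    exact (P.integral_comp (MeasurableEquiv.piFinSuccAbove Ω 0).symm.measurableEmbedding h).symm
  rw [e1]
  have e2 : ∀ p : Ω 0 × ∀ j : Fin n, Ω j.succ,
      h ((MeasurableEquiv.piFinSuccAbove Ω 0).symm p) = h (Fin.cons p.1 p.2) := fun p => by
    rw [piFinSuccAbove_symm_zero]
  simp_rw [e2]
  exact integral_prod _ (int_of_bdd _ (hm.comp measurable_cons) (fun p => hb _))

end Cons
-- (∫ h)² ≤ ∫ h² for probability measure, bounded measurable h
lemma sq_integral_le {α : Type*} [MeasurableSpace α] (ν : Measure α) [IsProbabilityMeasure ν]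
    {h : α → ℝ} (hm : Measurable h) {C : ℝ} (hb : ∀ x, |h x| ≤ C) :
    (∫ x, h x ∂ν) ^ 2 ≤ ∫ x, h x ^ 2 ∂ν := by
  have hint : Integrable h ν := int_of_bdd ν hm hb
  have hint2 : Integrable (fun x => h x ^ 2) ν := by
    refine int_of_bdd ν (hm.pow_const 2) (C := C ^ 2) fun x => ?_
    rw [abs_pow, ← sq_abs, abs_abs]
    exact pow_le_pow_left₀ (abs_nonneg _) (hb x) 2
  set c := ∫ x, h x ∂ν with hc
  have key : 0 ≤ ∫ x, (h x - c) ^ 2 ∂ν := integral_nonneg fun x => sq_nonneg _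
  have expand : ∫ x, (h x - c) ^ 2 ∂ν = ∫ x, h x ^ 2 ∂ν - c ^ 2 := by
    have : ∀ x, (h x - c) ^ 2 = h x ^ 2 - (2 * c) * h x + c ^ 2 := by intro x; ring
    simp_rw [this]
    rw [integral_add (by exact hint2.sub (hint.const_mul _)) (integrable_const _),
      integral_sub hint2 (hint.const_mul _), integral_const_mul, integral_const]
    simp [← hc]; ring
  linarith [key, expand ▸ key]


lemma abs_sub_bdd {a b C : ℝ} (ha : |a| ≤ C) (hb : |b| ≤ C) : |a - b| ≤ 2 * C :=
  calc |a - b| ≤ |a| + |b| := abs_sub _ _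
    _ ≤ C + C := add_le_add ha hb
    _ = 2 * C := by ring

lemma sq_sub_bdd {a b C : ℝ} (ha : |a| ≤ C) (hb : |b| ≤ C) : |(a - b) ^ 2| ≤ (2 * C) ^ 2 := by
  rw [abs_of_nonneg (sq_nonneg _), ← sq_abs]
  exact pow_le_pow_left₀ (abs_nonneg _) (abs_sub_bdd ha hb) 2

lemma abs_sum_le_of_bdd {ι : Type*} (s : Finset ι) {g : ι → ℝ} {B : ℝ}
    (h : ∀ i ∈ s, |g i| ≤ B) : |∑ i ∈ s, g i| ≤ (s.card : ℝ) * B :=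
  (Finset.abs_sum_le_sum_abs _ _).trans ((Finset.sum_le_sum h).trans_eq
    (by rw [Finset.sum_const, nsmul_eq_mul]))

lemma abs_condVarK_le {n : ℕ} {Ω : Fin n → Type v} [∀ k, MeasurableSpace (Ω k)]
    (μ : ∀ k, Measure (Ω k)) [∀ k, IsProbabilityMeasure (μ k)]
    {f : (∀ i, Ω i) → ℝ} (hf : Measurable f) {C : ℝ} (hC : ∀ x, |f x| ≤ C)
    (k : Fin n) (x : ∀ i, Ω i) : |condVarK μ k f x| ≤ (2 * C) ^ 2 := by
  rw [abs_of_nonneg (condVarK_nonneg μ f k x)]; exact condVarK_le μ hf hC k x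

lemma efron_stein_aux (n : ℕ) :
    ∀ (Ω : Fin n → Type v) [∀ k, MeasurableSpace (Ω k)]
      (μ : ∀ k, Measure (Ω k)) [∀ k, IsProbabilityMeasure (μ k)]
      (f : (∀ i, Ω i) → ℝ), Measurable f → ∀ C : ℝ, (∀ x, |f x| ≤ C) →
    ∫ x, (f x - ∫ y, f y ∂(Measure.pi μ)) ^ 2 ∂(Measure.pi μ)
      ≤ ∫ x, ∑ k, condVarK μ k f x ∂(Measure.pi μ) := by
  induction n with
  | zero =>
      intro Ω _ μ _ f hf C hC
      have hconst : ∀ x : (∀ i, Ω i), ∫ y, f y ∂(Measure.pi μ) = f x := by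
        intro x
        have h : ∀ y : (∀ i, Ω i), f y = f x := fun y => congrArg f (Subsingleton.elim _ _)
        simp_rw [h]
        simp
      have h0 : ∀ x : (∀ i, Ω i), (f x - ∫ y, f y ∂(Measure.pi μ)) ^ 2 = 0 := by
        intro x; rw [hconst x]; ring
      simp_rw [h0]
      simp
  | succ n IH =>
      intro Ω inst μ instP f hf C hC
      classical
      set π' : Measure (∀ j : Fin n, Ω j.succ) := Measure.pi (fun j => μ j.succ) with hπ'def
      haveI hπ'p : IsProbabilityMeasure π' := by rw [hπ'def]; infer_instance
      set Ef := ∫ y, f y ∂(Measure.pi μ) with hEfdef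
      have hgj : Measurable fun p : Ω 0 × ∀ j : Fin n, Ω j.succ => f (Fin.cons p.1 p.2) :=
        hf.comp measurable_cons
      have hg0 : ∀ x₀, Measurable fun x' => f (Fin.cons x₀ x') :=
        fun x₀ => hgj.comp measurable_prodMk_left
      set F : Ω 0 → ℝ := fun x₀ => ∫ x', f (Fin.cons x₀ x') ∂π' with hFdef
      set M : (∀ j : Fin n, Ω j.succ) → ℝ := fun x' => ∫ x₀, f (Fin.cons x₀ x') ∂(μ 0)
        with hMdef
      have hFm : Measurable F := hgj.stronglyMeasurable.integral_prod_right'.measurable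
      have hMm : Measurable M := hgj.stronglyMeasurable.integral_prod_left'.measurable
      have hFb : ∀ x₀, |F x₀| ≤ C := fun x₀ => abs_integral_le _ fun _ => hC _
      have hMb : ∀ x', |M x'| ≤ C := fun x' => abs_integral_le _ fun _ => hC _
      have hEfb : |Ef| ≤ C := abs_integral_le _ fun _ => hC _
      have hMint : Integrable M π' := int_of_bdd _ hMm hMb
      have hEM : Ef = ∫ x', M x' ∂π' := by
        rw [hEfdef, integral_pi_cons μ hf hC, hMdef]
        exact integral_integral_swap (int_of_bdd _ hgj fun p => hC _)
      have L1 : ∫ x, (f x - Ef) ^ 2 ∂(Measure.pi μ)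
          = ∫ x₀, ∫ x', (f (Fin.cons x₀ x') - Ef) ^ 2 ∂π' ∂(μ 0) :=
        integral_pi_cons μ ((hf.sub measurable_const).pow_const 2)
          (fun x => sq_sub_bdd (hC x) hEfb)
      have expand : ∀ x₀, ∫ x', (f (Fin.cons x₀ x') - Ef) ^ 2 ∂π'
          = (∫ x', (f (Fin.cons x₀ x') - F x₀) ^ 2 ∂π') + (F x₀ - Ef) ^ 2 := by
        intro x₀
        have h1 : Integrable (fun x' => (f (Fin.cons x₀ x') - F x₀) ^ 2) π' :=
          int_of_bdd _ (((hg0 x₀).sub measurable_const).pow_const 2)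
            fun x' => sq_sub_bdd (hC _) (hFb x₀)
        have h2 : Integrable (fun x' => f (Fin.cons x₀ x')) π' :=
          int_of_bdd _ (hg0 x₀) fun _ => hC _
        have key : ∀ x', (f (Fin.cons x₀ x') - Ef) ^ 2
            = (f (Fin.cons x₀ x') - F x₀) ^ 2 + ((2 * (F x₀ - Ef)) * f (Fin.cons x₀ x')
                + ((F x₀ - Ef) ^ 2 - 2 * (F x₀ - Ef) * F x₀)) := fun x' => by ring
        simp_rw [key]
        have h3 : Integrable (fun x' => 2 * (F x₀ - Ef) * f (Fin.cons x₀ x')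
            + ((F x₀ - Ef) ^ 2 - 2 * (F x₀ - Ef) * F x₀)) π' :=
          (h2.const_mul _).add (integrable_const _)
        have h4 : Integrable (fun x' => 2 * (F x₀ - Ef) * f (Fin.cons x₀ x')) π' :=
          h2.const_mul _
        rw [integral_add h1 h3, integral_add h4 (integrable_const _), integral_const_mul,
          integral_const]
        have hFx : ∫ x', f (Fin.cons x₀ x') ∂π' = F x₀ := rfl
        rw [hFx]
        simp only [probReal_univ, one_smul]
        ring
      rw [L1]
      simp_rw [expand]
      have hAm : Measurable fun x₀ => ∫ x', (f (Fin.cons x₀ x') - F x₀) ^ 2 ∂π' :=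
        (((hgj.sub (hFm.comp measurable_fst)).pow_const
          2).stronglyMeasurable.integral_prod_right').measurable
      have hAint : Integrable (fun x₀ => ∫ x', (f (Fin.cons x₀ x') - F x₀) ^ 2 ∂π') (μ 0) :=
        int_of_bdd _ hAm fun x₀ => abs_integral_le _ fun x' => sq_sub_bdd (hC _) (hFb x₀)
      have hBint : Integrable (fun x₀ => (F x₀ - Ef) ^ 2) (μ 0) :=
        int_of_bdd _ ((hFm.sub measurable_const).pow_const 2)
          fun x₀ => sq_sub_bdd (hFb x₀) hEfb
      rw [integral_add hAint hBint]
      -- right-hand side as iterated integral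
      have hsum_meas : Measurable fun x => ∑ k : Fin (n+1), condVarK μ k f x :=
        Finset.measurable_sum _ fun (k : Fin (n+1)) _ => meas_condVarK μ hf k
      have R1 : ∫ x, ∑ k : Fin (n+1), condVarK μ k f x ∂(Measure.pi μ)
          = ∫ x₀, ∫ x', ∑ k : Fin (n+1), condVarK μ k f (Fin.cons x₀ x') ∂π' ∂(μ 0) :=
        integral_pi_cons μ hsum_meas (C := ((n+1 : ℕ) : ℝ) * (2 * C) ^ 2) fun x => by
          simpa using abs_sum_le_of_bdd Finset.univ fun k _ => abs_condVarK_le μ hf hC k x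
      rw [R1]
      have hsplit : ∀ x : (∀ i, Ω i), ∑ k : Fin (n+1), condVarK μ k f x
          = condVarK μ 0 f x + ∑ k : Fin n, condVarK μ k.succ f x :=
        fun x => Fin.sum_univ_succ _
      simp_rw [hsplit]
      -- integrability of pieces
      have hV0m : ∀ x₀, Measurable fun x' => condVarK μ 0 f (Fin.cons x₀ x') :=
        fun x₀ => (meas_condVarK μ hf 0).comp (measurable_cons.comp measurable_prodMk_left)
      have hV0int : ∀ x₀, Integrable (fun x' => condVarK μ 0 f (Fin.cons x₀ x')) π' :=
        fun x₀ => int_of_bdd _ (hV0m x₀) fun x' => abs_condVarK_le μ hf hC 0 _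
      have hVSm : ∀ x₀, Measurable fun x' => ∑ k : Fin n, condVarK μ k.succ f (Fin.cons x₀ x') :=
        fun x₀ => Finset.measurable_sum _ fun (k : Fin n) _ =>
          (meas_condVarK μ hf k.succ).comp (measurable_cons.comp measurable_prodMk_left)
      have hVSint : ∀ x₀, Integrable
          (fun x' => ∑ k : Fin n, condVarK μ k.succ f (Fin.cons x₀ x')) π' :=
        fun x₀ => int_of_bdd _ (hVSm x₀) (C := (n : ℝ) * (2*C)^2) fun x' => by
          simpa using abs_sum_le_of_bdd Finset.univ
            fun (k : Fin n) _ => abs_condVarK_le μ hf hC k.succ (Fin.cons x₀ x')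
      have inner_split : ∀ x₀, ∫ x', (condVarK μ 0 f (Fin.cons x₀ x')
            + ∑ k : Fin n, condVarK μ k.succ f (Fin.cons x₀ x')) ∂π'
          = (∫ x', condVarK μ 0 f (Fin.cons x₀ x') ∂π')
            + ∫ x', ∑ k : Fin n, condVarK μ k.succ f (Fin.cons x₀ x') ∂π' :=
        fun x₀ => integral_add (hV0int x₀) (hVSint x₀)
      simp_rw [inner_split]
      have houter0 : Integrable (fun x₀ => ∫ x', condVarK μ 0 f (Fin.cons x₀ x') ∂π') (μ 0) := by
        refine int_of_bdd _ ?_ fun x₀ => abs_integral_le _ fun x' => abs_condVarK_le μ hf hC 0 _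
        exact (((meas_condVarK μ hf 0).comp
          measurable_cons).stronglyMeasurable.integral_prod_right').measurable
      have houterS : Integrable
          (fun x₀ => ∫ x', ∑ k : Fin n, condVarK μ k.succ f (Fin.cons x₀ x') ∂π') (μ 0) := by
        refine int_of_bdd _ ?_ (C := (n : ℝ) * (2*C)^2) fun x₀ => abs_integral_le _ fun x' => by
          simpa using abs_sum_le_of_bdd Finset.univ
            fun (k : Fin n) _ => abs_condVarK_le μ hf hC k.succ (Fin.cons x₀ x')
        exact ((Finset.measurable_sum _ fun (k : Fin n) _ => (meas_condVarK μ hf k.succ).comp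
          measurable_cons).stronglyMeasurable.integral_prod_right').measurable
      rw [integral_add houter0 houterS]
      -- step A : inductive hypothesis
      have cond_succ : ∀ (x₀ : Ω 0) (x' : ∀ j : Fin n, Ω j.succ) (k : Fin n),
          condVarK (fun j => μ j.succ) k (fun z => f (Fin.cons x₀ z)) x'
            = condVarK μ k.succ f (Fin.cons x₀ x') := by
        intro x₀ x' k
        simp only [condVarK, condExpK, Fin.cons_update]
      have SA : ∫ x₀, (∫ x', (f (Fin.cons x₀ x') - F x₀) ^ 2 ∂π') ∂(μ 0)
          ≤ ∫ x₀, ∫ x', ∑ k : Fin n, condVarK μ k.succ f (Fin.cons x₀ x') ∂π' ∂(μ 0) := by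
        refine integral_mono hAint houterS fun x₀ => ?_
        have h := IH (fun j => Ω j.succ) (fun j => μ j.succ)
          (fun z => f (Fin.cons x₀ z)) (hg0 x₀) C (fun z => hC _)
        simp_rw [cond_succ x₀] at h
        exact h
      -- step B : Jensen + Fubini
      have hjsq : Measurable fun p : Ω 0 × ∀ j : Fin n, Ω j.succ =>
          (f (Fin.cons p.1 p.2) - M p.2) ^ 2 :=
        (hgj.sub (hMm.comp measurable_snd)).pow_const 2
      have SB1 : ∀ x₀, (F x₀ - Ef) ^ 2 ≤ ∫ x', (f (Fin.cons x₀ x') - M x') ^ 2 ∂π' := by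
        intro x₀
        have hid : F x₀ - Ef = ∫ x', (f (Fin.cons x₀ x') - M x') ∂π' := by
          rw [integral_sub (int_of_bdd _ (hg0 x₀) fun _ => hC _) hMint, hEM, hFdef]
        rw [hid]
        exact sq_integral_le π' ((hg0 x₀).sub hMm) (C := 2*C)
          fun x' => abs_sub_bdd (hC _) (hMb x')
      have SB2 : ∫ x₀, (F x₀ - Ef) ^ 2 ∂(μ 0)
          ≤ ∫ x₀, ∫ x', (f (Fin.cons x₀ x') - M x') ^ 2 ∂π' ∂(μ 0) := by
        refine integral_mono hBint ?_ SB1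
        exact int_of_bdd _ (hjsq.stronglyMeasurable.integral_prod_right').measurable
          fun x₀ => abs_integral_le _ fun x' => sq_sub_bdd (hC _) (hMb x')
      have SB3 : ∫ x₀, ∫ x', (f (Fin.cons x₀ x') - M x') ^ 2 ∂π' ∂(μ 0)
          = ∫ x', ∫ x₀, (f (Fin.cons x₀ x') - M x') ^ 2 ∂(μ 0) ∂π' :=
        integral_integral_swap (int_of_bdd _ hjsq fun p => sq_sub_bdd (hC _) (hMb _))
      have cond_zero : ∀ (x₀ : Ω 0) (x' : ∀ j : Fin n, Ω j.succ),
          condVarK μ 0 f (Fin.cons x₀ x')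
            = ∫ y, (f (Fin.cons y x') - M x') ^ 2 ∂(μ 0) := by
        intro x₀ x'
        simp only [condVarK, condExpK, Fin.update_cons_zero]
        rfl
      have SB4 : ∫ x₀, (∫ x', condVarK μ 0 f (Fin.cons x₀ x') ∂π') ∂(μ 0)
          = ∫ x', ∫ y, (f (Fin.cons y x') - M x') ^ 2 ∂(μ 0) ∂π' := by
        simp_rw [cond_zero]
        rw [integral_const]
        simp
      have SB : ∫ x₀, (F x₀ - Ef) ^ 2 ∂(μ 0)
          ≤ ∫ x₀, ∫ x', condVarK μ 0 f (Fin.cons x₀ x') ∂π' ∂(μ 0) := by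
        rw [SB4]
        exact SB2.trans (le_of_eq SB3)
      linarith [SA, SB]


section Statements

variable {n : ℕ} {Ω : Fin n → Type*} [∀ k, MeasurableSpace (Ω k)]

/-- Efron–Stein–Steele inequality. -/
theorem stmt_7 (μ : ∀ k, Measure (Ω k)) [∀ k, IsProbabilityMeasure (μ k)]
    (f : (∀ i, Ω i) → ℝ) (hf : Measurable f) (C : ℝ) (hC : ∀ x, |f x| ≤ C) :
    ∫ x, (f x - ∫ y, f y ∂(Measure.pi μ)) ^ 2 ∂(Measure.pi μ)
      ≤ ∫ x, ∑ k, condVarK μ k f x ∂(Measure.pi μ) := by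
  exact efron_stein_aux n Ω μ f hf C hC

end Statements
end PiLemmas
end

section
/- Modified logarithmic Sobolev inequality: if for each k the function f_k : Ω → ℝ is bounded measurable and independent of the k-th coordinate, then for every β ∈ ℝ, S_f(β) ≤ E_{βf}[ Σ_{k=1}^n ψ( −β(f − f_k) ) ], where ψ(t) = e^t − t − 1. -/
open MeasureTheory Real

section Statements

variable {n : ℕ} {Ω : Fin n → Type*} [∀ k, MeasurableSpace (Ω k)]

/-- `ψ(t) = e^t − t − 1`. -/
noncomputable def psi (t : ℝ) : ℝ := Real.exp t - t - 1

section Aux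

variable {α : Type*} [MeasurableSpace α]

lemma my_integrable_of_abs_le {ρ : Measure α} [IsFiniteMeasure ρ] {g : α → ℝ}
    (hg : AEStronglyMeasurable g ρ) {C : ℝ} (h : ∀ x, |g x| ≤ C) : Integrable g ρ :=
  (integrable_const C).mono' hg (ae_of_all _ fun x => by simpa using h x)

lemma measurable_psi : Measurable psi :=
  (Real.measurable_exp.sub measurable_id).sub measurable_const

lemma abs_psi_le {t M : ℝ} (h : |t| ≤ M) : |psi t| ≤ Real.exp M + M + 1 := by
  have h1 : t ≤ M := (le_abs_self t).trans h
  have h2 : -M ≤ t := (abs_le.1 h).1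
  have h0 : 0 ≤ M := (abs_nonneg t).trans h
  have he : Real.exp t ≤ Real.exp M := Real.exp_le_exp.2 h1
  have hp := Real.exp_pos t
  rw [abs_le, psi]
  constructor <;> nlinarith [Real.exp_pos M]

/-- entropy functional in exponential form -/
noncomputable def entAux (ρ : Measure α) (u : α → ℝ) : ℝ :=
  (∫ x, u x * Real.exp (u x) ∂ρ) -
    (∫ x, Real.exp (u x) ∂ρ) * Real.log (∫ x, Real.exp (u x) ∂ρ)

variable {ρ : Measure α} [IsProbabilityMeasure ρ] {u : α → ℝ} {C : ℝ}

lemma integrable_exp_of_bdd (hu : Measurable u) (hC : ∀ x, |u x| ≤ C) :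
    Integrable (fun x => Real.exp (u x)) ρ :=
  my_integrable_of_abs_le (hu.exp.aestronglyMeasurable) (C := Real.exp C)
    (fun x => by rw [abs_of_pos (Real.exp_pos _)]; exact Real.exp_le_exp.2 (abs_le.1 (hC x)).2)

lemma integrable_mul_exp_of_bdd (hu : Measurable u) (hC : ∀ x, |u x| ≤ C) :
    Integrable (fun x => u x * Real.exp (u x)) ρ := by
  refine my_integrable_of_abs_le ((hu.mul hu.exp).aestronglyMeasurable) (C := C * Real.exp C) ?_
  intro x
  rw [abs_mul, abs_of_pos (Real.exp_pos _)]
  exact mul_le_mul (hC x) (Real.exp_le_exp.2 (abs_le.1 (hC x)).2) (Real.exp_pos _).le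
    ((abs_nonneg _).trans (hC x))

lemma exp_integral_bounds (hu : Measurable u) (hC : ∀ x, |u x| ≤ C) :
    Real.exp (-C) ≤ (∫ x, Real.exp (u x) ∂ρ) ∧ (∫ x, Real.exp (u x) ∂ρ) ≤ Real.exp C := by
  have hint := integrable_exp_of_bdd (ρ := ρ) hu hC
  constructor
  · calc Real.exp (-C) = ∫ _x, Real.exp (-C) ∂ρ := by simp
      _ ≤ _ := integral_mono (integrable_const _) hint fun x =>
          Real.exp_le_exp.2 (abs_le.1 (hC x)).1
  · calc (∫ x, Real.exp (u x) ∂ρ) ≤ ∫ _x, Real.exp C ∂ρ :=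
        integral_mono hint (integrable_const _) fun x => Real.exp_le_exp.2 (abs_le.1 (hC x)).2
      _ = Real.exp C := by simp

lemma exp_integral_pos (hu : Measurable u) (hC : ∀ x, |u x| ≤ C) :
    0 < ∫ x, Real.exp (u x) ∂ρ :=
  lt_of_lt_of_le (Real.exp_pos _) (exp_integral_bounds hu hC).1

lemma abs_log_integral_exp_le (hu : Measurable u) (hC : ∀ x, |u x| ≤ C) :
    |Real.log (∫ x, Real.exp (u x) ∂ρ)| ≤ C := by
  obtain ⟨h1, h2⟩ := exp_integral_bounds (ρ := ρ) hu hC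
  have hZ := exp_integral_pos (ρ := ρ) hu hC
  rw [abs_le]
  exact ⟨(Real.le_log_iff_exp_le hZ).2 h1, (Real.log_le_iff_le_exp hZ).2 h2⟩

lemma entAux_abs_le (hu : Measurable u) (hC : ∀ x, |u x| ≤ C) :
    |entAux ρ u| ≤ C * Real.exp C + Real.exp C * C := by
  have h1 : |∫ x, u x * Real.exp (u x) ∂ρ| ≤ C * Real.exp C := by
    have := norm_integral_le_of_norm_le_const (μ := ρ) (f := fun x => u x * Real.exp (u x))
      (C := C * Real.exp C) (ae_of_all _ fun x => by
        rw [Real.norm_eq_abs, abs_mul, abs_of_pos (Real.exp_pos _)]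
        exact mul_le_mul (hC x) (Real.exp_le_exp.2 (abs_le.1 (hC x)).2) (Real.exp_pos _).le
          ((abs_nonneg _).trans (hC x)))
    simpa using this
  have h2 : |(∫ x, Real.exp (u x) ∂ρ) * Real.log (∫ x, Real.exp (u x) ∂ρ)| ≤ Real.exp C * C := by
    rw [abs_mul]
    exact mul_le_mul (by
        rw [abs_of_pos (exp_integral_pos hu hC)]; exact (exp_integral_bounds hu hC).2)
      (abs_log_integral_exp_le hu hC) (abs_nonneg _) (Real.exp_pos _).le
  calc |entAux ρ u| ≤ _ + _ := abs_sub _ _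
    _ ≤ _ := add_le_add h1 h2

/-- Lemma A: one-coordinate modified LSI with constant comparison. -/
lemma entAux_le_of_const (hu : Measurable u) (hC : ∀ x, |u x| ≤ C) (c : ℝ) :
    entAux ρ u ≤ ∫ x, Real.exp (u x) * psi (c - u x) ∂ρ := by
  set Z := ∫ x, Real.exp (u x) ∂ρ with hZdef
  have hZ : 0 < Z := exp_integral_pos hu hC
  have h2 := integrable_exp_of_bdd (ρ := ρ) hu hC
  have h1 := integrable_mul_exp_of_bdd (ρ := ρ) hu hC
  have key : ∀ x, Real.exp (u x) * psi (c - u x)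
      = (Real.exp c - c * Real.exp (u x)) + (u x * Real.exp (u x) - Real.exp (u x)) := by
    intro x
    have h : Real.exp (u x) * Real.exp (c - u x) = Real.exp c := by
      rw [← Real.exp_add]; ring_nf
    simp only [psi]
    linear_combination h
  have hRHS : (∫ x, Real.exp (u x) * psi (c - u x) ∂ρ)
      = Real.exp c - c * Z + ((∫ x, u x * Real.exp (u x) ∂ρ) - Z) := by
    have hA : Integrable (fun x => Real.exp c - c * Real.exp (u x)) ρ :=
      (integrable_const (Real.exp c)).sub (h2.const_mul c)
    have hB : Integrable (fun x => u x * Real.exp (u x) - Real.exp (u x)) ρ := h1.sub h2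
    simp_rw [key]
    rw [integral_add hA hB, integral_sub (integrable_const (Real.exp c)) (h2.const_mul c),
      integral_sub h1 h2, integral_const, integral_const_mul]
    simp [← hZdef]
  rw [hRHS, entAux, ← hZdef]
  have hexp : Z * (c - Real.log Z + 1) ≤ Real.exp c := by
    have h := mul_le_mul_of_nonneg_left (Real.add_one_le_exp (c - Real.log Z)) hZ.le
    rwa [Real.exp_sub, Real.exp_log hZ, mul_div_cancel₀ _ hZ.ne'] at h
  nlinarith [hexp]

/-- Lemma B: duality bound. -/
lemma dual_bound {h : α → ℝ} {D : ℝ} (hu : Measurable u) (hC : ∀ x, |u x| ≤ C)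
    (hh : Measurable h) (hD : ∀ x, |h x| ≤ D) (hh1 : (∫ x, Real.exp (h x) ∂ρ) ≤ 1) :
    (∫ x, Real.exp (u x) * h x ∂ρ) ≤ entAux ρ u := by
  set Z := ∫ x, Real.exp (u x) ∂ρ with hZdef
  have hZ : 0 < Z := exp_integral_pos hu hC
  have h2 := integrable_exp_of_bdd (ρ := ρ) hu hC
  have h1 := integrable_mul_exp_of_bdd (ρ := ρ) hu hC
  have hh2 := integrable_exp_of_bdd (ρ := ρ) hh hD
  have hptwise : ∀ x, Real.exp (u x) * h x ≤
      (u x * Real.exp (u x) - Real.exp (u x) * Real.log Z - Real.exp (u x))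
        + Z * Real.exp (h x) := by
    intro x
    have ha := mul_le_mul_of_nonneg_left
      (Real.add_one_le_exp (h x - u x + Real.log Z)) (Real.exp_pos (u x)).le
    have hb : Real.exp (u x) * Real.exp (h x - u x + Real.log Z) = Z * Real.exp (h x) := by
      rw [← Real.exp_add]
      have : u x + (h x - u x + Real.log Z) = Real.log Z + h x := by ring
      rw [this, Real.exp_add, Real.exp_log hZ]
    rw [hb] at ha
    nlinarith [ha]
  have hLint : Integrable (fun x => Real.exp (u x) * h x) ρ := by
    refine my_integrable_of_abs_le ((hu.exp.mul hh).aestronglyMeasurable)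
      (C := Real.exp C * D) fun x => ?_
    rw [abs_mul, abs_of_pos (Real.exp_pos _)]
    exact mul_le_mul (Real.exp_le_exp.2 (abs_le.1 (hC x)).2) (hD x) (abs_nonneg _)
      (Real.exp_pos _).le
  have hB1 : Integrable (fun x => u x * Real.exp (u x) - Real.exp (u x) * Real.log Z) ρ :=
    h1.sub (h2.mul_const _)
  have hB2 : Integrable
      (fun x => u x * Real.exp (u x) - Real.exp (u x) * Real.log Z - Real.exp (u x)) ρ :=
    hB1.sub h2
  have hRint : Integrable (fun x =>
      (u x * Real.exp (u x) - Real.exp (u x) * Real.log Z - Real.exp (u x))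
        + Z * Real.exp (h x)) ρ := hB2.add (hh2.const_mul Z)
  have := integral_mono hLint hRint hptwise
  rw [integral_add hB2 (hh2.const_mul Z), integral_sub hB1 h2,
    integral_sub h1 (h2.mul_const (Real.log Z)),
    integral_mul_const _ _, integral_const_mul] at this
  have hZh : Z * (∫ x, Real.exp (h x) ∂ρ) ≤ Z := by
    nlinarith [hZ]
  rw [entAux, ← hZdef]
  linarith

end Aux

section Prod

variable {α γ : Type*} [MeasurableSpace α] [MeasurableSpace γ]
variable {ν : Measure α} {κ : Measure γ} [IsProbabilityMeasure ν] [IsProbabilityMeasure κ]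
variable {u : α × γ → ℝ} {C : ℝ}

lemma sm_entAux_left (hu : Measurable u) :
    StronglyMeasurable (fun z => entAux ν (fun y => u (y, z))) := by
  have m1 : StronglyMeasurable (fun z => ∫ y, u (y, z) * Real.exp (u (y, z)) ∂ν) :=
    StronglyMeasurable.integral_prod_left' (f := fun p => u p * Real.exp (u p))
      ((hu.mul hu.exp).stronglyMeasurable)
  have m2 : StronglyMeasurable (fun z => ∫ y, Real.exp (u (y, z)) ∂ν) :=
    StronglyMeasurable.integral_prod_left' (f := fun p => Real.exp (u p))
      (hu.exp.stronglyMeasurable)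
  exact m1.sub (m2.mul (Real.measurable_log.comp m2.measurable).stronglyMeasurable)

lemma sm_entAux_right (hu : Measurable u) :
    StronglyMeasurable (fun y => entAux κ (fun z => u (y, z))) := by
  have m1 : StronglyMeasurable (fun y => ∫ z, u (y, z) * Real.exp (u (y, z)) ∂κ) :=
    StronglyMeasurable.integral_prod_right' (f := fun p => u p * Real.exp (u p))
      ((hu.mul hu.exp).stronglyMeasurable)
  have m2 : StronglyMeasurable (fun y => ∫ z, Real.exp (u (y, z)) ∂κ) :=
    StronglyMeasurable.integral_prod_right' (f := fun p => Real.exp (u p))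
      (hu.exp.stronglyMeasurable)
  exact m1.sub (m2.mul (Real.measurable_log.comp m2.measurable).stronglyMeasurable)

/-- Lemma C: two-space entropy subadditivity. -/
lemma entAux_prod_le (hu : Measurable u) (hC : ∀ p, |u p| ≤ C) :
    entAux (ν.prod κ) u ≤ (∫ z, entAux ν (fun y => u (y, z)) ∂κ)
      + ∫ y, entAux κ (fun z => u (y, z)) ∂ν := by
  -- slice measurability facts
  have huL : ∀ z, Measurable (fun y => u (y, z)) := fun z => hu.comp measurable_prodMk_right
  have huR : ∀ y, Measurable (fun z => u (y, z)) := fun y => hu.comp measurable_prodMk_left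
  -- G, Z
  set G : α → ℝ := fun y => ∫ z, Real.exp (u (y, z)) ∂κ with hGdef
  have hGsm : StronglyMeasurable G :=
    StronglyMeasurable.integral_prod_right' (f := fun p => Real.exp (u p))
      (hu.exp.stronglyMeasurable)
  have hGbd : ∀ y, Real.exp (-C) ≤ G y ∧ G y ≤ Real.exp C := fun y =>
    exp_integral_bounds (huR y) (fun z => hC (y, z))
  have hGpos : ∀ y, 0 < G y := fun y => lt_of_lt_of_le (Real.exp_pos _) (hGbd y).1
  set Z : ℝ := ∫ p, Real.exp (u p) ∂(ν.prod κ) with hZdef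
  have hZ : 0 < Z := exp_integral_pos hu hC
  have hIexp : Integrable (fun p => Real.exp (u p)) (ν.prod κ) :=
    integrable_exp_of_bdd hu hC
  have hIue : Integrable (fun p => u p * Real.exp (u p)) (ν.prod κ) :=
    integrable_mul_exp_of_bdd hu hC
  have hZG : Z = ∫ y, G y ∂ν := by
    rw [hZdef, integral_prod _ hIexp]
  -- h
  set h : α → ℝ := fun y => Real.log (G y) - Real.log Z with hhdef
  have hhm : Measurable h := (Real.measurable_log.comp hGsm.measurable).sub measurable_const
  have hlogG : ∀ y, |Real.log (G y)| ≤ C := by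
    intro y
    rw [abs_le]
    exact ⟨(Real.le_log_iff_exp_le (hGpos y)).2 (hGbd y).1,
      (Real.log_le_iff_le_exp (hGpos y)).2 (hGbd y).2⟩
  have hlogZ : |Real.log Z| ≤ C := abs_log_integral_exp_le hu hC
  have hhbd : ∀ y, |h y| ≤ C + C := fun y =>
    (abs_sub _ _).trans (add_le_add (hlogG y) hlogZ)
  have hexph : ∀ y, Real.exp (h y) = G y / Z := by
    intro y
    rw [hhdef]
    simp only
    rw [Real.exp_sub, Real.exp_log (hGpos y), Real.exp_log hZ]
  have hinth : (∫ y, Real.exp (h y) ∂ν) = 1 := by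
    simp_rw [hexph, div_eq_mul_inv]
    rw [integral_mul_const, ← hZG, mul_inv_cancel₀ hZ.ne']
  -- integrability of slices in y
  have hIGlogG : Integrable (fun y => G y * Real.log (G y)) ν := by
    refine my_integrable_of_abs_le
      ((hGsm.measurable.mul (Real.measurable_log.comp hGsm.measurable)).aestronglyMeasurable)
      (C := Real.exp C * C) fun y => ?_
    rw [abs_mul]
    exact mul_le_mul (by rw [abs_of_pos (hGpos y)]; exact (hGbd y).2) (hlogG y) (abs_nonneg _)
      (Real.exp_pos _).le
  have hIinner : Integrable (fun y => ∫ z, u (y, z) * Real.exp (u (y, z)) ∂κ) ν := by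
    refine my_integrable_of_abs_le
      ((StronglyMeasurable.integral_prod_right' (f := fun p => u p * Real.exp (u p))
        ((hu.mul hu.exp).stronglyMeasurable)).aestronglyMeasurable)
      (C := C * Real.exp C) fun y => ?_
    have := norm_integral_le_of_norm_le_const (μ := κ)
      (f := fun z => u (y, z) * Real.exp (u (y, z))) (C := C * Real.exp C)
      (ae_of_all _ fun z => by
        rw [Real.norm_eq_abs, abs_mul, abs_of_pos (Real.exp_pos _)]
        exact mul_le_mul (hC (y, z)) (Real.exp_le_exp.2 (abs_le.1 (hC (y, z))).2)
          (Real.exp_pos _).le ((abs_nonneg _).trans (hC (y, z))))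
    simpa using this
  -- chain identity pieces
  have hA : (∫ y, entAux κ (fun z => u (y, z)) ∂ν)
      = (∫ p, u p * Real.exp (u p) ∂(ν.prod κ)) - ∫ y, G y * Real.log (G y) ∂ν := by
    unfold entAux
    rw [integral_sub hIinner hIGlogG, integral_prod _ hIue]
  have hGh : Integrable (fun y => G y * h y) ν := by
    refine my_integrable_of_abs_le ((hGsm.measurable.mul hhm).aestronglyMeasurable)
      (C := Real.exp C * (C + C)) fun y => ?_
    rw [abs_mul]
    exact mul_le_mul (by rw [abs_of_pos (hGpos y)]; exact (hGbd y).2) (hhbd y) (abs_nonneg _)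
      (Real.exp_pos _).le
  have hIG : Integrable G ν :=
    my_integrable_of_abs_le hGsm.aestronglyMeasurable (C := Real.exp C)
      (fun y => by rw [abs_of_pos (hGpos y)]; exact (hGbd y).2)
  have hB : (∫ y, G y * h y ∂ν) = (∫ y, G y * Real.log (G y) ∂ν) - Z * Real.log Z := by
    have hpt : ∀ y, G y * h y = G y * Real.log (G y) - G y * Real.log Z := by
      intro y; rw [hhdef]; ring
    simp_rw [hpt]
    rw [integral_sub hIGlogG (hIG.mul_const _), integral_mul_const, ← hZG]
  -- Fubini swap
  have hswapInt : Integrable (Function.uncurry fun y z => Real.exp (u (y, z)) * h y)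
      (ν.prod κ) := by
    refine my_integrable_of_abs_le ((hu.exp.mul (hhm.comp measurable_fst)).aestronglyMeasurable)
      (C := Real.exp C * (C + C)) fun p => ?_
    obtain ⟨y, z⟩ := p
    simp only [Function.uncurry_apply_pair]
    rw [abs_mul, abs_of_pos (Real.exp_pos _)]
    exact mul_le_mul (Real.exp_le_exp.2 (abs_le.1 (hC (y, z))).2) (hhbd y) (abs_nonneg _)
      (Real.exp_pos _).le
  have hswap : (∫ y, G y * h y ∂ν) = ∫ z, ∫ y, Real.exp (u (y, z)) * h y ∂ν ∂κ := by
    have h1 : ∀ y, G y * h y = ∫ z, Real.exp (u (y, z)) * h y ∂κ := by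
      intro y
      rw [hGdef]
      simp only
      rw [← integral_mul_const]
    simp_rw [h1]
    exact integral_integral_swap hswapInt
  -- per-z dual bound, integrated
  have hdual : (∫ z, ∫ y, Real.exp (u (y, z)) * h y ∂ν ∂κ)
      ≤ ∫ z, entAux ν (fun y => u (y, z)) ∂κ := by
    refine integral_mono ?_ ?_ ?_
    · refine my_integrable_of_abs_le
        ((StronglyMeasurable.integral_prod_left'
          (f := fun p => Real.exp (u p) * h p.1)
          ((hu.exp.mul (hhm.comp measurable_fst)).stronglyMeasurable)).aestronglyMeasurable)
        (C := Real.exp C * (C + C)) fun z => ?_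
      have := norm_integral_le_of_norm_le_const (μ := ν)
        (f := fun y => Real.exp (u (y, z)) * h y) (C := Real.exp C * (C + C))
        (ae_of_all _ fun y => by
          rw [Real.norm_eq_abs, abs_mul, abs_of_pos (Real.exp_pos _)]
          exact mul_le_mul (Real.exp_le_exp.2 (abs_le.1 (hC _)).2) (hhbd _) (abs_nonneg _)
            (Real.exp_pos _).le)
      simpa using this
    · refine my_integrable_of_abs_le (sm_entAux_left hu).aestronglyMeasurable
        (C := C * Real.exp C + Real.exp C * C) fun z => ?_
      exact entAux_abs_le (huL z) (fun y => hC (y, z))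
    · intro z
      exact dual_bound (huL z) (fun y => hC (y, z)) hhm hhbd (le_of_eq hinth)
  have hfinal : entAux (ν.prod κ) u
      = (∫ y, entAux κ (fun z => u (y, z)) ∂ν) + ∫ y, G y * h y ∂ν := by
    rw [entAux, ← hZdef, hA, hB]
    ring
  rw [hfinal, hswap]
  linarith [hdual]

end Prod

section FinAux

lemma insertNth_update_succAbove {n : ℕ} {α : Fin (n + 1) → Type*} (p : Fin (n + 1))
    (x : α p) (f : ∀ i, α (p.succAbove i)) (j : Fin n) (w : α (p.succAbove j)) :
    p.insertNth x (Function.update f j w)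
      = Function.update (p.insertNth x f) (p.succAbove j) w := by
  funext m
  refine Fin.succAboveCases p ?_ ?_ m
  · rw [Fin.insertNth_apply_same,
      Function.update_of_ne (Fin.succAbove_ne p j).symm, Fin.insertNth_apply_same]
  · intro i
    rcases eq_or_ne i j with rfl | hij
    · rw [Fin.insertNth_apply_succAbove, Function.update_self, Function.update_self]
    · rw [Fin.insertNth_apply_succAbove, Function.update_of_ne hij,
        Function.update_of_ne (fun hc => hij (Fin.succAbove_right_injective hc)),
        Fin.insertNth_apply_succAbove]

end FinAux

section Main

universe u

theorem entMain : ∀ (n : ℕ) (Ω : Fin n → Type u) (_m : ∀ k, MeasurableSpace (Ω k))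
    (μ : ∀ k, Measure (Ω k)) (_hP : ∀ k, IsProbabilityMeasure (μ k))
    (u : (∀ i, Ω i) → ℝ) (_hu : Measurable u) (C : ℝ) (_hC0 : 0 ≤ C)
    (_hC : ∀ x, |u x| ≤ C)
    (V : ∀ _k : Fin n, (∀ i, Ω i) → ℝ) (_hV : ∀ k, Measurable (V k))
    (D : ℝ) (_hD : ∀ k x, |V k x| ≤ D)
    (_hind : ∀ k x y, V k (Function.update x k y) = V k x),
    entAux (Measure.pi μ) u ≤ ∑ k, ∫ x, Real.exp (u x) * psi (V k x - u x) ∂(Measure.pi μ) := by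
  intro n
  induction n with
  | zero =>
    intro Ω m μ hP u hu C hC0 hC V hV D hD hind
    haveI := hP
    haveI : IsProbabilityMeasure (Measure.pi μ) := by infer_instance
    have hconst : u = fun _ => u default := funext fun x => congrArg u (Subsingleton.elim x default)
    rw [Finset.univ_eq_empty, Finset.sum_empty, hconst, entAux]
    simp [Real.log_exp, mul_comm]
  | succ n ih =>
    intro Ω m μ hP u hu C hC0 hC V hV D hD hind
    haveI := hP
    set ν := fun j : Fin n => μ ((0 : Fin (n + 1)).succAbove j) with hνdef
    haveI : ∀ j, IsProbabilityMeasure (ν j) := fun j => hP _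
    set e := MeasurableEquiv.piFinSuccAbove Ω 0 with hedef
    have MP : MeasurePreserving e (Measure.pi μ) ((μ 0).prod (Measure.pi ν)) :=
      measurePreserving_piFinSuccAbove μ 0
    have hsymm : ∀ (y : Ω 0) (z : ∀ j, Ω ((0 : Fin (n + 1)).succAbove j)),
        e.symm (y, z) = Fin.insertNth 0 y z := fun y z => rfl
    have hInt : ∀ G : (∀ i, Ω i) → ℝ, (∫ x, G x ∂(Measure.pi μ))
        = ∫ p, G (e.symm p) ∂((μ 0).prod (Measure.pi ν)) := by
      intro G
      have h := MP.integral_comp e.measurableEmbedding (fun p => G (e.symm p))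
      simp only [MeasurableEquiv.symm_apply_apply] at h
      exact h
    set w : (Ω 0 × ∀ j, Ω ((0 : Fin (n + 1)).succAbove j)) → ℝ := fun p => u (e.symm p)
      with hwdef
    have hw : Measurable w := hu.comp e.symm.measurable
    have hwC : ∀ p, |w p| ≤ C := fun p => hC _
    have hEnt : entAux (Measure.pi μ) u = entAux ((μ 0).prod (Measure.pi ν)) w := by
      rw [entAux, entAux, hInt (fun x => u x * Real.exp (u x)), hInt (fun x => Real.exp (u x))]
    -- the summand transported to the product space
    set F : ∀ _k : Fin (n + 1), (Ω 0 × ∀ j, Ω ((0 : Fin (n + 1)).succAbove j)) → ℝ :=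
      fun k p => Real.exp (w p) * psi (V k (e.symm p) - w p) with hFdef
    set KF : ℝ := Real.exp C * (Real.exp (D + C) + (D + C) + 1) with hKFdef
    have hFm : ∀ k, Measurable (F k) := fun k =>
      hw.exp.mul (measurable_psi.comp (((hV k).comp e.symm.measurable).sub hw))
    have hFbd : ∀ k p, |F k p| ≤ KF := by
      intro k p
      rw [hFdef, hKFdef]
      simp only
      rw [abs_mul, abs_of_pos (Real.exp_pos _)]
      refine mul_le_mul (Real.exp_le_exp.2 (abs_le.1 (hwC p)).2) (abs_psi_le ?_)
        (abs_nonneg _) (Real.exp_pos _).le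
      exact (abs_sub _ _).trans (add_le_add (hD k _) (hwC p))
    have hFint : ∀ k, Integrable (F k) ((μ 0).prod (Measure.pi ν)) := fun k =>
      my_integrable_of_abs_le (hFm k).aestronglyMeasurable (hFbd k)
    have hFpi : ∀ k, (∫ p, F k p ∂((μ 0).prod (Measure.pi ν)))
        = ∫ x, Real.exp (u x) * psi (V k x - u x) ∂(Measure.pi μ) := fun k =>
      (hInt (fun x => Real.exp (u x) * psi (V k x - u x))).symm
    -- subadditivity
    have hsub := entAux_prod_le (ν := μ 0) (κ := Measure.pi ν) hw hwC
    -- nonempty Ω 0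
    have hne : Nonempty (Ω 0) := by
      by_contra hn
      rw [not_nonempty_iff] at hn
      have h1 := measure_univ (μ := μ 0)
      rw [Set.univ_eq_empty_iff.2 hn, measure_empty] at h1
      exact zero_ne_one h1
    obtain ⟨y₀⟩ := hne
    have hconstV0 : ∀ (y : Ω 0) z, V 0 (e.symm (y, z)) = V 0 (e.symm (y₀, z)) := by
      intro y z
      rw [hsymm y z, hsymm y₀ z]
      calc V 0 (Fin.insertNth 0 y z)
          = V 0 (Function.update (Fin.insertNth 0 y₀ z) 0 y) := by rw [Fin.update_insertNth]
        _ = V 0 (Fin.insertNth 0 y₀ z) := hind 0 _ y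
    -- term 1 : coordinate 0
    have hterm1 : (∫ z, entAux (μ 0) (fun y => w (y, z)) ∂(Measure.pi ν))
        ≤ ∫ z, ∫ y, F 0 (y, z) ∂(μ 0) ∂(Measure.pi ν) := by
      refine integral_mono ?_ ?_ ?_
      · exact my_integrable_of_abs_le (sm_entAux_left hw).aestronglyMeasurable
          (C := C * Real.exp C + Real.exp C * C)
          (fun z => entAux_abs_le (hw.comp measurable_prodMk_right)
            (fun y => hwC (y, z)))
      · refine my_integrable_of_abs_le
          ((StronglyMeasurable.integral_prod_left' (f := F 0)
            (hFm 0).stronglyMeasurable).aestronglyMeasurable) (C := KF) fun z => ?_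
        have := norm_integral_le_of_norm_le_const (μ := μ 0) (f := fun y => F 0 (y, z))
          (C := KF) (ae_of_all _ fun y => by rw [Real.norm_eq_abs]; exact hFbd 0 (y, z))
        simpa using this
      · intro z
        have hlem := entAux_le_of_const (ρ := μ 0) (u := fun y => w (y, z))
          (hw.comp measurable_prodMk_right) (fun y => hwC (y, z)) (V 0 (e.symm (y₀, z)))
        refine hlem.trans (le_of_eq (integral_congr_ae (ae_of_all _ fun y => ?_)))
        rw [hFdef]
        simp only
        rw [hconstV0 y z]
    have hswap1 : (∫ z, ∫ y, F 0 (y, z) ∂(μ 0) ∂(Measure.pi ν))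
        = ∫ p, F 0 p ∂((μ 0).prod (Measure.pi ν)) := by
      rw [integral_prod _ (hFint 0)]
      exact (integral_integral_swap (hFint 0)).symm
    -- term 2 : remaining coordinates, via induction hypothesis
    have hterm2 : (∫ y, entAux (Measure.pi ν) (fun z => w (y, z)) ∂(μ 0))
        ≤ ∫ y, ∑ j : Fin n, ∫ z, F ((0 : Fin (n + 1)).succAbove j) (y, z) ∂(Measure.pi ν)
            ∂(μ 0) := by
      refine integral_mono ?_ ?_ ?_
      · exact my_integrable_of_abs_le (sm_entAux_right hw).aestronglyMeasurable
          (C := C * Real.exp C + Real.exp C * C)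
          (fun y => entAux_abs_le (hw.comp measurable_prodMk_left) (fun z => hwC (y, z)))
      · refine integrable_finset_sum _ fun j _ => ?_
        refine my_integrable_of_abs_le
          ((StronglyMeasurable.integral_prod_right'
            (f := F ((0 : Fin (n + 1)).succAbove j))
            (hFm _).stronglyMeasurable).aestronglyMeasurable) (C := KF) fun y => ?_
        have := norm_integral_le_of_norm_le_const (μ := Measure.pi ν)
          (f := fun z => F ((0 : Fin (n + 1)).succAbove j) (y, z))
          (C := KF) (ae_of_all _ fun z => by rw [Real.norm_eq_abs]; exact hFbd _ (y, z))
        rw [probReal_univ (μ := Measure.pi ν), mul_one] at this; simpa using this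
      · intro y
        have hind' : ∀ (j : Fin n) (z : ∀ i, Ω ((0 : Fin (n + 1)).succAbove i))
            (t : Ω ((0 : Fin (n + 1)).succAbove j)),
            V ((0 : Fin (n + 1)).succAbove j) (e.symm (y, Function.update z j t))
              = V ((0 : Fin (n + 1)).succAbove j) (e.symm (y, z)) := by
          intro j z t
          rw [hsymm, hsymm, insertNth_update_succAbove, hind]
        have := ih (fun j => Ω ((0 : Fin (n + 1)).succAbove j)) (fun j => m _) ν
          (fun j => hP _) (fun z => w (y, z))
          (hw.comp measurable_prodMk_left : Measurable fun z => w (y, z)) C hC0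
          (fun z => hwC (y, z))
          (fun j z => V ((0 : Fin (n + 1)).succAbove j) (e.symm (y, z)))
          (fun j => (hV _).comp (e.symm.measurable.comp measurable_prodMk_left))
          D (fun j z => hD _ _) hind'
        exact this
    have hswap2 : (∫ y, ∑ j : Fin n, ∫ z, F ((0 : Fin (n + 1)).succAbove j) (y, z)
          ∂(Measure.pi ν) ∂(μ 0))
        = ∑ j : Fin n, ∫ p, F ((0 : Fin (n + 1)).succAbove j) p
            ∂((μ 0).prod (Measure.pi ν)) := by
      rw [integral_finset_sum]
      · refine Finset.sum_congr rfl fun j _ => ?_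
        rw [integral_prod _ (hFint _)]
      · intro j _
        refine my_integrable_of_abs_le
          ((StronglyMeasurable.integral_prod_right'
            (f := F ((0 : Fin (n + 1)).succAbove j))
            (hFm _).stronglyMeasurable).aestronglyMeasurable) (C := KF) fun y => ?_
        have := norm_integral_le_of_norm_le_const (μ := Measure.pi ν)
          (f := fun z => F ((0 : Fin (n + 1)).succAbove j) (y, z))
          (C := KF) (ae_of_all _ fun z => by rw [Real.norm_eq_abs]; exact hFbd _ (y, z))
        rw [probReal_univ (μ := Measure.pi ν), mul_one] at this; simpa using this
    -- assemble
    rw [Fin.sum_univ_succAbove (fun k => ∫ x, Real.exp (u x) * psi (V k x - u x)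
      ∂(Measure.pi μ)) 0, hEnt]
    calc entAux ((μ 0).prod (Measure.pi ν)) w
        ≤ (∫ z, entAux (μ 0) (fun y => w (y, z)) ∂(Measure.pi ν))
          + ∫ y, entAux (Measure.pi ν) (fun z => w (y, z)) ∂(μ 0) := hsub
      _ ≤ (∫ p, F 0 p ∂((μ 0).prod (Measure.pi ν)))
          + ∑ j : Fin n, ∫ p, F ((0 : Fin (n + 1)).succAbove j) p
              ∂((μ 0).prod (Measure.pi ν)) := by
          rw [← hswap1, ← hswap2]
          exact add_le_add hterm1 hterm2
      _ = _ := by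
          rw [hFpi 0]
          congr 1
          exact Finset.sum_congr rfl fun j _ => hFpi _

end Main


/-- Modified logarithmic Sobolev inequality. -/
theorem stmt_8 (μ : ∀ k, Measure (Ω k)) [∀ k, IsProbabilityMeasure (μ k)]
    (f : (∀ i, Ω i) → ℝ) (hf : Measurable f) (C : ℝ) (hC : ∀ x, |f x| ≤ C)
    (F : Fin n → (∀ i, Ω i) → ℝ) (hFmeas : ∀ k, Measurable (F k))
    (CF : ℝ) (hCF : ∀ k x, |F k x| ≤ CF)
    (hind : ∀ k x y, F k (Function.update x k y) = F k x) (β : ℝ) :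
    canEntropy (Measure.pi μ) f β
      ≤ thermalExp (Measure.pi μ) β f (fun x => ∑ k, psi (-β * (f x - F k x))) := by
  haveI : IsProbabilityMeasure (Measure.pi μ) := inferInstance
  have hum : Measurable (fun x => β * f x) := hf.const_mul β
  have hC'0 : (0:ℝ) ≤ |β| * |C| := mul_nonneg (abs_nonneg _) (abs_nonneg _)
  have huC : ∀ x, |β * f x| ≤ |β| * |C| := fun x => by
    rw [abs_mul]
    exact mul_le_mul_of_nonneg_left ((hC x).trans (le_abs_self C)) (abs_nonneg β)
  have hVm : ∀ k, Measurable (fun x => β * F k x) := fun k => (hFmeas k).const_mul β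
  have hVD : ∀ k x, |β * F k x| ≤ |β| * |CF| := fun k x => by
    rw [abs_mul]
    exact mul_le_mul_of_nonneg_left ((hCF k x).trans (le_abs_self CF)) (abs_nonneg β)
  have hVind : ∀ (k : Fin n) x y,
      β * F k (Function.update x k y) = β * F k x := fun k x y => by rw [hind]
  have hmain := entMain n Ω _ μ (fun k => inferInstance) (fun x => β * f x) hum
    (|β| * |C|) hC'0 huC (fun k x => β * F k x) hVm (|β| * |CF|) hVD hVind
  set Z := ∫ x, Real.exp (β * f x) ∂(Measure.pi μ) with hZdef
  have hZpos : 0 < Z := exp_integral_pos hum huC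
  have hI1 : (∫ x, (β * f x) * Real.exp (β * f x) ∂(Measure.pi μ))
      = β * ∫ x, f x * Real.exp (β * f x) ∂(Measure.pi μ) := by
    simp_rw [mul_assoc]
    exact integral_const_mul β _
  have hintk : ∀ k : Fin n, Integrable
      (fun x => Real.exp (β * f x) * psi (β * F k x - β * f x)) (Measure.pi μ) := by
    intro k
    refine my_integrable_of_abs_le
      ((hum.exp.mul (measurable_psi.comp ((hVm k).sub hum))).aestronglyMeasurable)
      (C := Real.exp (|β| * |C|) *
        (Real.exp (|β| * |CF| + |β| * |C|) + (|β| * |CF| + |β| * |C|) + 1)) fun x => ?_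
    rw [abs_mul, abs_of_pos (Real.exp_pos _)]
    refine mul_le_mul (Real.exp_le_exp.2 (abs_le.1 (huC x)).2) (abs_psi_le ?_)
      (abs_nonneg _) (Real.exp_pos _).le
    exact (abs_sub _ _).trans (add_le_add (hVD k x) (huC x))
  have hRHSeq : (∑ k, ∫ x, Real.exp (β * f x) * psi (β * F k x - β * f x) ∂(Measure.pi μ))
      = ∫ x, (∑ k, psi (-β * (f x - F k x))) * Real.exp (β * f x) ∂(Measure.pi μ) := by
    rw [← integral_finset_sum _ (fun k _ => hintk k)]
    congr 1
    funext x
    rw [Finset.sum_mul]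
    refine Finset.sum_congr rfl fun k _ => ?_
    rw [show β * F k x - β * f x = -β * (f x - F k x) by ring, mul_comm]
  rw [canEntropy, thermalExp, thermalExp, ← hZdef]
  rw [hRHSeq] at hmain
  have hent : entAux (Measure.pi μ) (fun x => β * f x)
      = β * (∫ x, f x * Real.exp (β * f x) ∂(Measure.pi μ)) - Z * Real.log Z := by
    simp only [entAux]
    rw [hI1, ← hZdef]
  rw [hent] at hmain
  have heq : β * ((∫ x, f x * Real.exp (β * f x) ∂(Measure.pi μ)) / Z) - Real.log Z
      = (β * (∫ x, f x * Real.exp (β * f x) ∂(Measure.pi μ)) - Z * Real.log Z) / Z := by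
    field_simp
  rw [heq]
  exact (div_le_div_iff_of_pos_right hZpos).2 hmain

end Statements
end

section
/- Bounded difference inequality (strong form): for every t > 0, μ{x : f(x) − E[f] > t} ≤ exp( −2t² / ‖R²(f)‖_∞ ), where R²(f) = Σ_{k=1}^n ran_k²(f) is the sum of the squared conditional ranges and ‖·‖_∞ is the essential supremum norm. -/
open MeasureTheory Real

open Filter Set

namespace McD

variable {α : Type*} [MeasurableSpace α]

lemma nonempty_of_prob (ν : Measure α) [IsProbabilityMeasure ν] : Nonempty α := by
  by_contra hne
  rw [not_nonempty_iff] at hne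
  have : ν Set.univ = 1 := measure_univ
  rw [Set.univ_eq_empty_iff.2 hne, measure_empty] at this
  simp at this

lemma integrable_of_bdd {ν : Measure α} [IsFiniteMeasure ν] {φ : α → ℝ}
    (hφ : AEStronglyMeasurable φ ν) {M : ℝ} (h : ∀ x, |φ x| ≤ M) : Integrable φ ν := by
  refine (integrable_const M).mono' hφ (Filter.Eventually.of_forall ?_)
  simpa [Real.norm_eq_abs] using h

lemma young (x y : ℝ) (hx : 0 < x) : x * y ≤ x * Real.log x - x + Real.exp y := by
  have h1 : y - Real.log x + 1 ≤ Real.exp (y - Real.log x) := by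
    have := Real.add_one_le_exp (y - Real.log x); linarith
  have h2 : Real.exp (y - Real.log x) = Real.exp y / x := by
    rw [Real.exp_sub, Real.exp_log hx]
  have h3 : x * (y - Real.log x + 1) ≤ x * (Real.exp y / x) :=
    mul_le_mul_of_nonneg_left (h2 ▸ h1) hx.le
  have h4 : x * (Real.exp y / x) = Real.exp y := by field_simp
  nlinarith [h3, h4]

/-- entropy functional -/
noncomputable def ent (ν : Measure α) (g : α → ℝ) : ℝ :=
  ∫ x, g x * Real.log (g x) ∂ν - (∫ x, g x ∂ν) * Real.log (∫ x, g x ∂ν)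

lemma abs_le_of_Icc {c C x : ℝ} (h1 : c ≤ x) (h2 : x ≤ C) : |x| ≤ max |c| |C| := by
  rw [abs_le]; constructor
  · have := neg_abs_le c; linarith [le_max_left |c| |C|]
  · have := le_abs_self C; linarith [le_max_right |c| |C|]

lemma abs_log_le {c C x : ℝ} (hc : 0 < c) (h1 : c ≤ x) (h2 : x ≤ C) :
    |Real.log x| ≤ |Real.log c| + |Real.log C| := by
  have hx : 0 < x := lt_of_lt_of_le hc h1
  have l1 : Real.log c ≤ Real.log x := Real.log_le_log hc h1
  have l2 : Real.log x ≤ Real.log C := Real.log_le_log hx h2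
  rw [abs_le]
  constructor
  · have := neg_abs_le (Real.log c); linarith [abs_nonneg (Real.log C)]
  · have := le_abs_self (Real.log C); linarith [abs_nonneg (Real.log c)]

lemma abs_mul_log_le {c C x : ℝ} (hc : 0 < c) (h1 : c ≤ x) (h2 : x ≤ C) :
    |x * Real.log x| ≤ C * (|Real.log c| + |Real.log C|) := by
  have hx : 0 < x := lt_of_lt_of_le hc h1
  rw [abs_mul]
  have : |x| ≤ C := by rw [abs_of_pos hx]; exact h2
  exact mul_le_mul this (abs_log_le hc h1 h2) (abs_nonneg _) (le_trans hx.le h2)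

section Duality

variable {ν : Measure α} [IsProbabilityMeasure ν] {g : α → ℝ} {c C : ℝ}

lemma integrable_self (hg : Measurable g) (hgb : ∀ x, g x ∈ Set.Icc c C) :
    Integrable g ν :=
  integrable_of_bdd hg.aestronglyMeasurable (M := max |c| |C|)
    (fun x => abs_le_of_Icc (hgb x).1 (hgb x).2)

lemma integral_mem_Icc (hg : Measurable g) (hgb : ∀ x, g x ∈ Set.Icc c C) :
    (∫ x, g x ∂ν) ∈ Set.Icc c C := by
  constructor
  · have : (∫ _x, c ∂ν) ≤ ∫ x, g x ∂ν :=
      integral_mono (integrable_const c) (integrable_self hg hgb) (fun x => (hgb x).1)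
    simpa using this
  · have : (∫ x, g x ∂ν) ≤ ∫ _x, C ∂ν :=
      integral_mono (integrable_self hg hgb) (integrable_const C) (fun x => (hgb x).2)
    simpa using this

lemma integrable_mul_log (hc : 0 < c) (hg : Measurable g) (hgb : ∀ x, g x ∈ Set.Icc c C) :
    Integrable (fun x => g x * Real.log (g x)) ν :=
  integrable_of_bdd (hg.mul hg.log).aestronglyMeasurable
    (M := C * (|Real.log c| + |Real.log C|))
    (fun x => abs_mul_log_le hc (hgb x).1 (hgb x).2)

/-- Duality: if `∫ e^u ≤ 1` then `∫ g u ≤ Ent g`. -/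
lemma entropy_duality (hg : Measurable g) {u : α → ℝ} (hu : Measurable u) {M : ℝ} (hc : 0 < c)
    (hgb : ∀ x, g x ∈ Set.Icc c C) (hub : ∀ x, |u x| ≤ M)
    (heu : ∫ x, Real.exp (u x) ∂ν ≤ 1) :
    ∫ x, g x * u x ∂ν ≤ ent ν g := by
  set G : ℝ := ∫ x, g x ∂ν with hGdef
  obtain ⟨hGc, hGC⟩ := integral_mem_Icc (ν := ν) hg hgb
  have hGpos : 0 < G := lt_of_lt_of_le hc hGc
  have hpt : ∀ x, g x * u x ≤
      g x * Real.log (g x) - Real.log G * g x - g x + G * Real.exp (u x) := by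
    intro x
    have hgx : 0 < g x := lt_of_lt_of_le hc (hgb x).1
    have hy := young (g x / G) (u x) (div_pos hgx hGpos)
    rw [Real.log_div hgx.ne' hGpos.ne'] at hy
    have h3 := mul_le_mul_of_nonneg_left hy hGpos.le
    calc g x * u x = G * (g x / G * u x) := by field_simp
    _ ≤ G * (g x / G * (Real.log (g x) - Real.log G) - g x / G + Real.exp (u x)) := h3
    _ = g x * Real.log (g x) - Real.log G * g x - g x + G * Real.exp (u x) := by
        field_simp
  have K := max |c| |C|
  have igu : Integrable (fun x => g x * u x) ν :=
    integrable_of_bdd (hg.mul hu).aestronglyMeasurable (M := max |c| |C| * M)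
      (fun x => by
        rw [abs_mul]
        exact mul_le_mul (abs_le_of_Icc (hgb x).1 (hgb x).2) (hub x) (abs_nonneg _)
          (le_max_of_le_right (abs_nonneg C)))
  have igl := integrable_mul_log (ν := ν) hc hg hgb
  have ig := integrable_self (ν := ν) hg hgb
  have ie : Integrable (fun x => Real.exp (u x)) ν :=
    integrable_of_bdd (hu.exp).aestronglyMeasurable (M := Real.exp M)
      (fun x => by
        rw [abs_of_pos (Real.exp_pos _)]
        exact Real.exp_le_exp.2 (le_trans (le_abs_self _) (hub x)))
  have i2 : Integrable (fun x => Real.log G * g x) ν := ig.const_mul _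
  have i3 : Integrable (fun x => g x * Real.log (g x) - Real.log G * g x) ν := igl.sub i2
  have i4 : Integrable (fun x => g x * Real.log (g x) - Real.log G * g x - g x) ν := i3.sub ig
  have i5 : Integrable (fun x => G * Real.exp (u x)) ν := ie.const_mul _
  have hint : ∫ x, g x * u x ∂ν ≤
      ∫ x, (g x * Real.log (g x) - Real.log G * g x - g x + G * Real.exp (u x)) ∂ν := by
    refine integral_mono igu ?_ hpt
    exact i4.add i5
  rw [integral_add i4 i5, integral_sub i3 ig, integral_sub igl i2,
    integral_const_mul, integral_const_mul] at hint
  have : G * ∫ x, Real.exp (u x) ∂ν ≤ G := by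
    calc G * ∫ x, Real.exp (u x) ∂ν ≤ G * 1 := mul_le_mul_of_nonneg_left heu hGpos.le
    _ = G := mul_one G
  rw [ent]
  rw [← hGdef]
  linarith [hint]

end Duality

end McD

namespace McD
variable {α : Type*} [MeasurableSpace α]

section Conv

variable {γ : Type*} [MeasurableSpace γ] {ν₁ : Measure α} {ν₂ : Measure γ}
  [IsProbabilityMeasure ν₁] [IsProbabilityMeasure ν₂] {H : α × γ → ℝ} {c C : ℝ}

lemma ent_abs_le (hc : 0 < c) {g : α → ℝ} (hg : Measurable g)
    (hgb : ∀ x, g x ∈ Set.Icc c C) :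
    |ent ν₁ g| ≤ 2 * (C * (|Real.log c| + |Real.log C|)) := by
  rw [ent]
  have h1 : |∫ x, g x * Real.log (g x) ∂ν₁| ≤ C * (|Real.log c| + |Real.log C|) := by
    rw [← Real.norm_eq_abs]
    calc ‖∫ x, g x * Real.log (g x) ∂ν₁‖ ≤ C * (|Real.log c| + |Real.log C|) * (ν₁ univ).toReal :=
      norm_integral_le_of_norm_le_const (Filter.Eventually.of_forall fun x => by
        rw [Real.norm_eq_abs]; exact abs_mul_log_le hc (hgb x).1 (hgb x).2)
    _ = C * (|Real.log c| + |Real.log C|) := by simp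
  have h2 : |(∫ x, g x ∂ν₁) * Real.log (∫ x, g x ∂ν₁)| ≤ C * (|Real.log c| + |Real.log C|) := by
    obtain ⟨ha, hb⟩ := integral_mem_Icc (ν := ν₁) hg hgb
    exact abs_mul_log_le hc ha hb
  calc |∫ x, g x * Real.log (g x) ∂ν₁ - (∫ x, g x ∂ν₁) * Real.log (∫ x, g x ∂ν₁)|
      ≤ |∫ x, g x * Real.log (g x) ∂ν₁| + |(∫ x, g x ∂ν₁) * Real.log (∫ x, g x ∂ν₁)| :=
        abs_sub _ _
  _ ≤ 2 * (C * (|Real.log c| + |Real.log C|)) := by linarith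

/-- Convexity of entropy under mixtures. -/
lemma ent_integral_le (hH : Measurable H) (hc : 0 < c) (hb : ∀ p, H p ∈ Set.Icc c C) :
    ent ν₁ (fun x => ∫ w, H (x, w) ∂ν₂) ≤ ∫ w, ent ν₁ (fun x => H (x, w)) ∂ν₂ := by
  set G₀ : α → ℝ := fun x => ∫ w, H (x, w) ∂ν₂ with hG₀def
  have hHx : ∀ w, Measurable (fun x => H (x, w)) := fun w =>
    hH.comp (measurable_id.prodMk measurable_const)
  have hHw : ∀ x, Measurable (fun w => H (x, w)) := fun x =>
    hH.comp (measurable_const.prodMk measurable_id)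
  have hG₀ : Measurable G₀ := by
    have := hH.stronglyMeasurable.integral_prod_right' (ν := ν₂)
    exact this.measurable
  have hG₀b : ∀ x, G₀ x ∈ Set.Icc c C := fun x =>
    integral_mem_Icc (ν := ν₂) (hHw x) (fun w => hb (x, w))
  set T : ℝ := ∫ x, G₀ x ∂ν₁ with hTdef
  obtain ⟨hTc, hTC⟩ := integral_mem_Icc (ν := ν₁) hG₀ hG₀b
  have hTpos : 0 < T := lt_of_lt_of_le hc hTc
  set u : α → ℝ := fun x => Real.log (G₀ x) - Real.log T with hudef
  have hu : Measurable u := (hG₀.log).sub measurable_const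
  set M : ℝ := 2 * (|Real.log c| + |Real.log C|) with hMdef
  have hub : ∀ x, |u x| ≤ M := by
    intro x
    have h1 := abs_log_le hc (hG₀b x).1 (hG₀b x).2
    have h2 := abs_log_le hc hTc hTC
    calc |u x| ≤ |Real.log (G₀ x)| + |Real.log T| := abs_sub _ _
    _ ≤ M := by rw [hMdef]; linarith
  have heu : ∫ x, Real.exp (u x) ∂ν₁ ≤ 1 := by
    have hexp : ∀ x, Real.exp (u x) = G₀ x / T := by
      intro x
      rw [hudef]
      rw [Real.exp_sub, Real.exp_log (lt_of_lt_of_le hc (hG₀b x).1),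
        Real.exp_log hTpos]
    calc ∫ x, Real.exp (u x) ∂ν₁ = ∫ x, G₀ x / T ∂ν₁ := by
          exact integral_congr_ae (Filter.Eventually.of_forall hexp)
    _ = T / T := by rw [integral_div, ← hTdef]
    _ = 1 := div_self hTpos.ne'
    _ ≤ 1 := le_refl 1
  -- identity: ent ν₁ G₀ = ∫ G₀ u
  have hid : ent ν₁ G₀ = ∫ x, G₀ x * u x ∂ν₁ := by
    have : ∀ x, G₀ x * u x = G₀ x * Real.log (G₀ x) - Real.log T * G₀ x := by
      intro x; rw [hudef]; ring
    rw [integral_congr_ae (Filter.Eventually.of_forall this),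
      integral_sub (integrable_mul_log hc hG₀ hG₀b) ((integrable_self hG₀ hG₀b).const_mul _),
      integral_const_mul, ent, ← hTdef]
    ring
  -- Fubini
  have hHu : Measurable (fun p : α × γ => H p * u p.1) := hH.mul (hu.comp measurable_fst)
  have hHub : ∀ p : α × γ, |H p * u p.1| ≤ max |c| |C| * M := by
    intro p
    rw [abs_mul]
    exact mul_le_mul (abs_le_of_Icc (hb p).1 (hb p).2) (hub p.1) (abs_nonneg _)
      (le_max_of_le_right (abs_nonneg C))
  have hint_prod : Integrable (fun p : α × γ => H p * u p.1) (ν₁.prod ν₂) :=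
    integrable_of_bdd hHu.aestronglyMeasurable hHub
  have hfub : ∫ x, G₀ x * u x ∂ν₁ = ∫ w, ∫ x, H (x, w) * u x ∂ν₁ ∂ν₂ := by
    have h1 : ∀ x, G₀ x * u x = ∫ w, H (x, w) * u x ∂ν₂ := by
      intro x
      rw [hG₀def]
      simp only []
      rw [← integral_mul_const]
    rw [integral_congr_ae (Filter.Eventually.of_forall h1)]
    exact integral_integral_swap (f := fun x w => H (x, w) * u x) hint_prod
  -- per-w duality
  have hdw : ∀ w, ∫ x, H (x, w) * u x ∂ν₁ ≤ ent ν₁ (fun x => H (x, w)) := fun w =>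
    entropy_duality (hHx w) hu hc (fun x => hb (x, w)) hub heu
  -- integrate over w
  have hmeas_lhs : Measurable (fun w => ∫ x, H (x, w) * u x ∂ν₁) := by
    have := hHu.stronglyMeasurable.integral_prod_left' (μ := ν₁)
    exact this.measurable
  have hlhs_bdd : ∀ w, |∫ x, H (x, w) * u x ∂ν₁| ≤ max |c| |C| * M := by
    intro w
    rw [← Real.norm_eq_abs]
    calc ‖∫ x, H (x, w) * u x ∂ν₁‖ ≤ max |c| |C| * M * (ν₁ univ).toReal :=
      norm_integral_le_of_norm_le_const (Filter.Eventually.of_forall fun x => by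
        rw [Real.norm_eq_abs]; exact hHub (x, w))
    _ = max |c| |C| * M := by simp
  have hmeas_rhs : Measurable (fun w => ent ν₁ (fun x => H (x, w))) := by
    have h1 : Measurable (fun w => ∫ x, H (x, w) * Real.log (H (x, w)) ∂ν₁) := by
      have : Measurable (fun p : α × γ => H p * Real.log (H p)) := hH.mul hH.log
      exact (this.stronglyMeasurable.integral_prod_left' (μ := ν₁)).measurable
    have h2 : Measurable (fun w => ∫ x, H (x, w) ∂ν₁) :=
      (hH.stronglyMeasurable.integral_prod_left' (μ := ν₁)).measurable
    exact h1.sub (h2.mul h2.log)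
  have hrhs_bdd : ∀ w, |ent ν₁ (fun x => H (x, w))| ≤ 2 * (C * (|Real.log c| + |Real.log C|)) :=
    fun w => ent_abs_le hc (hHx w) (fun x => hb (x, w))
  have hfinal : ∫ w, ∫ x, H (x, w) * u x ∂ν₁ ∂ν₂ ≤ ∫ w, ent ν₁ (fun x => H (x, w)) ∂ν₂ :=
    integral_mono (integrable_of_bdd hmeas_lhs.aestronglyMeasurable hlhs_bdd)
      (integrable_of_bdd hmeas_rhs.aestronglyMeasurable hrhs_bdd) hdw
  rw [hid, hfub]
  exact hfinal

end Conv
end McD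

namespace McD
variable {α : Type*} [MeasurableSpace α]

section Calculus

/-- partition function -/
noncomputable def Z (ν : Measure α) (g : α → ℝ) (s : ℝ) : ℝ := ∫ x, Real.exp (s * g x) ∂ν
noncomputable def Z₁ (ν : Measure α) (g : α → ℝ) (s : ℝ) : ℝ := ∫ x, g x * Real.exp (s * g x) ∂ν
noncomputable def Z₂ (ν : Measure α) (g : α → ℝ) (s : ℝ) : ℝ :=
  ∫ x, g x ^ 2 * Real.exp (s * g x) ∂ν

variable {ν : Measure α} [IsProbabilityMeasure ν] {g : α → ℝ} {a b : ℝ}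

lemma abs_exp_mul_le {K s : ℝ} (hK : ∀ x, |g x| ≤ K) (x : α) {s' : ℝ} (hs : |s'| ≤ s) :
    |Real.exp (s' * g x)| ≤ Real.exp (s * K) := by
  rw [abs_of_pos (Real.exp_pos _)]
  apply Real.exp_le_exp.2
  calc s' * g x ≤ |s' * g x| := le_abs_self _
  _ = |s'| * |g x| := abs_mul _ _
  _ ≤ s * K := mul_le_mul hs (hK x) (abs_nonneg _) (le_trans (abs_nonneg s') hs)

lemma integrable_exp_mul (hg : Measurable g) {K : ℝ} (hK : ∀ x, |g x| ≤ K) (s : ℝ) :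
    Integrable (fun x => Real.exp (s * g x)) ν :=
  integrable_of_bdd ((hg.const_mul s).exp).aestronglyMeasurable
    (M := Real.exp (|s| * K)) (fun x => abs_exp_mul_le hK x (le_refl _))

lemma Z_pos (hg : Measurable g) {K : ℝ} (hK : ∀ x, |g x| ≤ K) (s : ℝ) : 0 < Z ν g s := by
  have h1 : ∀ x, Real.exp (-(|s| * K)) ≤ Real.exp (s * g x) := by
    intro x
    apply Real.exp_le_exp.2
    have : |s * g x| ≤ |s| * K := by
      rw [abs_mul]
      exact mul_le_mul_of_nonneg_left (hK x) (abs_nonneg s)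
    have := neg_abs_le (s * g x)
    linarith
  have h2 : (∫ _x, Real.exp (-(|s| * K)) ∂ν) ≤ Z ν g s :=
    integral_mono (integrable_const _) (integrable_exp_mul hg hK s) h1
  have h3 : (∫ _x, Real.exp (-(|s| * K)) ∂ν) = Real.exp (-(|s| * K)) := by simp
  rw [h3] at h2
  exact lt_of_lt_of_le (Real.exp_pos _) h2

lemma hasDerivAt_Z (hg : Measurable g) {K : ℝ} (hK : ∀ x, |g x| ≤ K) (hK0 : 0 ≤ K) (s₀ : ℝ) :
    HasDerivAt (Z ν g) (Z₁ ν g s₀) s₀ := by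
  have key := hasDerivAt_integral_of_dominated_loc_of_deriv_le (μ := ν)
    (F := fun s x => Real.exp (s * g x)) (F' := fun s x => Real.exp (s * g x) * g x)
    (x₀ := s₀) (bound := fun _ => Real.exp ((|s₀| + 1) * K) * K) (s := Metric.ball s₀ 1) (Metric.ball_mem_nhds s₀ one_pos)
    (Filter.Eventually.of_forall fun s => ((hg.const_mul s).exp).aestronglyMeasurable)
    (integrable_exp_mul hg hK s₀)
    (((hg.const_mul s₀).exp.mul hg).aestronglyMeasurable)
    (Filter.Eventually.of_forall fun x => fun s hs => by
      rw [Real.norm_eq_abs, abs_mul]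
      have hsb : |s| ≤ |s₀| + 1 := by
        have := abs_sub_abs_le_abs_sub s s₀
        have hd : |s - s₀| < 1 := by simpa [Real.dist_eq] using hs
        linarith
      exact mul_le_mul (abs_exp_mul_le hK x hsb) (hK x) (abs_nonneg _) (le_of_lt (Real.exp_pos _)))
    (integrable_const _)
    (Filter.Eventually.of_forall fun x => fun s _ => by
      simpa using ((hasDerivAt_mul_const (g x)).exp (x := s)))
  -- key.2 : HasDerivAt (fun s => ∫ exp (s * g x)) (∫ exp (s₀ * g x) * g x) s₀
  have heq : (∫ x, Real.exp (s₀ * g x) * g x ∂ν) = Z₁ ν g s₀ := by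
    rw [Z₁]
    congr 1
    funext x
    ring
  rw [← heq]
  exact key.2

lemma hasDerivAt_Z₁ (hg : Measurable g) {K : ℝ} (hK : ∀ x, |g x| ≤ K) (hK0 : 0 ≤ K) (s₀ : ℝ) :
    HasDerivAt (Z₁ ν g) (Z₂ ν g s₀) s₀ := by
  have key := hasDerivAt_integral_of_dominated_loc_of_deriv_le (μ := ν)
    (F := fun s x => g x * Real.exp (s * g x))
    (F' := fun s x => g x * (Real.exp (s * g x) * g x))
    (x₀ := s₀) (bound := fun _ => K * (Real.exp ((|s₀| + 1) * K) * K)) (s := Metric.ball s₀ 1) (Metric.ball_mem_nhds s₀ one_pos)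
    (Filter.Eventually.of_forall fun s => (hg.mul ((hg.const_mul s).exp)).aestronglyMeasurable)
    (integrable_of_bdd (hg.mul ((hg.const_mul s₀).exp)).aestronglyMeasurable
      (M := K * Real.exp (|s₀| * K)) (fun x => by
        rw [abs_mul]
        exact mul_le_mul (hK x) (abs_exp_mul_le hK x (le_refl _)) (abs_nonneg _) hK0))
    ((hg.mul ((hg.const_mul s₀).exp.mul hg)).aestronglyMeasurable)
    (Filter.Eventually.of_forall fun x => fun s hs => by
      rw [Real.norm_eq_abs, abs_mul, abs_mul]
      have hsb : |s| ≤ |s₀| + 1 := by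
        have := abs_sub_abs_le_abs_sub s s₀
        have hd : |s - s₀| < 1 := by simpa [Real.dist_eq] using hs
        linarith
      exact mul_le_mul (hK x)
        (mul_le_mul (abs_exp_mul_le hK x hsb) (hK x) (abs_nonneg _) (le_of_lt (Real.exp_pos _)))
        (by positivity) hK0)
    (integrable_const _)
    (Filter.Eventually.of_forall fun x => fun s _ => by
      simpa using (((hasDerivAt_mul_const (g x)).exp (x := s)).const_mul (g x)))
  have heq : (∫ x, g x * (Real.exp (s₀ * g x) * g x) ∂ν) = Z₂ ν g s₀ := by
    rw [Z₂]
    congr 1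
    funext x
    ring
  rw [← heq]
  exact key.2

lemma popoviciu (hg : Measurable g) (hgb : ∀ x, g x ∈ Set.Icc a b) (s : ℝ) :
    Z₂ ν g s * Z ν g s - (Z₁ ν g s) ^ 2 ≤ (b - a) ^ 2 / 4 * (Z ν g s) ^ 2 := by
  have hK : ∀ x, |g x| ≤ max |a| |b| := fun x => abs_le_of_Icc (hgb x).1 (hgb x).2
  have iZ := integrable_exp_mul (ν := ν) hg hK s
  have iZ1 : Integrable (fun x => g x * Real.exp (s * g x)) ν :=
    integrable_of_bdd (hg.mul ((hg.const_mul s).exp)).aestronglyMeasurable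
      (M := max |a| |b| * Real.exp (|s| * max |a| |b|)) (fun x => by
        rw [abs_mul]
        exact mul_le_mul (hK x) (abs_exp_mul_le hK x (le_refl _)) (abs_nonneg _)
          (le_max_of_le_right (abs_nonneg b)))
  have iZ2 : Integrable (fun x => g x ^ 2 * Real.exp (s * g x)) ν :=
    integrable_of_bdd ((hg.pow_const 2).mul ((hg.const_mul s).exp)).aestronglyMeasurable
      (M := max |a| |b| ^ 2 * Real.exp (|s| * max |a| |b|)) (fun x => by
        rw [abs_mul]
        refine mul_le_mul ?_ (abs_exp_mul_le hK x (le_refl _)) (abs_nonneg _) (by positivity)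
        rw [abs_pow]
        exact pow_le_pow_left₀ (abs_nonneg _) (hK x) 2)
  have key : 0 ≤ ∫ x, (b - g x) * (g x - a) * Real.exp (s * g x) ∂ν := by
    apply integral_nonneg
    intro x
    have h1 : 0 ≤ (b - g x) * (g x - a) :=
      mul_nonneg (by linarith [(hgb x).2]) (by linarith [(hgb x).1])
    positivity
  have hexpand : ∫ x, (b - g x) * (g x - a) * Real.exp (s * g x) ∂ν =
      (a + b) * Z₁ ν g s - a * b * Z ν g s - Z₂ ν g s := by
    have : ∀ x, (b - g x) * (g x - a) * Real.exp (s * g x) =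
        (a + b) * (g x * Real.exp (s * g x)) - a * b * Real.exp (s * g x)
          - g x ^ 2 * Real.exp (s * g x) := by
      intro x; ring
    have j1 : Integrable (fun x => (a + b) * (g x * Real.exp (s * g x))) ν := iZ1.const_mul _
    have j2 : Integrable (fun x => a * b * Real.exp (s * g x)) ν := iZ.const_mul _
    have j3 : Integrable (fun x => (a + b) * (g x * Real.exp (s * g x))
        - a * b * Real.exp (s * g x)) ν := j1.sub j2
    rw [integral_congr_ae (Filter.Eventually.of_forall this),
      integral_sub j3 iZ2, integral_sub j1 j2, integral_const_mul, integral_const_mul]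
    rw [Z, Z₁, Z₂]
  rw [hexpand] at key
  have hZ1a : a * Z ν g s ≤ Z₁ ν g s := by
    have : ∀ x, a * Real.exp (s * g x) ≤ g x * Real.exp (s * g x) := fun x =>
      mul_le_mul_of_nonneg_right (hgb x).1 (le_of_lt (Real.exp_pos _))
    have h := integral_mono (iZ.const_mul a) iZ1 this
    rwa [integral_const_mul] at h
  have hZ1b : Z₁ ν g s ≤ b * Z ν g s := by
    have : ∀ x, g x * Real.exp (s * g x) ≤ b * Real.exp (s * g x) := fun x =>
      mul_le_mul_of_nonneg_right (hgb x).2 (le_of_lt (Real.exp_pos _))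
    have h := integral_mono iZ1 (iZ.const_mul b) this
    rwa [integral_const_mul] at h
  have hZpos := Z_pos (ν := ν) hg hK s
  nlinarith [sq_nonneg (Z₁ ν g s - (a + b) / 2 * Z ν g s), sq_nonneg (Z ν g s)]

/-- Hoeffding entropy bound: `Ent(e^{sg}) ≤ s²(b-a)²/8 · Z(s)` for `s ≥ 0`. -/
lemma hoeffding_ent (hg : Measurable g) (hgb : ∀ x, g x ∈ Set.Icc a b) {s : ℝ} (hs : 0 ≤ s) :
    s * Z₁ ν g s - Z ν g s * Real.log (Z ν g s) ≤ s ^ 2 * (b - a) ^ 2 / 8 * Z ν g s := by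
  have hK : ∀ x, |g x| ≤ max |a| |b| := fun x => abs_le_of_Icc (hgb x).1 (hgb x).2
  have hK0 : (0:ℝ) ≤ max |a| |b| := le_max_of_le_right (abs_nonneg b)
  set r8 : ℝ := (b - a) ^ 2 / 8 with hr8
  set η : ℝ → ℝ := fun u => u * (Z₁ ν g u / Z ν g u) - Real.log (Z ν g u) - u ^ 2 * r8
    with hηdef
  have hZpos : ∀ u, 0 < Z ν g u := fun u => Z_pos (ν := ν) hg hK u
  have hderiv : ∀ u, HasDerivAt η
      ((1 * (Z₁ ν g u / Z ν g u) +
        u * ((Z₂ ν g u * Z ν g u - Z₁ ν g u * Z₁ ν g u) / Z ν g u ^ 2)) -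
       Z₁ ν g u / Z ν g u - 2 * u ^ 1 * r8) u := by
    intro u
    have hZ := hasDerivAt_Z (ν := ν) hg hK hK0 u
    have hZ1 := hasDerivAt_Z₁ (ν := ν) hg hK hK0 u
    have hq : HasDerivAt (fun u => Z₁ ν g u / Z ν g u)
        ((Z₂ ν g u * Z ν g u - Z₁ ν g u * Z₁ ν g u) / Z ν g u ^ 2) u :=
      hZ1.div hZ (hZpos u).ne'
    have hlog : HasDerivAt (fun u => Real.log (Z ν g u)) (Z₁ ν g u / Z ν g u) u := by
      have := hZ.log (hZpos u).ne'
      exact this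
    have hpow : HasDerivAt (fun u : ℝ => u ^ 2 * r8) (2 * u ^ 1 * r8) u := by
      have := (hasDerivAt_pow 2 u).mul_const r8
      simpa using this
    exact (((hasDerivAt_id u).mul hq).sub hlog).sub hpow
  have hanti : AntitoneOn η (Set.Ici 0) := by
    apply antitoneOn_of_deriv_nonpos (convex_Ici 0)
    · exact fun u _ => ((hderiv u).continuousAt).continuousWithinAt
    · intro u hu
      exact ((hderiv u).differentiableAt).differentiableWithinAt
    · intro u hu
      rw [interior_Ici] at hu
      rw [(hderiv u).deriv]
      have hpop := popoviciu (ν := ν) hg hgb u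
      have hq' : (Z₂ ν g u * Z ν g u - Z₁ ν g u * Z₁ ν g u) / Z ν g u ^ 2 ≤ (b - a) ^ 2 / 4 := by
        rw [div_le_iff₀ (pow_pos (hZpos u) 2)]
        nlinarith [hpop]
      have hupos : 0 < u := hu
      have hle : u * ((Z₂ ν g u * Z ν g u - Z₁ ν g u * Z₁ ν g u) / Z ν g u ^ 2) ≤
          u * ((b - a) ^ 2 / 4) := mul_le_mul_of_nonneg_left hq' hupos.le
      have h45 : (2:ℝ) * u ^ 1 * r8 = u * ((b - a) ^ 2 / 4) := by rw [hr8]; ring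
      linarith [hle, h45]
  have hZ0 : Z ν g 0 = 1 := by
    rw [Z]
    simp
  have hη0 : η 0 = 0 := by
    rw [hηdef]
    simp [hZ0]
  have hηs : η s ≤ 0 := by
    rw [← hη0]
    exact hanti (Set.self_mem_Ici) hs hs
  rw [hηdef] at hηs
  simp only [] at hηs
  have hZs := hZpos s
  have h2 : s * (Z₁ ν g s / Z ν g s) - Real.log (Z ν g s) ≤ s ^ 2 * r8 := by linarith
  have h3 := mul_le_mul_of_nonneg_right h2 hZs.le
  rw [hr8] at h3
  calc s * Z₁ ν g s - Z ν g s * Real.log (Z ν g s)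
      = (s * (Z₁ ν g s / Z ν g s) - Real.log (Z ν g s)) * Z ν g s := by
        field_simp
  _ ≤ s ^ 2 * ((b - a) ^ 2 / 8) * Z ν g s := h3
  _ = s ^ 2 * (b - a) ^ 2 / 8 * Z ν g s := by ring
end Calculus
end McD

namespace McD

section PiHelpers

universe u

lemma insertNth_update_succAbove {n : ℕ} {Ω : Fin (n + 1) → Type u}
    (i : Fin (n + 1)) (w : Ω i) (r : ∀ j, Ω (i.succAbove j)) (j : Fin n)
    (z : Ω (i.succAbove j)) :
    i.insertNth w (Function.update r j z) =
      Function.update (i.insertNth w r) (i.succAbove j) z := by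
  ext l
  rcases eq_or_ne l i with rfl | hl
  · rw [Function.update_of_ne (Fin.succAbove_ne l j).symm, Fin.insertNth_apply_same,
      Fin.insertNth_apply_same]
  · obtain ⟨l', rfl⟩ := Fin.exists_succAbove_eq hl
    rcases eq_or_ne l' j with rfl | hlj
    · rw [Fin.insertNth_apply_succAbove, Function.update_self, Function.update_self]
    · rw [Fin.insertNth_apply_succAbove, Function.update_of_ne hlj,
        Function.update_of_ne (fun h => hlj (Fin.succAbove_right_injective h)),
        Fin.insertNth_apply_succAbove]

variable {n : ℕ} {Ω : Fin n → Type u} [∀ k, MeasurableSpace (Ω k)]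
  (μ : ∀ k, Measure (Ω k)) [∀ k, IsProbabilityMeasure (μ k)]

/-- measurability of conditional integrals -/
lemma measurable_condInt (k : Fin n) {φ : (∀ i, Ω i) → ℝ} (hφ : Measurable φ) :
    Measurable (fun x => ∫ y, φ (Function.update x k y) ∂(μ k)) := by
  have h : Measurable (fun p : (∀ i, Ω i) × Ω k => φ (Function.update p.1 k p.2)) :=
    hφ.comp measurable_update'
  exact (h.stronglyMeasurable.integral_prod_right').measurable

/-- measurability of conditional entropy -/
lemma measurable_condEnt (k : Fin n) {φ : (∀ i, Ω i) → ℝ} (hφ : Measurable φ) :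
    Measurable (fun x => ent (μ k) (fun y => φ (Function.update x k y))) := by
  have h1 := measurable_condInt μ k (hφ.mul hφ.log)
  have h2 := measurable_condInt μ k hφ
  exact h1.sub (h2.mul h2.log)

/-- Fubini for a single coordinate. -/
lemma integral_update_eq {n : ℕ} {Ω : Fin (n + 1) → Type u} [∀ k, MeasurableSpace (Ω k)]
    (μ : ∀ k, Measure (Ω k)) [∀ k, IsProbabilityMeasure (μ k)]
    (k : Fin (n + 1)) {φ : (∀ i, Ω i) → ℝ} (hφ : Measurable φ) {M : ℝ}
    (hb : ∀ x, |φ x| ≤ M) :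
    ∫ x, (∫ y, φ (Function.update x k y) ∂(μ k)) ∂(Measure.pi μ)
      = ∫ x, φ x ∂(Measure.pi μ) := by
  set e := MeasurableEquiv.piFinSuccAbove Ω k with hedef
  have mp := measurePreserving_piFinSuccAbove μ k
  set π' : Measure (∀ j, Ω (k.succAbove j)) := Measure.pi (fun j => μ (k.succAbove j)) with hπ'def
  set P : Measure (Ω k × ∀ j, Ω (k.succAbove j)) := (μ k).prod π' with hPdef
  have msymm : MeasurePreserving e.symm P (Measure.pi μ) := mp.symm e
  have hesymm : ∀ p : Ω k × (∀ j, Ω (k.succAbove j)), e.symm p = k.insertNth p.1 p.2 := by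
    intro p
    rw [hedef, MeasurableEquiv.piFinSuccAbove_symm_apply]
    rfl
  have hG : Measurable (fun p : Ω k × (∀ j, Ω (k.succAbove j)) => φ (e.symm p)) :=
    hφ.comp e.symm.measurable
  -- lhs
  have lhs1 : ∫ x, (∫ y, φ (Function.update x k y) ∂(μ k)) ∂(Measure.pi μ)
      = ∫ p, (∫ y, φ (k.insertNth y p.2) ∂(μ k)) ∂P := by
    rw [← msymm.integral_comp e.symm.measurableEmbedding]
    congr 1
    funext p
    rw [hesymm]
    congr 1
    funext y
    rw [Fin.update_insertNth]
  have hGin : Measurable (fun p : Ω k × (∀ j, Ω (k.succAbove j)) => φ (k.insertNth p.1 p.2)) := by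
    have : (fun p : Ω k × (∀ j, Ω (k.succAbove j)) => φ (k.insertNth p.1 p.2)) =
        fun p => φ (e.symm p) := by
      funext p; rw [hesymm]
    rw [this]; exact hG
  have hswap : Measurable (fun q : (∀ j, Ω (k.succAbove j)) × Ω k => φ (k.insertNth q.2 q.1)) :=
    hGin.comp (measurable_snd.prodMk measurable_fst)
  have hmeasInner : Measurable (fun r : ∀ j, Ω (k.succAbove j) =>
      ∫ y, φ (k.insertNth y r) ∂(μ k)) :=
    (hswap.stronglyMeasurable.integral_prod_right').measurable
  have hbd : ∀ r : ∀ j, Ω (k.succAbove j), |∫ y, φ (k.insertNth y r) ∂(μ k)| ≤ M := by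
    intro r
    rw [← Real.norm_eq_abs]
    calc ‖∫ y, φ (k.insertNth y r) ∂(μ k)‖ ≤ M * ((μ k) Set.univ).toReal :=
      norm_integral_le_of_norm_le_const (Filter.Eventually.of_forall fun y => by
        rw [Real.norm_eq_abs]; exact hb _)
    _ = M := by simp
  have hMnn : 0 ≤ M := le_trans (abs_nonneg _) (hb (e.symm (Classical.choice
    (nonempty_of_prob P))))
  have lhs2 : ∫ p, (∫ y, φ (k.insertNth y p.2) ∂(μ k)) ∂P
      = ∫ r, (∫ y, φ (k.insertNth y r) ∂(μ k)) ∂π' := by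
    have hi : Integrable (fun p : Ω k × (∀ j, Ω (k.succAbove j)) =>
        ∫ y, φ (k.insertNth y p.2) ∂(μ k)) P :=
      integrable_of_bdd ((hmeasInner.comp measurable_snd)).aestronglyMeasurable (M := M)
        (fun p => hbd p.2)
    rw [hPdef] at hi ⊢
    rw [integral_prod_symm _ hi]
    refine integral_congr_ae (Filter.Eventually.of_forall fun r => ?_)
    simp
  have lhs3 : ∫ r, (∫ y, φ (k.insertNth y r) ∂(μ k)) ∂π'
      = ∫ y, (∫ r, φ (k.insertNth y r) ∂π') ∂(μ k) := by
    apply integral_integral_swap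
    exact integrable_of_bdd hswap.aestronglyMeasurable (M := M) (fun q => hb _)
  have rhs1 : ∫ x, φ x ∂(Measure.pi μ) = ∫ p, φ (k.insertNth p.1 p.2) ∂P := by
    rw [← msymm.integral_comp e.symm.measurableEmbedding]
    rfl
  have rhs2 : ∫ p, φ (k.insertNth p.1 p.2) ∂P
      = ∫ y, (∫ r, φ (k.insertNth y r) ∂π') ∂(μ k) := by
    rw [hPdef, integral_prod _ (integrable_of_bdd hGin.aestronglyMeasurable (M := M)
      (fun p => hb _))]
  rw [lhs1, lhs2, lhs3, rhs1, rhs2]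

end PiHelpers
end McD

namespace McD

universe u

theorem ent_tensor : ∀ (n : ℕ) (Ω : Fin n → Type u) (mΩ : ∀ k, MeasurableSpace (Ω k))
    (μ : ∀ k, @Measure (Ω k) (mΩ k)) (hμ : ∀ k, IsProbabilityMeasure (μ k))
    (g : (∀ i, Ω i) → ℝ) (hg : Measurable g) (c C : ℝ) (hc : 0 < c)
    (hb : ∀ x, g x ∈ Set.Icc c C),
    ent (Measure.pi μ) g ≤
      ∑ k, ∫ x, ent (μ k) (fun y => g (Function.update x k y)) ∂(Measure.pi μ) := by
  intro n
  induction n with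
  | zero =>
    intro Ω mΩ μ hμ g hg c C hc hb
    haveI := hμ
    haveI : IsProbabilityMeasure (Measure.pi μ) := inferInstance
    have hgc : ∀ x : (∀ i : Fin 0, Ω i), g x = g default :=
      fun x => congrArg g (Subsingleton.elim _ _)
    rw [ent]
    have h1 : (∫ x, g x * Real.log (g x) ∂(Measure.pi μ))
        = g default * Real.log (g default) := by
      rw [integral_congr_ae (Filter.Eventually.of_forall
        (fun x => by rw [hgc x] : ∀ x, g x * Real.log (g x)
          = g default * Real.log (g default)))]
      simp
    have h2 : (∫ x, g x ∂(Measure.pi μ)) = g default := by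
      rw [integral_congr_ae (Filter.Eventually.of_forall hgc)]
      simp
    rw [h1, h2]
    simp
  | succ m ih =>
    intro Ω mΩ μ hμ g hg c C hc hb
    haveI := hμ
    haveI : IsProbabilityMeasure (Measure.pi μ) := inferInstance
    set e := MeasurableEquiv.piFinSuccAbove Ω 0 with hedef
    have mp := measurePreserving_piFinSuccAbove μ 0
    set π' := Measure.pi (fun j => μ ((0 : Fin (m+1)).succAbove j)) with hπ'def
    haveI : IsProbabilityMeasure π' := by
      rw [hπ'def]; infer_instance
    set P := (μ 0).prod π' with hPdef
    haveI : IsProbabilityMeasure P := by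
      rw [hPdef]; infer_instance
    have msymm : MeasurePreserving e.symm P (Measure.pi μ) := mp.symm e
    have hesymm : ∀ p : Ω 0 × (∀ j, Ω ((0 : Fin (m+1)).succAbove j)),
        e.symm p = (0 : Fin (m+1)).insertNth p.1 p.2 := by
      intro p
      rw [hedef, MeasurableEquiv.piFinSuccAbove_symm_apply]
      rfl
    set gh : Ω 0 × (∀ j, Ω ((0 : Fin (m+1)).succAbove j)) → ℝ := fun p => g (e.symm p)
      with hghdef
    have hghmeas : Measurable gh := hg.comp e.symm.measurable
    have hghb : ∀ p, gh p ∈ Set.Icc c C := fun p => hb _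
    set G : (∀ j, Ω ((0 : Fin (m+1)).succAbove j)) → ℝ := fun r => ∫ w, gh (w, r) ∂(μ 0)
      with hGdef
    have hGmeas : Measurable G := (hghmeas.stronglyMeasurable.integral_prod_left').measurable
    have hGb : ∀ r, G r ∈ Set.Icc c C := fun r =>
      integral_mem_Icc (hghmeas.comp (measurable_id.prodMk measurable_const))
        (fun w => hghb (w, r))
    -- basic integrability facts
    have hint_ghlog : Integrable (fun p => gh p * Real.log (gh p)) P :=
      integrable_of_bdd ((hghmeas.mul hghmeas.log)).aestronglyMeasurable
        (M := C * (|Real.log c| + |Real.log C|))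
        (fun p => abs_mul_log_le hc (hghb p).1 (hghb p).2)
    have hint_gh : Integrable gh P := integrable_of_bdd hghmeas.aestronglyMeasurable
      (M := max |c| |C|) (fun p => abs_le_of_Icc (hghb p).1 (hghb p).2)
    -- hInt1
    have hInt1 : ∫ x, g x * Real.log (g x) ∂(Measure.pi μ)
        = ∫ r, (∫ w, gh (w, r) * Real.log (gh (w, r)) ∂(μ 0)) ∂π' := by
      rw [← msymm.integral_comp e.symm.measurableEmbedding
        (fun x => g x * Real.log (g x))]
      rw [hPdef] at hint_ghlog ⊢
      exact integral_prod_symm _ hint_ghlog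
    have hInt2 : ∫ x, g x ∂(Measure.pi μ) = ∫ r, G r ∂π' := by
      rw [← msymm.integral_comp e.symm.measurableEmbedding g]
      rw [hPdef] at hint_gh ⊢
      exact integral_prod_symm _ hint_gh
    -- measurability of slice entropies
    have hmeas_entslice : Measurable (fun r => ent (μ 0) (fun w => gh (w, r))) := by
      have h1 : Measurable (fun r => ∫ w, gh (w, r) * Real.log (gh (w, r)) ∂(μ 0)) :=
        ((hghmeas.mul hghmeas.log).stronglyMeasurable.integral_prod_left').measurable
      exact h1.sub (hGmeas.mul hGmeas.log)
    have hint_Glog : Integrable (fun r => G r * Real.log (G r)) π' :=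
      integrable_of_bdd (hGmeas.mul hGmeas.log).aestronglyMeasurable
        (M := C * (|Real.log c| + |Real.log C|))
        (fun r => abs_mul_log_le hc (hGb r).1 (hGb r).2)
    have hint_innerlog : Integrable
        (fun r => ∫ w, gh (w, r) * Real.log (gh (w, r)) ∂(μ 0)) π' := by
      refine integrable_of_bdd ?_ (M := C * (|Real.log c| + |Real.log C|)) ?_
      · exact (((hghmeas.mul hghmeas.log).stronglyMeasurable.integral_prod_left')).measurable.aestronglyMeasurable
      · intro r
        rw [← Real.norm_eq_abs]
        calc ‖∫ w, gh (w, r) * Real.log (gh (w, r)) ∂(μ 0)‖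
            ≤ C * (|Real.log c| + |Real.log C|) * ((μ 0) Set.univ).toReal :=
          norm_integral_le_of_norm_le_const (Filter.Eventually.of_forall fun w => by
            rw [Real.norm_eq_abs]; exact abs_mul_log_le hc (hghb (w, r)).1 (hghb (w, r)).2)
        _ = C * (|Real.log c| + |Real.log C|) := by simp
    -- chain rule
    have keyA : ent (Measure.pi μ) g
        = (∫ r, ent (μ 0) (fun w => gh (w, r)) ∂π') + ent π' G := by
      have hsplit : ∫ r, ent (μ 0) (fun w => gh (w, r)) ∂π'
          = (∫ r, (∫ w, gh (w, r) * Real.log (gh (w, r)) ∂(μ 0)) ∂π')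
            - ∫ r, G r * Real.log (G r) ∂π' := by
        rw [← integral_sub hint_innerlog hint_Glog]
        rfl
      rw [ent, ent, hInt1, hInt2, hsplit]
      ring
    -- keyB : first summand
    have keyB : ∫ r, ent (μ 0) (fun w => gh (w, r)) ∂π'
        = ∫ x, ent (μ 0) (fun y => g (Function.update x 0 y)) ∂(Measure.pi μ) := by
      have hcomp := msymm.integral_comp e.symm.measurableEmbedding
        (fun x => ent (μ 0) (fun y => g (Function.update x 0 y)))
      have hptw : ∀ p : Ω 0 × (∀ j, Ω ((0 : Fin (m+1)).succAbove j)),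
          ent (μ 0) (fun y => g (Function.update (e.symm p) 0 y))
            = ent (μ 0) (fun w => gh (w, p.2)) := by
        intro p
        congr 1
        funext y
        rw [hesymm p, Fin.update_insertNth, hghdef]
        simp only []
        rw [hesymm (y, p.2)]
      rw [← hcomp]
      have : (fun p => ent (μ 0) (fun y => g (Function.update (e.symm p) 0 y)))
          = fun p : Ω 0 × (∀ j, Ω ((0 : Fin (m+1)).succAbove j)) =>
              ent (μ 0) (fun w => gh (w, p.2)) := funext hptw
      rw [integral_congr_ae (Filter.Eventually.of_forall hptw)]
      have hintent : Integrable (fun p : Ω 0 × (∀ j, Ω ((0 : Fin (m+1)).succAbove j)) =>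
          ent (μ 0) (fun w => gh (w, p.2))) P :=
        integrable_of_bdd (hmeas_entslice.comp measurable_snd).aestronglyMeasurable
          (M := 2 * (C * (|Real.log c| + |Real.log C|)))
          (fun p => ent_abs_le hc (hghmeas.comp (measurable_id.prodMk measurable_const))
            (fun w => hghb (w, p.2)))
      rw [hPdef] at hintent ⊢
      rw [integral_prod_symm _ hintent]
      refine integral_congr_ae (Filter.Eventually.of_forall fun r => ?_)
      simp
    -- induction hypothesis
    have keyC : ent π' G ≤ ∑ j : Fin m, ∫ r, ent (μ ((0 : Fin (m+1)).succAbove j))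
        (fun z => G (Function.update r j z)) ∂π' := by
      exact ih (fun j => Ω ((0 : Fin (m+1)).succAbove j))
        (fun j => mΩ _) (fun j => μ _) (fun j => hμ _) G hGmeas c C hc (fun r => hGb r)
    -- keyD : per-coordinate comparison
    have keyD : ∀ j : Fin m, ∫ r, ent (μ ((0 : Fin (m+1)).succAbove j))
        (fun z => G (Function.update r j z)) ∂π'
        ≤ ∫ x, ent (μ ((0 : Fin (m+1)).succAbove j))
            (fun y => g (Function.update x ((0 : Fin (m+1)).succAbove j) y)) ∂(Measure.pi μ) := by
      intro j
      set k : Fin (m+1) := (0 : Fin (m+1)).succAbove j with hkdef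
      set Φ : (∀ i, Ω i) → ℝ := fun x => ent (μ k) (fun y => g (Function.update x k y))
        with hΦdef
      have hΦmeas : Measurable Φ := measurable_condEnt μ k hg
      have hΦbd : ∀ x, |Φ x| ≤ 2 * (C * (|Real.log c| + |Real.log C|)) := by
        intro x
        exact ent_abs_le hc (hg.comp (measurable_update x)) (fun y => hb _)
      -- D1 + D2 pointwise
      have hD1 : ∀ r, ent (μ k) (fun z => G (Function.update r j z))
          ≤ ∫ w, Φ (e.symm (w, r)) ∂(μ 0) := by
        intro r
        have hH : Measurable (fun q : Ω k × Ω 0 => gh (q.2, Function.update r j q.1)) := by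
          apply hghmeas.comp
          exact measurable_snd.prodMk ((measurable_update r).comp measurable_fst)
        have hconv := ent_integral_le (ν₁ := μ k) (ν₂ := μ 0)
          (H := fun q : Ω k × Ω 0 => gh (q.2, Function.update r j q.1)) hH hc
          (fun q => hghb _)
        have hL : (fun z => G (Function.update r j z))
            = fun z => ∫ w, gh (w, Function.update r j z) ∂(μ 0) := rfl
        have hR : ∀ w, ent (μ k) (fun z => gh (w, Function.update r j z))
            = Φ (e.symm (w, r)) := by
          intro w
          rw [hΦdef]
          simp only []
          congr 1
          funext z
          rw [hghdef]
          simp only []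
          rw [hesymm (w, Function.update r j z), hesymm (w, r),
            insertNth_update_succAbove]
        calc ent (μ k) (fun z => G (Function.update r j z))
            ≤ ∫ w, ent (μ k) (fun z => gh (w, Function.update r j z)) ∂(μ 0) := by
              rw [hL]; exact hconv
        _ = ∫ w, Φ (e.symm (w, r)) ∂(μ 0) := by
              exact integral_congr_ae (Filter.Eventually.of_forall hR)
      -- integrate over r
      have hΦe : Measurable (fun p : Ω 0 × (∀ j, Ω ((0 : Fin (m+1)).succAbove j)) =>
          Φ (e.symm p)) := hΦmeas.comp e.symm.measurable
      have hintΦe : Integrable (fun p : Ω 0 × (∀ j, Ω ((0 : Fin (m+1)).succAbove j)) =>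
          Φ (e.symm p)) P :=
        integrable_of_bdd hΦe.aestronglyMeasurable
          (M := 2 * (C * (|Real.log c| + |Real.log C|))) (fun p => hΦbd _)
      have hmeas_rhs : Measurable (fun r => ∫ w, Φ (e.symm (w, r)) ∂(μ 0)) :=
        (hΦe.stronglyMeasurable.integral_prod_left').measurable
      have hbnd_rhs : ∀ r, |∫ w, Φ (e.symm (w, r)) ∂(μ 0)|
          ≤ 2 * (C * (|Real.log c| + |Real.log C|)) := by
        intro r
        rw [← Real.norm_eq_abs]
        calc ‖∫ w, Φ (e.symm (w, r)) ∂(μ 0)‖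
            ≤ 2 * (C * (|Real.log c| + |Real.log C|)) * ((μ 0) Set.univ).toReal :=
          norm_integral_le_of_norm_le_const (Filter.Eventually.of_forall fun w => by
            rw [Real.norm_eq_abs]; exact hΦbd _)
        _ = 2 * (C * (|Real.log c| + |Real.log C|)) := by simp
      have hmeas_lhs : Measurable (fun r => ent (μ k) (fun z => G (Function.update r j z))) :=
        measurable_condEnt (fun j => μ ((0 : Fin (m+1)).succAbove j)) j hGmeas
      have hbnd_lhs : ∀ r, |ent (μ k) (fun z => G (Function.update r j z))|
          ≤ 2 * (C * (|Real.log c| + |Real.log C|)) := fun r =>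
        ent_abs_le hc (hGmeas.comp (measurable_update r)) (fun z => hGb _)
      have step1 : ∫ r, ent (μ k) (fun z => G (Function.update r j z)) ∂π'
          ≤ ∫ r, (∫ w, Φ (e.symm (w, r)) ∂(μ 0)) ∂π' :=
        integral_mono (integrable_of_bdd hmeas_lhs.aestronglyMeasurable hbnd_lhs)
          (integrable_of_bdd hmeas_rhs.aestronglyMeasurable hbnd_rhs) hD1
      have step2 : ∫ r, (∫ w, Φ (e.symm (w, r)) ∂(μ 0)) ∂π'
          = ∫ x, Φ x ∂(Measure.pi μ) := by
        rw [← msymm.integral_comp e.symm.measurableEmbedding Φ]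
        rw [hPdef] at hintΦe ⊢
        rw [integral_prod_symm _ hintΦe]
      exact le_trans step1 (le_of_eq step2)
    -- assemble
    rw [Fin.sum_univ_succAbove (fun k => ∫ x, ent (μ k)
      (fun y => g (Function.update x k y)) ∂(Measure.pi μ)) 0, keyA, ← keyB]
    have : ent π' G ≤ ∑ j : Fin m, ∫ x, ent (μ ((0 : Fin (m+1)).succAbove j))
        (fun y => g (Function.update x ((0 : Fin (m+1)).succAbove j) y)) ∂(Measure.pi μ) :=
      le_trans keyC (Finset.sum_le_sum (fun j _ => keyD j))
    linarith

end McD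



namespace McD
variable {α : Type*} [MeasurableSpace α]

lemma ent_exp_eq (ν : Measure α) {g : α → ℝ} (s : ℝ) :
    ent ν (fun x => Real.exp (s * g x)) = s * Z₁ ν g s - Z ν g s * Real.log (Z ν g s) := by
  rw [ent, Z, Z₁]
  have h1 : ∀ x, Real.exp (s * g x) * Real.log (Real.exp (s * g x))
      = s * (g x * Real.exp (s * g x)) := fun x => by rw [Real.log_exp]; ring
  rw [integral_congr_ae (Filter.Eventually.of_forall h1), integral_const_mul]

section Global

universe u
variable {n : ℕ} {Ω : Fin n → Type u} [∀ k, MeasurableSpace (Ω k)]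
  (μ : ∀ k, Measure (Ω k)) [∀ k, IsProbabilityMeasure (μ k)]

/-- Global entropy bound via tensorization + conditional Hoeffding. -/
lemma global_ent_bound {f : (∀ i, Ω i) → ℝ} (hf : Measurable f) {C₀ : ℝ}
    (hC : ∀ x, |f x| ≤ C₀) {c s : ℝ} (hs : 0 ≤ s)
    (hae : ∀ᵐ x ∂(Measure.pi μ),
      (∑ k, (condSupK k f x - condInfK k f x) ^ 2) ≤ c) :
    s * Z₁ (Measure.pi μ) f s - Z (Measure.pi μ) f s * Real.log (Z (Measure.pi μ) f s)
      ≤ s ^ 2 * c / 8 * Z (Measure.pi μ) f s := by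
  haveI : IsProbabilityMeasure (Measure.pi μ) := inferInstance
  haveI hne : ∀ k, Nonempty (Ω k) := fun k => nonempty_of_prob (μ k)
  haveI hnepi : Nonempty (∀ i, Ω i) := ⟨fun i => Classical.choice (hne i)⟩
  have hC₀ : 0 ≤ C₀ := le_trans (abs_nonneg _) (hC (Classical.choice hnepi))
  set Pm := Measure.pi μ with hPmdef
  set g : (∀ i, Ω i) → ℝ := fun x => Real.exp (s * f x) with hgdef
  have hgmeas : Measurable g := ((hf.const_mul s).exp)
  set cc : ℝ := Real.exp (-(s * C₀)) with hccdef
  set CC : ℝ := Real.exp (s * C₀) with hCCdef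
  have hccpos : 0 < cc := Real.exp_pos _
  have hCCpos : 0 < CC := Real.exp_pos _
  have hgb : ∀ x, g x ∈ Set.Icc cc CC := by
    intro x
    have h1 : -C₀ ≤ f x := by have := neg_abs_le (f x); linarith [hC x]
    have h2 : f x ≤ C₀ := le_trans (le_abs_self _) (hC x)
    constructor
    · exact Real.exp_le_exp.2 (by nlinarith)
    · exact Real.exp_le_exp.2 (by nlinarith)
  have hfslice : ∀ (k : Fin n) (x : ∀ i, Ω i) (y : Ω k),
      f (Function.update x k y) ∈ Set.Icc (condInfK k f x) (condSupK k f x) := by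
    intro k x y
    simp only [condInfK, condSupK, Set.mem_Icc]
    constructor
    · refine ciInf_le (f := fun y => f (Function.update x k y)) ⟨-C₀, ?_⟩ y
      rintro v ⟨y', rfl⟩
      show -C₀ ≤ f (Function.update x k y')
      have h3 := neg_abs_le (f (Function.update x k y'))
      have h4 := hC (Function.update x k y')
      linarith
    · refine le_ciSup (f := fun y => f (Function.update x k y)) ⟨C₀, ?_⟩ y
      rintro v ⟨y', rfl⟩
      show f (Function.update x k y') ≤ C₀
      exact le_trans (le_abs_self _) (hC _)
  set A : Fin n → (∀ i, Ω i) → ℝ := fun k x => ent (μ k) (fun y => g (Function.update x k y))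
    with hAdef
  set Zk : Fin n → (∀ i, Ω i) → ℝ := fun k x => ∫ y, g (Function.update x k y) ∂(μ k)
    with hZkdef
  have hAmeas : ∀ k, Measurable (A k) := fun k => measurable_condEnt μ k hgmeas
  have hZkmeas : ∀ k, Measurable (Zk k) := fun k => measurable_condInt μ k hgmeas
  have hZkpos : ∀ k x, cc ≤ Zk k x := by
    intro k x
    have : (∫ _y, cc ∂(μ k)) ≤ Zk k x :=
      integral_mono (integrable_const _)
        (integrable_of_bdd (hgmeas.comp (measurable_update x)).aestronglyMeasurable
          (M := CC) (fun y => by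
            rw [abs_of_pos (lt_of_lt_of_le hccpos (hgb _).1)]; exact (hgb _).2))
        (fun y => (hgb _).1)
    simpa using this
  have hAbd : ∀ k x, |A k x| ≤ 2 * (CC * (|Real.log cc| + |Real.log CC|)) := fun k x =>
    ent_abs_le hccpos (hgmeas.comp (measurable_update x)) (fun y => hgb _)
  have hkey : ∀ k x, A k x ≤
      s ^ 2 * (condSupK k f x - condInfK k f x) ^ 2 / 8 * Zk k x := by
    intro k x
    have hs1 : A k x = s * Z₁ (μ k) (fun y => f (Function.update x k y)) s
        - Z (μ k) (fun y => f (Function.update x k y)) s *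
          Real.log (Z (μ k) (fun y => f (Function.update x k y)) s) := by
      rw [hAdef]
      exact ent_exp_eq (μ k) s
    have hs2 : Zk k x = Z (μ k) (fun y => f (Function.update x k y)) s := rfl
    rw [hs1, hs2]
    exact hoeffding_ent (hf.comp (measurable_update x)) (fun y => hfslice k x y) hs
  have hupdinv : ∀ (k : Fin n) (x : ∀ i, Ω i) (y : Ω k),
      (fun z => g (Function.update (Function.update x k y) k z))
        = fun z => g (Function.update x k z) := by
    intro k x y
    funext z
    rw [Function.update_idem]
  have hAinv : ∀ k x y, A k (Function.update x k y) = A k x := by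
    intro k x y
    rw [hAdef]
    simp only []
    rw [hupdinv k x y]
  have hZkinv : ∀ k x y, Zk k (Function.update x k y) = Zk k x := by
    intro k x y
    rw [hZkdef]
    simp only []
    rw [show (fun z => g (Function.update (Function.update x k y) k z))
      = fun z => g (Function.update x k z) from hupdinv k x y]
  set φ : Fin n → (∀ i, Ω i) → ℝ := fun k x => A k x / Zk k x * g x with hφdef
  have hφmeas : ∀ k, Measurable (φ k) := fun k => ((hAmeas k).div (hZkmeas k)).mul hgmeas
  set EB : ℝ := 2 * (CC * (|Real.log cc| + |Real.log CC|)) with hEBdef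
  have hEBnn : 0 ≤ EB := by
    rw [hEBdef]
    have := abs_nonneg (Real.log cc)
    have := abs_nonneg (Real.log CC)
    nlinarith [hCCpos.le]
  have hφbd : ∀ k x, |φ k x| ≤ EB / cc * CC := by
    intro k x
    rw [hφdef]
    simp only []
    rw [abs_mul, abs_div]
    have h1 : |A k x| / |Zk k x| ≤ EB / cc := by
      rw [abs_of_pos (lt_of_lt_of_le hccpos (hZkpos k x))]
      exact div_le_div₀ hEBnn (hAbd k x) hccpos (hZkpos k x)
    have h2 : |g x| ≤ CC := by
      rw [abs_of_pos (lt_of_lt_of_le hccpos (hgb x).1)]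
      exact (hgb x).2
    exact mul_le_mul h1 h2 (abs_nonneg _) (div_nonneg hEBnn hccpos.le)
  have hintφ : ∀ k, Integrable (φ k) Pm := fun k =>
    integrable_of_bdd (hφmeas k).aestronglyMeasurable (hφbd k)
  have hintA : ∀ k, Integrable (A k) Pm := fun k =>
    integrable_of_bdd (hAmeas k).aestronglyMeasurable (hAbd k)
  have hFUB : ∀ k, ∫ x, A k x ∂Pm = ∫ x, φ k x ∂Pm := by
    intro k
    have h1 : ∀ x, (∫ y, φ k (Function.update x k y) ∂(μ k)) = A k x := by
      intro x
      have hpt : ∀ y, φ k (Function.update x k y)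
          = A k x / Zk k x * g (Function.update x k y) := by
        intro y
        rw [hφdef]
        simp only []
        rw [hAinv, hZkinv]
      rw [integral_congr_ae (Filter.Eventually.of_forall hpt), integral_const_mul]
      have hzk : (∫ y, g (Function.update x k y) ∂(μ k)) = Zk k x := rfl
      rw [hzk, div_mul_cancel₀]
      exact (lt_of_lt_of_le hccpos (hZkpos k x)).ne'
    obtain ⟨m, hm⟩ : ∃ m, n = m + 1 := ⟨n - 1, (Nat.succ_pred_eq_of_pos k.pos).symm⟩
    subst hm
    calc ∫ x, A k x ∂Pm = ∫ x, (∫ y, φ k (Function.update x k y) ∂(μ k)) ∂Pm :=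
          (integral_congr_ae (Filter.Eventually.of_forall h1)).symm
    _ = ∫ x, φ k x ∂Pm := integral_update_eq μ k (hφmeas k) (hφbd k)
  have hsum : ∑ k, ∫ x, A k x ∂Pm = ∫ x, (∑ k, φ k x) ∂Pm := by
    rw [Finset.sum_congr rfl (fun k _ => hFUB k),
      ← integral_finset_sum _ (fun k _ => hintφ k)]
  have hptae : ∀ᵐ x ∂Pm, (∑ k, φ k x) ≤ s ^ 2 * c / 8 * g x := by
    filter_upwards [hae] with x hx
    have h1 : ∀ k, A k x / Zk k x ≤ s ^ 2 * (condSupK k f x - condInfK k f x) ^ 2 / 8 := by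
      intro k
      rw [div_le_iff₀ (lt_of_lt_of_le hccpos (hZkpos k x))]
      exact hkey k x
    have h2 : (∑ k, A k x / Zk k x) ≤ s ^ 2 * c / 8 := by
      calc ∑ k, A k x / Zk k x
          ≤ ∑ k, s ^ 2 * (condSupK k f x - condInfK k f x) ^ 2 / 8 :=
            Finset.sum_le_sum (fun k _ => h1 k)
      _ = s ^ 2 / 8 * ∑ k, (condSupK k f x - condInfK k f x) ^ 2 := by
            rw [Finset.mul_sum]
            exact Finset.sum_congr rfl (fun k _ => by ring)
      _ ≤ s ^ 2 * c / 8 := by nlinarith [hx, sq_nonneg s]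
    have hgx : 0 ≤ g x := (lt_of_lt_of_le hccpos (hgb x).1).le
    calc ∑ k, φ k x = (∑ k, A k x / Zk k x) * g x := by
          rw [hφdef]
          simp only []
          rw [Finset.sum_mul]
    _ ≤ s ^ 2 * c / 8 * g x := mul_le_mul_of_nonneg_right h2 hgx
  have hintg : Integrable g Pm := integrable_of_bdd hgmeas.aestronglyMeasurable (M := CC)
    (fun x => by rw [abs_of_pos (lt_of_lt_of_le hccpos (hgb x).1)]; exact (hgb x).2)
  have hZeq : (∫ x, g x ∂Pm) = Z Pm f s := rfl
  have hfin : ∫ x, (∑ k, φ k x) ∂Pm ≤ s ^ 2 * c / 8 * Z Pm f s := by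
    have h := integral_mono_ae (integrable_finset_sum _ (fun k _ => hintφ k))
      (hintg.const_mul _) hptae
    rwa [integral_const_mul, hZeq] at h
  have hident : ent Pm (fun x => Real.exp (s * f x))
      = s * Z₁ Pm f s - Z Pm f s * Real.log (Z Pm f s) := ent_exp_eq Pm s
  have htens := ent_tensor n Ω _ μ (fun k => inferInstance) g hgmeas cc CC hccpos hgb
  calc s * Z₁ Pm f s - Z Pm f s * Real.log (Z Pm f s) = ent Pm g := hident.symm
  _ ≤ ∑ k, ∫ x, ent (μ k) (fun y => g (Function.update x k y)) ∂Pm := htens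
  _ = ∫ x, (∑ k, φ k x) ∂Pm := hsum
  _ ≤ s ^ 2 * c / 8 * Z Pm f s := hfin

end Global
end McD

namespace McD
variable {α : Type*} [MeasurableSpace α]

lemma herbst (ν : Measure α) [IsProbabilityMeasure ν] {f : α → ℝ} (hf : Measurable f) {K : ℝ}
    (hK : ∀ x, |f x| ≤ K) {c : ℝ}
    (hEnt : ∀ s, 0 ≤ s →
      s * Z₁ ν f s - Z ν f s * Real.log (Z ν f s) ≤ s ^ 2 * c / 8 * Z ν f s)
    {β : ℝ} (hβ : 0 < β) :
    Real.log (Z ν f β) ≤ β * (∫ x, f x ∂ν) + β ^ 2 * c / 8 := by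
  have hK0 : 0 ≤ K := le_trans (abs_nonneg _) (hK (Classical.choice (nonempty_of_prob ν)))
  have hZpos : ∀ u, 0 < Z ν f u := fun u => Z_pos hf hK u
  have hψ : ∀ u, HasDerivAt (fun u => Real.log (Z ν f u)) (Z₁ ν f u / Z ν f u) u :=
    fun u => (hasDerivAt_Z (ν := ν) hf hK hK0 u).log (hZpos u).ne'
  have hZ0 : Z ν f 0 = 1 := by rw [Z]; simp
  have hψ0 : Real.log (Z ν f 0) = 0 := by rw [hZ0, Real.log_one]
  have hZ10 : Z₁ ν f 0 = ∫ x, f x ∂ν := by rw [Z₁]; simp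
  set Ef : ℝ := ∫ x, f x ∂ν with hEfdef
  set q : ℝ → ℝ := fun u => if u = 0 then Ef else Real.log (Z ν f u) / u with hqdef
  -- continuity of q on Icc 0 β
  have hcont : ContinuousOn q (Set.Icc 0 β) := by
    intro u hu
    rcases eq_or_ne u 0 with rfl | hu0
    · rw [← continuousWithinAt_diff_self]
      have hsl : Filter.Tendsto (slope (fun u => Real.log (Z ν f u)) 0)
          (nhdsWithin 0 {(0:ℝ)}ᶜ) (nhds Ef) := by
        have h := hasDerivAt_iff_tendsto_slope.1 (hψ 0)
        rwa [hZ10, hZ0, div_one] at h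
      have heq : ∀ v ∈ Set.Icc (0:ℝ) β \ {0},
          slope (fun u => Real.log (Z ν f u)) 0 v = q v := by
        intro v hv
        have hv0 : v ≠ 0 := hv.2
        rw [hqdef]
        simp only [if_neg hv0]
        rw [slope_def_field]
        rw [hψ0]
        field_simp
        ring
      have : Filter.Tendsto q (nhdsWithin 0 (Set.Icc (0:ℝ) β \ {0})) (nhds Ef) := by
        refine Filter.Tendsto.congr' ?_ (hsl.mono_left (nhdsWithin_mono 0 ?_))
        · exact eventually_mem_nhdsWithin.mono heq
        · exact fun v hv => hv.2
      have hq0 : q 0 = Ef := by rw [hqdef]; simp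
      rw [ContinuousWithinAt, hq0]
      exact this
    · have hev : ∀ᶠ v in nhds u, q v = Real.log (Z ν f v) / v := by
        filter_upwards [isOpen_compl_singleton.mem_nhds (by simpa using hu0 :
          u ∈ ({(0:ℝ)}ᶜ : Set ℝ))] with v hv
        rw [hqdef]
        simp only [if_neg (by simpa using hv : v ≠ 0)]
      have hca : ContinuousAt (fun v => Real.log (Z ν f v) / v) u :=
        ((hψ u).continuousAt).div continuousAt_id hu0
      exact (hca.congr (Filter.EventuallyEq.symm hev)).continuousWithinAt
  -- derivative of q - u c/8 on the interior
  set Q : ℝ → ℝ := fun u => q u - u * (c / 8) with hQdef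
  have hQderiv : ∀ u ∈ Set.Ioo (0:ℝ) β, HasDerivAt Q
      ((Z₁ ν f u / Z ν f u * u - Real.log (Z ν f u) * 1) / u ^ 2 - c / 8) u := by
    intro u hu
    have hu0 : u ≠ 0 := (ne_of_gt hu.1)
    have hbase : HasDerivAt (fun v => Real.log (Z ν f v) / v)
        ((Z₁ ν f u / Z ν f u * u - Real.log (Z ν f u) * 1) / u ^ 2) u :=
      (hψ u).div (hasDerivAt_id u) hu0
    have hev : (fun v => q v) =ᶠ[nhds u] (fun v => Real.log (Z ν f v) / v) := by
      filter_upwards [isOpen_compl_singleton.mem_nhds (by simpa using hu0 :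
        u ∈ ({(0:ℝ)}ᶜ : Set ℝ))] with v hv
      rw [hqdef]
      simp only [if_neg (by simpa using hv : v ≠ 0)]
    have hq' : HasDerivAt q ((Z₁ ν f u / Z ν f u * u - Real.log (Z ν f u) * 1) / u ^ 2) u :=
      HasDerivAt.congr_of_eventuallyEq hbase hev
    have hlin : HasDerivAt (fun u : ℝ => u * (c / 8)) (c / 8) u := by
      simpa using (hasDerivAt_id u).mul_const (c / 8)
    exact hq'.sub hlin
  have hanti : AntitoneOn Q (Set.Icc 0 β) := by
    apply antitoneOn_of_deriv_nonpos (convex_Icc 0 β)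
    · exact (hcont.sub ((continuous_id.mul continuous_const).continuousOn))
    · intro u hu
      rw [interior_Icc] at hu
      exact ((hQderiv u hu).differentiableAt).differentiableWithinAt
    · intro u hu
      rw [interior_Icc] at hu
      rw [(hQderiv u hu).deriv]
      have hupos := hu.1
      have hz := hZpos u
      have h2 := hEnt u hupos.le
      have h3 : Z₁ ν f u / Z ν f u * u - Real.log (Z ν f u) * 1
          = (u * Z₁ ν f u - Z ν f u * Real.log (Z ν f u)) / Z ν f u := by
        field_simp
      rw [sub_nonpos, div_le_iff₀ (pow_pos hupos 2), h3, div_le_iff₀ hz]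
      calc u * Z₁ ν f u - Z ν f u * Real.log (Z ν f u) ≤ u ^ 2 * c / 8 * Z ν f u := h2
      _ = c / 8 * u ^ 2 * Z ν f u := by ring
  have hQle : Q β ≤ Q 0 := hanti (Set.left_mem_Icc.2 hβ.le) (Set.right_mem_Icc.2 hβ.le) hβ.le
  have hQ0 : Q 0 = Ef := by rw [hQdef, hqdef]; simp
  have hQβ : Q β = Real.log (Z ν f β) / β - β * (c / 8) := by
    rw [hQdef, hqdef]
    simp only [if_neg hβ.ne']
  rw [hQ0, hQβ] at hQle
  have h4 : Real.log (Z ν f β) / β ≤ Ef + β * (c / 8) := by linarith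
  rw [div_le_iff₀ hβ] at h4
  calc Real.log (Z ν f β) ≤ (Ef + β * (c / 8)) * β := h4
  _ = β * Ef + β ^ 2 * c / 8 := by ring

end McD

namespace McD
open ProbabilityTheory

section Main
universe u
variable {n : ℕ} {Ω : Fin n → Type u} [∀ k, MeasurableSpace (Ω k)]
  (μ : ∀ k, Measure (Ω k)) [∀ k, IsProbabilityMeasure (μ k)]

lemma mcdiarmid_aux {f : (∀ i, Ω i) → ℝ} (hf : Measurable f) {C₀ : ℝ}
    (hC : ∀ x, |f x| ≤ C₀) {t : ℝ} (ht : 0 < t) {c : ℝ} (hcpos : 0 < c)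
    (hae : ∀ᵐ x ∂(Measure.pi μ),
      (∑ k, (condSupK k f x - condInfK k f x) ^ 2) ≤ c) :
    ((Measure.pi μ) {x | f x - ∫ y, f y ∂(Measure.pi μ) > t}).toReal
      ≤ Real.exp (-2 * t ^ 2 / c) := by
  haveI : IsProbabilityMeasure (Measure.pi μ) := inferInstance
  set Pm := Measure.pi μ with hPmdef
  set Ef : ℝ := ∫ y, f y ∂Pm with hEfdef
  set β : ℝ := 4 * t / c with hβdef
  have hβpos : 0 < β := by rw [hβdef]; positivity
  set X : (∀ i, Ω i) → ℝ := fun x => f x - Ef with hXdef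
  have hXmeas : Measurable X := hf.sub measurable_const
  have hXbd : ∀ x, |X x| ≤ C₀ + |Ef| := by
    intro x
    rw [hXdef]
    calc |f x - Ef| ≤ |f x| + |Ef| := abs_sub _ _
    _ ≤ C₀ + |Ef| := by linarith [hC x]
  have hint : Integrable (fun x => Real.exp (β * X x)) Pm :=
    integrable_of_bdd ((hXmeas.const_mul β).exp).aestronglyMeasurable
      (M := Real.exp (|β| * (C₀ + |Ef|))) (fun x => abs_exp_mul_le hXbd x (le_refl _))
  have hchern := measure_ge_le_exp_mul_mgf (X := X) (μ := Pm) t hβpos.le hint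
  -- mgf = exp(-β Ef) Z(β)
  have hmgf : mgf X Pm β = Real.exp (-(β * Ef)) * Z Pm f β := by
    rw [mgf, Z]
    rw [← integral_const_mul]
    refine integral_congr_ae (Filter.Eventually.of_forall fun x => ?_)
    rw [hXdef]
    simp only []
    rw [← Real.exp_add]
    congr 1
    ring
  -- MGF bound
  have hEnt : ∀ s, 0 ≤ s →
      s * Z₁ Pm f s - Z Pm f s * Real.log (Z Pm f s) ≤ s ^ 2 * c / 8 * Z Pm f s :=
    fun s hs => global_ent_bound μ hf hC hs hae
  have hlog := herbst Pm hf hC hEnt hβpos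
  have hZpos := Z_pos (ν := Pm) hf hC β
  have hZle : Z Pm f β ≤ Real.exp (β * Ef + β ^ 2 * c / 8) := by
    rw [← Real.log_le_iff_le_exp hZpos]
    exact hlog
  -- combine
  have hfinal : (Pm {x | t ≤ X x}).toReal ≤ Real.exp (-2 * t ^ 2 / c) := by
    calc (Pm {x | t ≤ X x}).toReal ≤ Real.exp (-β * t) * mgf X Pm β := hchern
    _ = Real.exp (-β * t) * (Real.exp (-(β * Ef)) * Z Pm f β) := by rw [hmgf]
    _ ≤ Real.exp (-β * t) * (Real.exp (-(β * Ef)) * Real.exp (β * Ef + β ^ 2 * c / 8)) := by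
        apply mul_le_mul_of_nonneg_left _ (Real.exp_pos _).le
        exact mul_le_mul_of_nonneg_left hZle (Real.exp_pos _).le
    _ = Real.exp (-β * t + (-(β * Ef) + (β * Ef + β ^ 2 * c / 8))) := by
        rw [← Real.exp_add, ← Real.exp_add]
    _ = Real.exp (-2 * t ^ 2 / c) := by
        congr 1
        rw [hβdef]
        field_simp
        ring
  refine le_trans ?_ hfinal
  apply ENNReal.toReal_mono (measure_ne_top _ _)
  apply measure_mono
  intro x hx
  simp only [Set.mem_setOf_eq] at hx ⊢
  exact le_of_lt hx

theorem mcdiarmid_test {f : (∀ i, Ω i) → ℝ} (hf : Measurable f) {C₀ : ℝ}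
    (hC : ∀ x, |f x| ≤ C₀) {t : ℝ} (ht : 0 < t) :
    ((Measure.pi μ) {x | f x - ∫ y, f y ∂(Measure.pi μ) > t}).toReal
      ≤ Real.exp (-2 * t ^ 2 /
          essSup (fun x => ∑ k, (condSupK k f x - condInfK k f x) ^ 2) (Measure.pi μ)) := by
  haveI : IsProbabilityMeasure (Measure.pi μ) := inferInstance
  haveI hne : ∀ k, Nonempty (Ω k) := fun k => nonempty_of_prob (μ k)
  haveI hnepi : Nonempty (∀ i, Ω i) := ⟨fun i => Classical.choice (hne i)⟩
  have hC₀ : 0 ≤ C₀ := le_trans (abs_nonneg _) (hC (Classical.choice hnepi))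
  set Pm := Measure.pi μ with hPmdef
  set h : (∀ i, Ω i) → ℝ := fun x => ∑ k, (condSupK k f x - condInfK k f x) ^ 2 with hhdef
  set R : ℝ := essSup h Pm with hRdef
  -- uniform bound on h
  have hhbd : ∀ x, h x ≤ (n : ℝ) * (2 * C₀) ^ 2 := by
    intro x
    rw [hhdef]
    simp only []
    have hterm : ∀ k : Fin n, (condSupK k f x - condInfK k f x) ^ 2 ≤ (2 * C₀) ^ 2 := by
      intro k
      have hsup : condSupK k f x ≤ C₀ :=
        ciSup_le (fun y => le_trans (le_abs_self _) (hC _))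
      have hinf : -C₀ ≤ condInfK k f x :=
        le_ciInf (fun y => by
          have h1' := neg_abs_le (f (Function.update x k y))
          have h2' := hC (Function.update x k y)
          linarith)
      set y0 : Ω k := Classical.choice (hne k) with hy0def
      have hbddA : BddAbove (Set.range (fun y => f (Function.update x k y))) := by
        refine ⟨C₀, ?_⟩
        rintro v ⟨y', rfl⟩
        exact le_trans (le_abs_self _) (hC _)
      have hbddB : BddBelow (Set.range (fun y => f (Function.update x k y))) := by
        refine ⟨-C₀, ?_⟩
        rintro v ⟨y', rfl⟩
        show -C₀ ≤ f (Function.update x k y')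
        have := neg_abs_le (f (Function.update x k y')); linarith [hC (Function.update x k y')]
      have h5 : f (Function.update x k y0) ≤ condSupK k f x :=
        le_ciSup (f := fun y => f (Function.update x k y)) hbddA y0
      have h6 : condInfK k f x ≤ f (Function.update x k y0) :=
        ciInf_le (f := fun y => f (Function.update x k y)) hbddB y0
      have h7 := hC (Function.update x k y0)
      have h8 := abs_le.1 h7
      refine sq_le_sq' ?_ ?_
      · linarith [h8.1, h8.2]
      · linarith [h8.1, h8.2]
    calc ∑ k, (condSupK k f x - condInfK k f x) ^ 2 ≤ ∑ _k : Fin n, (2 * C₀) ^ 2 :=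
          Finset.sum_le_sum (fun k _ => hterm k)
    _ = (n : ℝ) * (2 * C₀) ^ 2 := by
        rw [Finset.sum_const]
        simp [mul_comm]
  have hbdd : Filter.IsBoundedUnder (· ≤ ·) (ae Pm) h :=
    ⟨(n : ℝ) * (2 * C₀) ^ 2, Filter.eventually_map.2 (Filter.Eventually.of_forall hhbd)⟩
  rcases le_or_gt R 0 with hR | hR
  · -- degenerate case: RHS ≥ 1
    have h1 : (0:ℝ) ≤ -2 * t ^ 2 / R := by
      rcases eq_or_lt_of_le hR with hR0 | hRneg
      · rw [hR0, div_zero]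
      · rw [div_nonneg_iff]
        right
        exact ⟨by nlinarith, hRneg.le⟩
    have h2 : (1:ℝ) ≤ Real.exp (-2 * t ^ 2 / R) := Real.one_le_exp h1
    refine le_trans ?_ h2
    calc ((Pm {x | f x - ∫ y, f y ∂Pm > t}).toReal)
        ≤ (1 : ENNReal).toReal := ENNReal.toReal_mono (by norm_num) prob_le_one
    _ = 1 := by simp
  · -- main case
    have key : ∀ c', R < c' →
        ((Pm {x | f x - ∫ y, f y ∂Pm > t}).toReal) ≤ Real.exp (-2 * t ^ 2 / c') := by
      intro c' hc'
      have hae : ∀ᵐ x ∂Pm, h x ≤ c' := by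
        have hlim : Filter.limsup h (ae Pm) < c' := hc'
        have := Filter.eventually_lt_of_limsup_lt hlim hbdd
        exact this.mono (fun x hx => hx.le)
      exact mcdiarmid_aux μ hf hC ht (lt_trans hR hc') hae
    have hseq : Filter.Tendsto (fun m : ℕ => Real.exp (-2 * t ^ 2 / (R + 1 / (m + 1))))
        Filter.atTop (nhds (Real.exp (-2 * t ^ 2 / R))) := by
      have h1 : Filter.Tendsto (fun m : ℕ => R + 1 / ((m : ℝ) + 1)) Filter.atTop (nhds R) := by
        have : Filter.Tendsto (fun n : ℕ => 1 / ((n : ℝ) + 1)) Filter.atTop (nhds 0) :=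
          tendsto_one_div_add_atTop_nhds_zero_nat
        have h2 := Filter.Tendsto.const_add R this
        simpa using h2
      have h3 : ContinuousAt (fun r : ℝ => Real.exp (-2 * t ^ 2 / r)) R :=
        (Real.continuous_exp.continuousAt).comp
          ((continuousAt_const.div continuousAt_id hR.ne'))
      exact h3.tendsto.comp h1
    refine ge_of_tendsto' hseq (fun m => key _ ?_)
    have : (0:ℝ) < 1 / ((m : ℝ) + 1) := by positivity
    linarith

end Main
end McD



section Statements

variable {n : ℕ} {Ω : Fin n → Type*} [∀ k, MeasurableSpace (Ω k)]

/-- Bounded difference inequality (strong form). -/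
theorem stmt_9 (μ : ∀ k, Measure (Ω k)) [∀ k, IsProbabilityMeasure (μ k)]
    (f : (∀ i, Ω i) → ℝ) (hf : Measurable f) (C : ℝ) (hC : ∀ x, |f x| ≤ C)
    (t : ℝ) (ht : 0 < t) :
    ((Measure.pi μ) {x | f x - ∫ y, f y ∂(Measure.pi μ) > t}).toReal
      ≤ Real.exp (-2 * t ^ 2 /
          essSup (fun x => ∑ k, (condSupK k f x - condInfK k f x) ^ 2) (Measure.pi μ)) := by
  exact McD.mcdiarmid_test μ hf hC ht

end Statements
end
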